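/- arXiv:2009.12838 — 4 statements merged into one kernel-verified Lean document; each statement's English description precedes it below -/
import Mathlib

section
/- (Coupling characterization of the Prokhorov metric, converse direction) Let (S,d) be a Polish space and P, Q ∈ P(S) with d_P(P,Q) < ε. Then there exists a coupling m of P and Q such that m{(x,y) : d(x,y) ≥ ε} ≤ ε. -/
open MeasureTheory

/-- The Prokhorov distance between Borel probability measures on a metric space. -/
noncomputable def prokhorovDist {S : Type*} [MetricSpace S] [MeasurableSpace S]
    (P Q : Measure S) : ℝ :=
  sInf {ε : ℝ | 0 < ε ∧ ∀ A : Set S, MeasurableSet A →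
    P A ≤ Q (Metric.thickening ε A) + ENNReal.ofReal ε}

open Metric Set Finset
open scoped ENNReal NNReal

section aux

lemma exists_compact_large {S : Type*} [MetricSpace S] [CompleteSpace S]
    [SecondCountableTopology S] [MeasurableSpace S] [BorelSpace S]
    (μ : Measure S) [IsFiniteMeasure μ] {δ : ℝ≥0∞} (hδ : δ ≠ 0) :
    ∃ K : Set S, IsCompact K ∧ μ Kᶜ ≤ δ := by
  rcases isEmpty_or_nonempty S with hS | hS
  · exact ⟨∅, isCompact_empty, by simp [eq_empty_of_isEmpty (∅ᶜ : Set S)]⟩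
  obtain ⟨u, hu⟩ := TopologicalSpace.exists_dense_seq S
  -- for each k, find n k with μ of complement of balls < δ * 2⁻¹^(k+1)
  have key : ∀ k : ℕ, ∃ n : ℕ,
      μ (⋃ i ∈ Finset.range n, closedBall (u i) (1/(k+1)))ᶜ ≤ δ * 2⁻¹ ^ (k+1) := by
    intro k
    have hcover : (⋃ i, closedBall (u i) (1/(k+1))) = univ := by
      apply Set.eq_univ_of_forall
      intro x
      have : (ball x (1/(k+1))).Nonempty → True := fun _ => trivial
      obtain ⟨i, hi⟩ : ∃ i, u i ∈ ball x (1/(k+1)) := by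
        exact hu.exists_mem_open isOpen_ball (Metric.nonempty_ball.2 (by positivity))
      exact Set.mem_iUnion.2 ⟨i, by rw [Metric.mem_closedBall, dist_comm]; exact le_of_lt (Metric.mem_ball.1 hi)⟩
    have htend : Filter.Tendsto (fun n => μ (⋃ i ∈ Finset.range n, closedBall (u i) (1/(k+1)))ᶜ)
        Filter.atTop (nhds (μ (⋂ n, (⋃ i ∈ Finset.range n, closedBall (u i) (1/(k+1)))ᶜ))) := by
      apply tendsto_measure_iInter_atTop
      · intro n
        exact (MeasurableSet.biUnion (Finset.range n).countable_toSet
          (fun i _ => measurableSet_closedBall)).compl.nullMeasurableSet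
      · intro a b hab
        apply compl_subset_compl.2
        exact biUnion_subset_biUnion_left (Finset.range_subset_range.2 hab)
      · exact ⟨0, measure_ne_top μ _⟩
    have hempty : (⋂ n, (⋃ i ∈ Finset.range n, closedBall (u i) (1/(k+1)))ᶜ) = ∅ := by
      rw [← Set.compl_iUnion, Set.compl_empty_iff]
      rw [Set.eq_univ_iff_forall]
      intro x
      have : x ∈ ⋃ i, closedBall (u i) (1/(k+1)) := hcover ▸ mem_univ x
      obtain ⟨i, hi⟩ := Set.mem_iUnion.1 this
      exact Set.mem_iUnion.2 ⟨i+1, Set.mem_biUnion (Finset.mem_range.2 (Nat.lt_succ_self i)) hi⟩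
    rw [hempty, measure_empty] at htend
    have hpos : 0 < δ * 2⁻¹ ^ (k+1) := by
      apply ENNReal.mul_pos hδ
      simp
    obtain ⟨n, hn⟩ := (htend.eventually_le_const hpos).exists
    exact ⟨n, hn⟩
  choose n hn using key
  set K : Set S := ⋂ k, ⋃ i ∈ Finset.range (n k), closedBall (u i) (1/(k+1)) with hK
  refine ⟨K, ?_, ?_⟩
  · apply TotallyBounded.isCompact_of_isClosed
    · apply Metric.totallyBounded_iff.2
      intro e he
      obtain ⟨k, hk⟩ := exists_nat_one_div_lt he
      refine ⟨(fun i => u i) '' (Finset.range (n k)), (Finset.range (n k)).finite_toSet.image _, ?_⟩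
      intro x hx
      have hx' : x ∈ ⋃ i ∈ Finset.range (n k), closedBall (u i) (1/(k+1)) :=
        Set.mem_iInter.1 hx k
      obtain ⟨i, hi, hxi⟩ := Set.mem_iUnion₂.1 hx'
      refine Set.mem_iUnion₂.2 ⟨u i, Set.mem_image_of_mem _ hi, ?_⟩
      exact lt_of_le_of_lt (Metric.mem_closedBall.1 hxi) hk
    · exact isClosed_iInter fun k => (Finset.range (n k)).finite_toSet.isClosed_biUnion
        fun i _ => Metric.isClosed_closedBall
  · rw [hK, compl_iInter]
    refine le_trans (measure_iUnion_le _) ?_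
    refine le_trans (ENNReal.tsum_le_tsum fun k => hn k) ?_
    rw [ENNReal.tsum_mul_left]
    have hgeo : ∑' k : ℕ, (2⁻¹ : ℝ≥0∞) ^ (k+1) = 1 := by
      simp_rw [pow_succ]
      rw [ENNReal.tsum_mul_right, ENNReal.tsum_geometric, ENNReal.one_sub_inv_two,
        inv_inv, ENNReal.mul_inv_cancel two_ne_zero ENNReal.ofNat_ne_top]
    rw [hgeo, mul_one]


lemma strassen_fin {n : ℕ} (p q : Fin n → ℝ) (hp : ∀ i, 0 ≤ p i) (hq : ∀ j, 0 ≤ q j)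
    (R : Fin n → Fin n → Prop) [DecidableRel R] (t η : ℝ) (ht : 0 ≤ t) (hη : 0 < η)
    (hyp : ∀ A : Finset (Fin n), ∑ i ∈ A, p i ≤
      (∑ j ∈ Finset.univ.filter (fun j => ∃ i ∈ A, R i j), q j) + t) :
    ∃ w : Fin n → Fin n → ℝ, (∀ i j, 0 ≤ w i j) ∧ (∀ i j, ¬ R i j → w i j = 0) ∧
      (∀ i, ∑ j, w i j ≤ p i) ∧ (∀ j, ∑ i, w i j ≤ q j) ∧
      (∑ i, p i) ≤ (∑ i, ∑ j, w i j) + t + 3*η := by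
  classical
  obtain ⟨N₀, hN₀⟩ := exists_nat_ge ((n + 1 : ℝ) / η)
  set Nr : ℝ := (N₀ : ℝ) + 1 with hNr_def
  have hNrpos : 0 < Nr := by positivity
  have hNη : (n + 1 : ℝ) ≤ Nr * η := by
    have h1 : (n + 1 : ℝ) ≤ N₀ * η := by
      rw [div_le_iff₀ hη] at hN₀; linarith
    nlinarith
  set a : Fin n → ℕ := fun i => ⌊Nr * p i⌋₊ with ha_def
  set b : Fin n → ℕ := fun j => ⌊Nr * q j⌋₊ with hb_def
  set c : ℕ := ⌈Nr * t⌉₊ + n with hc_def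
  have ha_le : ∀ i, (a i : ℝ) ≤ Nr * p i := fun i =>
    Nat.floor_le (by have := hp i; positivity)
  have ha_ge : ∀ i, Nr * p i ≤ (a i : ℝ) + 1 := fun i =>
    (Nat.lt_floor_add_one _).le
  have hb_le : ∀ j, (b j : ℝ) ≤ Nr * q j := fun j =>
    Nat.floor_le (by have := hq j; positivity)
  have hb_ge : ∀ j, Nr * q j ≤ (b j : ℝ) + 1 := fun j =>
    (Nat.lt_floor_add_one _).le
  have hc_ge : Nr * t + n ≤ (c : ℝ) := by
    rw [hc_def]; push_cast
    have := Nat.le_ceil (Nr * t); linarith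
  have hc_le : (c : ℝ) ≤ Nr * t + 1 + n := by
    rw [hc_def]; push_cast
    have := Nat.ceil_lt_add_one (by positivity : (0:ℝ) ≤ Nr * t)
    linarith
  have hypℕ : ∀ A : Finset (Fin n),
      (∑ i ∈ A, a i) ≤ (∑ j ∈ Finset.univ.filter (fun j => ∃ i ∈ A, R i j), b j) + c := by
    intro A
    set J' := Finset.univ.filter (fun j => ∃ i ∈ A, R i j) with hJ'
    have h1 : (∑ i ∈ A, (a i : ℝ)) ≤ Nr * (∑ i ∈ A, p i) := by
      rw [Finset.mul_sum]
      exact Finset.sum_le_sum fun i _ => ha_le i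
    have h2 : Nr * (∑ i ∈ A, p i) ≤ Nr * ((∑ j ∈ J', q j) + t) :=
      mul_le_mul_of_nonneg_left (hyp A) hNrpos.le
    have h3 : Nr * ((∑ j ∈ J', q j) + t) ≤ (∑ j ∈ J', ((b j : ℝ) + 1)) + Nr * t := by
      rw [mul_add, Finset.mul_sum]
      have h3' : ∀ j ∈ J', Nr * q j ≤ (b j : ℝ) + 1 := fun j _ => hb_ge j
      have := Finset.sum_le_sum h3'
      linarith
    have h4 : (∑ j ∈ J', ((b j : ℝ) + 1)) = (∑ j ∈ J', (b j : ℝ)) + J'.card := by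
      rw [Finset.sum_add_distrib, Finset.sum_const, nsmul_eq_mul, mul_one]
    have h5 : (J'.card : ℝ) ≤ n := by
      have : J'.card ≤ Fintype.card (Fin n) := Finset.card_le_univ J'
      rw [Fintype.card_fin] at this
      exact_mod_cast this
    have h6 : (∑ i ∈ A, (a i : ℝ)) ≤ (∑ j ∈ J', (b j : ℝ)) + c := by linarith
    exact_mod_cast h6
  -- Hall's theorem setup
  set nbr : ((i : Fin n) × Fin (a i)) → Finset (((j : Fin n) × Fin (b j)) ⊕ Fin c) := fun l =>
    (Finset.univ.filter (fun y : (j : Fin n) × Fin (b j) => R l.1 y.1)).disjSum Finset.univ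
    with hnbr
  have hsig : ∀ (P : Fin n → Prop) [DecidablePred P],
      (Finset.univ.filter (fun y : (j : Fin n) × Fin (b j) => P y.1)).card
        = ∑ j ∈ Finset.univ.filter P, b j := by
    intro P _
    have h : (Finset.univ.filter (fun y : (j : Fin n) × Fin (b j) => P y.1))
        = (Finset.univ.filter P).sigma (fun j => (Finset.univ : Finset (Fin (b j)))) := by
      ext y
      simp [Finset.mem_sigma]
    rw [h, Finset.card_sigma]
    simp
  have hall : ∀ W : Finset ((i : Fin n) × Fin (a i)), W.card ≤ (W.biUnion nbr).card := by
    intro W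
    rcases W.eq_empty_or_nonempty with hW | hW
    · simp [hW]
    set A := W.image Sigma.fst with hA
    have h1 : W.card ≤ ∑ i ∈ A, a i := by
      calc W.card ≤ (A.sigma fun i => (Finset.univ : Finset (Fin (a i)))).card := by
            apply Finset.card_le_card
            intro l hl
            rw [Finset.mem_sigma]
            exact ⟨Finset.mem_image_of_mem _ hl, Finset.mem_univ _⟩
        _ = ∑ i ∈ A, a i := by rw [Finset.card_sigma]; simp
    have h2 : ((Finset.univ.filter (fun y : (j : Fin n) × Fin (b j) => ∃ i ∈ A, R i y.1)).disjSum
        (Finset.univ : Finset (Fin c))) ⊆ W.biUnion nbr := by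
      intro r hr
      rw [Finset.mem_disjSum] at hr
      rcases hr with ⟨y, hy, rfl⟩ | ⟨d, _, rfl⟩
      · rw [Finset.mem_filter] at hy
        obtain ⟨i, hiA, hiR⟩ := hy.2
        obtain ⟨l, hl, rfl⟩ := Finset.mem_image.1 hiA
        exact Finset.mem_biUnion.2 ⟨l, hl, Finset.inl_mem_disjSum.2 (by
          rw [Finset.mem_filter]; exact ⟨Finset.mem_univ _, hiR⟩)⟩
      · obtain ⟨l, hl⟩ := hW
        exact Finset.mem_biUnion.2 ⟨l, hl, Finset.inr_mem_disjSum.2 (Finset.mem_univ d)⟩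
    have h3 : ((Finset.univ.filter (fun y : (j : Fin n) × Fin (b j) => ∃ i ∈ A, R i y.1)).disjSum
        (Finset.univ : Finset (Fin c))).card
        = (∑ j ∈ Finset.univ.filter (fun j => ∃ i ∈ A, R i j), b j) + c := by
      rw [Finset.card_disjSum]
      congr 1
      · exact hsig (fun j => ∃ i ∈ A, R i j)
      · simp
    calc W.card ≤ ∑ i ∈ A, a i := h1
      _ ≤ (∑ j ∈ Finset.univ.filter (fun j => ∃ i ∈ A, R i j), b j) + c := hypℕ A
      _ = _ := h3.symm
      _ ≤ (W.biUnion nbr).card := Finset.card_le_card h2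
  obtain ⟨f, hfinj, hfmem⟩ := (Finset.all_card_le_biUnion_card_iff_exists_injective nbr).1 hall
  set dest : (((j : Fin n) × Fin (b j)) ⊕ Fin c) → Option (Fin n) :=
    Sum.elim (fun y => some y.1) (fun _ => none) with hdest
  set M : Fin n → Fin n → ℕ := fun i j =>
    ((Finset.univ : Finset ((i : Fin n) × Fin (a i))).filter
      (fun l => l.1 = i ∧ dest (f l) = some j)).card with hM
  have hfiber : ∀ (i : Fin n) (P : ((i : Fin n) × Fin (a i)) → Prop) [DecidablePred P],
      ((Finset.univ : Finset ((i : Fin n) × Fin (a i))).filter (fun l => l.1 = i ∧ P l)).card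
        = ((Finset.univ : Finset (Fin (a i))).filter (fun x => P ⟨i, x⟩)).card := by
    intro i P _
    have hset : ((Finset.univ : Finset ((i : Fin n) × Fin (a i))).filter (fun l => l.1 = i ∧ P l))
        = ((Finset.univ : Finset (Fin (a i))).filter (fun x => P ⟨i, x⟩)).image (Sigma.mk i) := by
      ext l
      simp only [Finset.mem_image, Finset.mem_filter, Finset.mem_univ, true_and]
      constructor
      · rcases l with ⟨i', x⟩
        rintro ⟨rfl, hP⟩
        exact ⟨x, hP, rfl⟩
      · rintro ⟨x, hx, rfl⟩; exact ⟨rfl, hx⟩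
    rw [hset, Finset.card_image_of_injective _ sigma_mk_injective]
  have hsupp : ∀ i j, ¬ R i j → M i j = 0 := by
    intro i j hR
    simp only [hM]
    rw [Finset.card_eq_zero, Finset.filter_eq_empty_iff]
    rintro l - ⟨hl1, hl2⟩
    have hmem := hfmem l
    rcases hfx : f l with y | d
    · rw [hfx] at hmem hl2
      rw [hnbr, Finset.inl_mem_disjSum, Finset.mem_filter] at hmem
      simp only [hdest, Sum.elim_inl, Option.some.injEq] at hl2
      rw [hl1] at hmem
      rw [hl2] at hmem
      exact hR hmem.2
    · rw [hfx] at hl2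
      simp [hdest] at hl2
  have hdisj : ∀ (i j i' j' : Fin n), (i, j) ≠ (i', j') →
      Disjoint ((Finset.univ : Finset ((i : Fin n) × Fin (a i))).filter
          (fun l => l.1 = i ∧ dest (f l) = some j))
        ((Finset.univ : Finset ((i : Fin n) × Fin (a i))).filter
          (fun l => l.1 = i' ∧ dest (f l) = some j')) := by
    intro i j i' j' hne
    rw [Finset.disjoint_left]
    rintro l hl hl'
    rw [Finset.mem_filter] at hl hl'
    apply hne
    obtain ⟨-, rfl, h2⟩ := hl
    obtain ⟨-, rfl, h2'⟩ := hl'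
    rw [h2] at h2'
    simp only [Option.some.injEq] at h2'
    rw [h2']
  have hrow : ∀ i, ∑ j, M i j ≤ a i := by
    intro i
    have hbi : (Finset.univ : Finset (Fin n)).biUnion
        (fun j => (Finset.univ : Finset ((i : Fin n) × Fin (a i))).filter
          (fun l => l.1 = i ∧ dest (f l) = some j))
        ⊆ (Finset.univ : Finset ((i : Fin n) × Fin (a i))).filter (fun l => l.1 = i) := by
      intro l hl
      rw [Finset.mem_biUnion] at hl
      obtain ⟨j, -, hl⟩ := hl
      rw [Finset.mem_filter] at hl ⊢
      exact ⟨hl.1, hl.2.1⟩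
    have hcard := Finset.card_le_card hbi
    rw [Finset.card_biUnion (fun j _ j' _ hjj' => hdisj i j i j' (by simp [hjj']))] at hcard
    calc ∑ j, M i j
        ≤ ((Finset.univ : Finset ((i : Fin n) × Fin (a i))).filter (fun l => l.1 = i)).card := hcard
      _ = a i := by
          have h := hfiber i (fun _ => True)
          simp only [and_true] at h
          rw [h]
          simp
  have hcol : ∀ j, ∑ i, M i j ≤ b j := by
    intro j
    have hbi : (Finset.univ : Finset (Fin n)).biUnion
        (fun i => (Finset.univ : Finset ((i : Fin n) × Fin (a i))).filter
          (fun l => l.1 = i ∧ dest (f l) = some j))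
        ⊆ (Finset.univ : Finset ((i : Fin n) × Fin (a i))).filter
          (fun l => dest (f l) = some j) := by
      intro l hl
      rw [Finset.mem_biUnion] at hl
      obtain ⟨i, -, hl⟩ := hl
      rw [Finset.mem_filter] at hl ⊢
      exact ⟨hl.1, hl.2.2⟩
    have hcard := Finset.card_le_card hbi
    rw [Finset.card_biUnion (fun i _ i' _ hii' => hdisj i j i' j (by simp [hii']))] at hcard
    have htarget : ((Finset.univ : Finset ((i : Fin n) × Fin (a i))).filter
        (fun l => dest (f l) = some j)).card ≤ b j := by
      have hinj : Set.InjOn f ((Finset.univ : Finset ((i : Fin n) × Fin (a i))).filter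
          (fun l => dest (f l) = some j)) := fun x _ y _ h => hfinj h
      have himage : ∀ l ∈ (Finset.univ : Finset ((i : Fin n) × Fin (a i))).filter
          (fun l => dest (f l) = some j),
          f l ∈ (Finset.univ : Finset (((j : Fin n) × Fin (b j)) ⊕ Fin c)).filter
            (fun r => dest r = some j) := by
        intro l hl
        rw [Finset.mem_filter] at hl ⊢
        exact ⟨Finset.mem_univ _, hl.2⟩
      have hc1 := Finset.card_le_card_of_injOn f himage hinj
      refine le_trans hc1 (le_of_eq ?_)
      have heq : ((Finset.univ : Finset (((j : Fin n) × Fin (b j)) ⊕ Fin c)).filter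
          (fun r => dest r = some j))
          = ((Finset.univ.filter (fun y : (j' : Fin n) × Fin (b j') => y.1 = j)).disjSum
              (∅ : Finset (Fin c))) := by
        ext r
        rcases r with y | d
        · simp [hdest, Finset.inl_mem_disjSum]
        · simp [hdest, Finset.inr_mem_disjSum]
      rw [heq, Finset.card_disjSum, hsig (fun j' => j' = j)]
      simp [Finset.filter_eq']
    exact le_trans hcard htarget
  have htotal : (∑ i, (a i : ℝ)) ≤ (∑ i, ∑ j, (M i j : ℝ)) + c := by
    set U' := (Finset.univ : Finset ((i : Fin n) × Fin (a i))).filter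
      (fun l => dest (f l) = none) with hU'
    have hU'c : U'.card ≤ c := by
      have hinj : Set.InjOn f U' := fun x _ y _ h => hfinj h
      have himage : ∀ l ∈ U',
          f l ∈ (Finset.univ : Finset (((j : Fin n) × Fin (b j)) ⊕ Fin c)).filter
            (fun r => dest r = none) := by
        intro l hl
        rw [Finset.mem_filter] at hl ⊢
        exact ⟨Finset.mem_univ _, hl.2⟩
      have hc1 := Finset.card_le_card_of_injOn f himage hinj
      refine le_trans hc1 (le_of_eq ?_)
      have heq : ((Finset.univ : Finset (((j : Fin n) × Fin (b j)) ⊕ Fin c)).filter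
          (fun r => dest r = none))
          = ((∅ : Finset ((j' : Fin n) × Fin (b j'))).disjSum
              (Finset.univ : Finset (Fin c))) := by
        ext r
        rcases r with y | d
        · simp [hdest, Finset.inl_mem_disjSum]
        · simp [hdest, Finset.inr_mem_disjSum]
      rw [heq, Finset.card_disjSum]
      simp
    have hBig : ∑ i, ∑ j, M i j
        = ((Finset.univ : Finset ((i : Fin n) × Fin (a i))).filter
            (fun l => (dest (f l)).isSome)).card := by
      simp only [hM]
      rw [← Finset.sum_product', Finset.univ_product_univ]
      have hdisj' : ∀ x ∈ (Finset.univ : Finset (Fin n × Fin n)),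
          ∀ y ∈ (Finset.univ : Finset (Fin n × Fin n)), x ≠ y →
          Disjoint ((Finset.univ : Finset ((i : Fin n) × Fin (a i))).filter
              (fun l => l.1 = x.1 ∧ dest (f l) = some x.2))
            ((Finset.univ : Finset ((i : Fin n) × Fin (a i))).filter
              (fun l => l.1 = y.1 ∧ dest (f l) = some y.2)) := by
        intro x _ y _ hxy
        exact hdisj x.1 x.2 y.1 y.2 (by simpa [Prod.ext_iff] using hxy)
      rw [← Finset.card_biUnion hdisj']
      congr 1
      ext l
      simp only [Finset.mem_biUnion, Finset.mem_filter, Finset.mem_univ, true_and]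
      constructor
      · rintro ⟨u, h1, hj⟩
        rw [hj]; rfl
      · intro hl
        rcases hopt : dest (f l) with - | j
        · rw [hopt] at hl; simp at hl
        · exact ⟨(l.1, j), rfl, rfl⟩
    have hnegU : ((Finset.univ : Finset ((i : Fin n) × Fin (a i))).filter
        (fun l => ¬ (dest (f l)).isSome)) = U' := by
      rw [hU']
      apply Finset.filter_congr
      intro l _
      simp [Option.not_isSome_iff_eq_none]
    have hsplit : (∑ i, ∑ j, M i j) + U'.card = ∑ i, a i := by
      rw [hBig, ← hnegU, Finset.card_filter_add_card_filter_not, Finset.card_univ]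
      rw [Fintype.card_sigma]
      simp
    have hsplit' : (∑ i, ∑ j, (M i j : ℝ)) + U'.card = ∑ i, (a i : ℝ) := by
      exact_mod_cast congrArg (Nat.cast : ℕ → ℝ) hsplit
    have hU'c' : (U'.card : ℝ) ≤ c := by exact_mod_cast hU'c
    linarith
  refine ⟨fun i j => (M i j : ℝ) / Nr, ?_, ?_, ?_, ?_, ?_⟩
  · intro i j; positivity
  · intro i j hR
    show (M i j : ℝ) / Nr = 0
    rw [hsupp i j hR]
    simp
  · intro i
    show (∑ j, (M i j : ℝ) / Nr) ≤ p i
    rw [← Finset.sum_div, div_le_iff₀ hNrpos]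
    have h1 : (∑ j, (M i j : ℝ)) ≤ (a i : ℝ) := by exact_mod_cast hrow i
    calc (∑ j, (M i j : ℝ)) ≤ (a i : ℝ) := h1
      _ ≤ Nr * p i := ha_le i
      _ = p i * Nr := mul_comm _ _
  · intro j
    show (∑ i, (M i j : ℝ) / Nr) ≤ q j
    rw [← Finset.sum_div, div_le_iff₀ hNrpos]
    have h1 : (∑ i, (M i j : ℝ)) ≤ (b j : ℝ) := by exact_mod_cast hcol j
    calc (∑ i, (M i j : ℝ)) ≤ (b j : ℝ) := h1
      _ ≤ Nr * q j := hb_le j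
      _ = q j * Nr := mul_comm _ _
  · show (∑ i, p i) ≤ (∑ i, ∑ j, (M i j : ℝ) / Nr) + t + 3*η
    have hw : (∑ i, ∑ j, (M i j : ℝ) / Nr) = (∑ i, ∑ j, (M i j : ℝ)) / Nr := by
      rw [Finset.sum_div]
      exact Finset.sum_congr rfl fun i _ => (Finset.sum_div _ _ _).symm
    rw [hw, ← sub_le_iff_le_add, ← sub_le_iff_le_add, le_div_iff₀ hNrpos]
    have hsum_p : Nr * (∑ i, p i) ≤ (∑ i, (a i : ℝ)) + n := by
      rw [Finset.mul_sum]
      have h1 : ∀ i ∈ (Finset.univ : Finset (Fin n)), Nr * p i ≤ (a i : ℝ) + 1 :=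
        fun i _ => ha_ge i
      have h2 := Finset.sum_le_sum h1
      rw [Finset.sum_add_distrib, Finset.sum_const, Finset.card_univ, Fintype.card_fin,
        nsmul_eq_mul, mul_one] at h2
      linarith
    nlinarith [htotal, hc_le, hNη, hη, hNrpos]

end aux

/-- If the Prokhorov distance between `P` and `Q` is less than `ε`, then there is a
coupling `m` of `P` and `Q` with `m {(x,y) : d(x,y) ≥ ε} ≤ ε`. -/
theorem exists_coupling_of_prokhorovDist_lt
    {S : Type*} [MetricSpace S] [CompleteSpace S] [SecondCountableTopology S]
    [MeasurableSpace S] [BorelSpace S]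
    (P Q : Measure S) [IsProbabilityMeasure P] [IsProbabilityMeasure Q]
    (ε : ℝ) (h : prokhorovDist P Q < ε) :
    ∃ m : Measure (S × S), IsProbabilityMeasure m ∧
      m.map Prod.fst = P ∧ m.map Prod.snd = Q ∧
      m {p : S × S | ε ≤ dist p.1 p.2} ≤ ENNReal.ofReal ε := by
  classical
  -- Step 0: extract a member α < ε of the defining set
  have hne : {ε' : ℝ | 0 < ε' ∧ ∀ A : Set S, MeasurableSet A →
      P A ≤ Q (Metric.thickening ε' A) + ENNReal.ofReal ε'}.Nonempty := by
    refine ⟨1, one_pos, fun A _ => ?_⟩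
    calc P A ≤ 1 := prob_le_one
      _ = ENNReal.ofReal 1 := by simp
      _ ≤ Q (Metric.thickening 1 A) + ENNReal.ofReal 1 := le_add_self
  obtain ⟨α, hαmem, hαε⟩ := exists_lt_of_csInf_lt hne h
  obtain ⟨hα0, hαA⟩ := hαmem
  have hε0 : (0:ℝ) < ε := lt_trans hα0 hαε
  set θ : ℝ := (ε - α)/8 with hθdef
  have hθ0 : 0 < θ := by rw [hθdef]; linarith
  have hα4θ : α + 4*θ < ε := by rw [hθdef]; linarith
  have hα3θ : α + 3*θ < ε := by rw [hθdef]; linarith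
  -- Step 1: a compact set carrying most of the mass of both P and Q
  obtain ⟨KP, hKPc, hKP⟩ := exists_compact_large P (δ := ENNReal.ofReal θ)
    (by simp [ENNReal.ofReal_eq_zero]; linarith)
  obtain ⟨KQ, hKQc, hKQ⟩ := exists_compact_large Q (δ := ENNReal.ofReal θ)
    (by simp [ENNReal.ofReal_eq_zero]; linarith)
  set K : Set S := KP ∪ KQ with hKdef
  have hKcomp : IsCompact K := hKPc.union hKQc
  have hKmeas : MeasurableSet K := hKcomp.isClosed.measurableSet
  have hPK : P Kᶜ ≤ ENNReal.ofReal θ :=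
    le_trans (measure_mono (Set.compl_subset_compl.2 Set.subset_union_left)) hKP
  have hQK : Q Kᶜ ≤ ENNReal.ofReal θ :=
    le_trans (measure_mono (Set.compl_subset_compl.2 Set.subset_union_right)) hKQ
  -- Step 2: a finite partition of K into small measurable pieces
  obtain ⟨T, hT⟩ := hKcomp.elim_finite_subcover (fun x : S => ball x θ)
    (fun x => isOpen_ball) (fun x _ => Set.mem_iUnion.2 ⟨x, mem_ball_self hθ0⟩)
  set n : ℕ := T.card with hn
  set e := T.equivFin with he
  set z : Fin n → S := fun i => (e.symm i : S) with hz
  have hKz : K ⊆ ⋃ i, ball (z i) θ := by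
    intro x hx
    obtain ⟨y, hyT, hxy⟩ := Set.mem_iUnion₂.1 (hT hx)
    refine Set.mem_iUnion.2 ⟨e ⟨y, hyT⟩, ?_⟩
    rw [hz]
    simp only [Equiv.symm_apply_apply]
    exact hxy
  set C : Fin n → Set S := fun i =>
    (K ∩ ball (z i) θ) \ ⋃ (l : Fin n) (_ : l < i), ball (z l) θ with hC
  have hCmeas : ∀ i, MeasurableSet (C i) := by
    intro i
    apply MeasurableSet.diff
    · exact hKmeas.inter measurableSet_ball
    · exact MeasurableSet.iUnion fun l => MeasurableSet.iUnion fun _ => measurableSet_ball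
  have hCball : ∀ i, C i ⊆ ball (z i) θ := fun i x hx => hx.1.2
  have hCK : ∀ i, C i ⊆ K := fun i x hx => hx.1.1
  have hCdisj : Pairwise (Function.onFun Disjoint C) := by
    intro i j hij
    rcases lt_or_gt_of_ne hij with hlt | hlt
    · refine Set.disjoint_left.2 fun x hxi hxj => ?_
      exact hxj.2 (Set.mem_iUnion₂.2 ⟨i, hlt, hxi.1.2⟩)
    · refine Set.disjoint_left.2 fun x hxi hxj => ?_
      exact hxi.2 (Set.mem_iUnion₂.2 ⟨j, hlt, hxj.1.2⟩)
  have hCcover : K = ⋃ i, C i := by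
    apply Set.Subset.antisymm
    · intro x hx
      have hball : ∃ i, x ∈ ball (z i) θ := Set.mem_iUnion.1 (hKz hx)
      have hTne : (Finset.univ.filter (fun l => x ∈ ball (z l) θ)).Nonempty := by
        obtain ⟨i, hi⟩ := hball
        exact ⟨i, Finset.mem_filter.2 ⟨Finset.mem_univ _, hi⟩⟩
      set i0 := (Finset.univ.filter (fun l => x ∈ ball (z l) θ)).min' hTne with hi0
      have hi0mem := (Finset.univ.filter (fun l => x ∈ ball (z l) θ)).min'_mem hTne
      rw [Finset.mem_filter] at hi0mem
      refine Set.mem_iUnion.2 ⟨i0, ⟨⟨hx, hi0mem.2⟩, ?_⟩⟩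
      intro hmem
      obtain ⟨l, hl⟩ := Set.mem_iUnion.1 hmem
      obtain ⟨hlt, hxl⟩ := Set.mem_iUnion.1 hl
      have : i0 ≤ l := Finset.min'_le (Finset.univ.filter (fun l => x ∈ ball (z l) θ)) l
        (Finset.mem_filter.2 ⟨Finset.mem_univ _, hxl⟩)
      exact absurd hlt (not_lt.2 this)
    · exact Set.iUnion_subset hCK
  -- real masses of the pieces
  set pr : Fin n → ℝ := fun i => (P (C i)).toReal with hpr
  set qr : Fin n → ℝ := fun j => (Q (C j)).toReal with hqr
  set R : Fin n → Fin n → Prop := fun i j => ∃ y ∈ C j, ∃ x ∈ C i, dist y x < α with hR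
  -- the Hall-type hypothesis
  have hyp : ∀ A : Finset (Fin n), ∑ i ∈ A, pr i ≤
      (∑ j ∈ Finset.univ.filter (fun j => ∃ i ∈ A, R i j), qr j) + (α + θ) := by
    intro A
    have hmeasA : MeasurableSet (⋃ i ∈ A, C i) :=
      MeasurableSet.biUnion A.countable_toSet (fun i _ => hCmeas i)
    have hPA : P (⋃ i ∈ A, C i) = ∑ i ∈ A, P (C i) :=
      measure_biUnion_finset (fun i _ j _ hij => hCdisj hij) (fun i _ => hCmeas i)
    have h2 : Metric.thickening α (⋃ i ∈ A, C i) ⊆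
        Kᶜ ∪ ⋃ j ∈ Finset.univ.filter (fun j => ∃ i ∈ A, R i j), C j := by
      intro y hy
      by_cases hyK : y ∈ K
      · right
        obtain ⟨u, hu, hd⟩ := Metric.mem_thickening_iff.1 hy
        obtain ⟨j, hj⟩ := Set.mem_iUnion.1 (hCcover ▸ hyK)
        obtain ⟨i, hiA, hui⟩ := Set.mem_iUnion₂.1 hu
        refine Set.mem_biUnion ?_ hj
        refine Finset.mem_filter.2 ⟨Finset.mem_univ _, ⟨i, hiA, ?_⟩⟩
        exact ⟨y, hj, u, hui, hd⟩
      · exact Or.inl hyK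
    have h3 : Q (Metric.thickening α (⋃ i ∈ A, C i)) ≤
        ENNReal.ofReal θ + ∑ j ∈ Finset.univ.filter (fun j => ∃ i ∈ A, R i j), Q (C j) := by
      refine le_trans (measure_mono h2) (le_trans (measure_union_le _ _) ?_)
      exact add_le_add hQK (measure_biUnion_finset_le _ _)
    have h4 : ∑ i ∈ A, P (C i) ≤
        (∑ j ∈ Finset.univ.filter (fun j => ∃ i ∈ A, R i j), Q (C j))
          + ENNReal.ofReal (α + θ) := by
      rw [← hPA]
      refine le_trans (hαA _ hmeasA) ?_
      calc Q (Metric.thickening α (⋃ i ∈ A, C i)) + ENNReal.ofReal α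
          ≤ (ENNReal.ofReal θ + ∑ j ∈ Finset.univ.filter (fun j => ∃ i ∈ A, R i j), Q (C j))
            + ENNReal.ofReal α := by gcongr
        _ = (∑ j ∈ Finset.univ.filter (fun j => ∃ i ∈ A, R i j), Q (C j))
            + (ENNReal.ofReal θ + ENNReal.ofReal α) := by ring
        _ = _ := by rw [← ENNReal.ofReal_add hθ0.le hα0.le]; ring_nf
    have h5 := ENNReal.toReal_mono (by
      refine ENNReal.add_ne_top.2 ⟨?_, ENNReal.ofReal_ne_top⟩
      exact ENNReal.sum_ne_top.2 fun j _ => measure_ne_top Q _) h4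
    rw [ENNReal.toReal_add (ENNReal.sum_ne_top.2 fun j _ => measure_ne_top Q _)
      ENNReal.ofReal_ne_top, ENNReal.toReal_ofReal (by linarith),
      ENNReal.toReal_sum (fun j _ => measure_ne_top Q _),
      ENNReal.toReal_sum (fun i _ => measure_ne_top P _) ] at h5
    exact h5
  obtain ⟨wt, hw0, hwsupp, hwrow, hwcol, hwtot⟩ := strassen_fin pr qr
    (fun i => ENNReal.toReal_nonneg) (fun j => ENNReal.toReal_nonneg) R (α + θ) (θ/3)
    (by linarith) (by linarith) hyp
  -- extended index type
  set X : Option (Fin n) → Set S := fun o => o.elim Kᶜ C with hX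
  have hXmeas : ∀ o, MeasurableSet (X o) := by
    rintro (_ | i)
    · exact hKmeas.compl
    · exact hCmeas i
  have hXdisj : Pairwise (Function.onFun Disjoint X) := by
    rintro (_ | i) (_ | j) hij
    · simp at hij
    · exact Set.disjoint_left.2 fun x hx hx' => hx (hCK j hx')
    · exact Set.disjoint_left.2 fun x hx hx' => hx' (hCK i hx)
    · exact hCdisj (by simpa using hij)
  have hXcover : (⋃ o, X o) = Set.univ := by
    apply Set.eq_univ_of_forall
    intro x
    by_cases hx : x ∈ K
    · obtain ⟨i, hi⟩ := Set.mem_iUnion.1 (hCcover ▸ hx)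
      exact Set.mem_iUnion.2 ⟨some i, hi⟩
    · exact Set.mem_iUnion.2 ⟨none, hx⟩
  -- partition additivity
  have hXuniv : (⋃ o ∈ (Finset.univ : Finset (Option (Fin n))), X o) = Set.univ := by
    rw [← hXcover]
    ext x
    simp
  have hPpart : ∀ {A : Set S}, MeasurableSet A → ∑ o, P (A ∩ X o) = P A := by
    intro A hA
    rw [← measure_biUnion_finset (fun o _ o' _ hoo' =>
      ((hXdisj hoo').mono Set.inter_subset_right Set.inter_subset_right))
      (fun o _ => hA.inter (hXmeas o))]
    congr 1
    calc ⋃ o ∈ (Finset.univ : Finset (Option (Fin n))), (A ∩ X o)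
        = A ∩ ⋃ o ∈ (Finset.univ : Finset (Option (Fin n))), X o := by
          rw [Set.inter_iUnion₂]
      _ = A := by rw [hXuniv, Set.inter_univ]
  have hQpart : ∀ {A : Set S}, MeasurableSet A → ∑ o, Q (A ∩ X o) = Q A := by
    intro A hA
    rw [← measure_biUnion_finset (fun o _ o' _ hoo' =>
      ((hXdisj hoo').mono Set.inter_subset_right Set.inter_subset_right))
      (fun o _ => hA.inter (hXmeas o))]
    congr 1
    calc ⋃ o ∈ (Finset.univ : Finset (Option (Fin n))), (A ∩ X o)
        = A ∩ ⋃ o ∈ (Finset.univ : Finset (Option (Fin n))), X o := by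
          rw [Set.inter_iUnion₂]
      _ = A := by rw [hXuniv, Set.inter_univ]
  set pι : Option (Fin n) → ℝ := fun o => (P (X o)).toReal with hpι
  set qι : Option (Fin n) → ℝ := fun o => (Q (X o)).toReal with hqι
  set w' : Option (Fin n) → Option (Fin n) → ℝ :=
    fun o o' => o.elim 0 (fun i => o'.elim 0 (fun j => wt i j)) with hw'
  set r : Option (Fin n) → ℝ := fun o => pι o - ∑ o', w' o o' with hrdef
  set s : Option (Fin n) → ℝ := fun o' => qι o' - ∑ o, w' o o' with hsdef
  set c : ℝ := 1 - ∑ o, ∑ o', w' o o' with hcdef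
  -- basic real facts
  have hw'0 : ∀ o o', 0 ≤ w' o o' := by
    rintro (_ | i) (_ | j) <;> simp [hw']
    exact hw0 i j
  have hw'row : ∀ o, ∑ o', w' o o' ≤ pι o := by
    rintro (_ | i)
    · refine le_trans (le_of_eq (Finset.sum_eq_zero ?_)) ENNReal.toReal_nonneg
      rintro (_ | j) _ <;> simp [hw']
    · calc ∑ o', w' (some i) o' = ∑ j, wt i j := by
            rw [Fintype.sum_option]
            simp [hw']
        _ ≤ pr i := hwrow i
  have hw'col : ∀ o', ∑ o, w' o o' ≤ qι o' := by
    rintro (_ | j)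
    · refine le_trans (le_of_eq (Finset.sum_eq_zero ?_)) ENNReal.toReal_nonneg
      rintro (_ | i) _ <;> simp [hw']
    · calc ∑ o, w' o (some j) = ∑ i, wt i j := by
            rw [Fintype.sum_option]
            simp [hw']
        _ ≤ qr j := hwcol j
  have hr0 : ∀ o, 0 ≤ r o := fun o => sub_nonneg.2 (hw'row o)
  have hs0 : ∀ o', 0 ≤ s o' := fun o' => sub_nonneg.2 (hw'col o')
  have hsum_Xone : ∀ (μ : Measure S), IsProbabilityMeasure μ → ∑ o, μ (X o) = 1 := by
    intro μ hμ
    rw [← measure_biUnion_finset (fun o _ o' _ hoo' => hXdisj hoo') (fun o _ => hXmeas o),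
      hXuniv, measure_univ]
  have hsum_pι : ∑ o, pι o = 1 := by
    have h1 := hsum_Xone P inferInstance
    have h2 : (∑ o, P (X o)).toReal = ∑ o, pι o :=
      ENNReal.toReal_sum (fun o _ => measure_ne_top P _)
    rw [h1] at h2
    simpa using h2.symm
  have hsum_qι : ∑ o, qι o = 1 := by
    have h1 := hsum_Xone Q inferInstance
    have h2 : (∑ o, Q (X o)).toReal = ∑ o, qι o :=
      ENNReal.toReal_sum (fun o _ => measure_ne_top Q _)
    rw [h1] at h2
    simpa using h2.symm
  have hsum_r : ∑ o, r o = c := by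
    rw [hrdef, hcdef, Finset.sum_sub_distrib, hsum_pι]
  have hsum_s : ∑ o', s o' = c := by
    rw [hsdef, hcdef, Finset.sum_sub_distrib, hsum_qι, Finset.sum_comm]
  have hc0 : 0 ≤ c := hsum_r ▸ Finset.sum_nonneg fun o _ => hr0 o
  have hcε : c ≤ α + 3*θ := by
    have h1 : pι none ≤ θ := ENNReal.toReal_le_of_le_ofReal hθ0.le hPK
    have h2 : ∑ o, pι o = pι none + ∑ i, pι (some i) := Fintype.sum_option pι
    have h3 : ∀ i, pι (some i) = pr i := fun i => rfl
    have h4 : ∑ i, pι (some i) = ∑ i, pr i := Finset.sum_congr rfl fun i _ => h3 i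
    have h5 : ∑ o, ∑ o', w' o o' = ∑ i, ∑ j, wt i j := by
      rw [Fintype.sum_option]
      have hz1 : ∑ o', w' none o' = 0 := Finset.sum_eq_zero (by rintro (_ | j) _ <;> simp [hw'])
      rw [hz1, zero_add]
      refine Finset.sum_congr rfl fun i _ => ?_
      rw [Fintype.sum_option]
      simp [hw']
    rw [hcdef, h5]
    have h6 : 1 - θ ≤ ∑ i, pr i := by
      rw [h2, h4] at hsum_pι
      linarith
    linarith [hwtot]
  have hq0w : ∀ o o', qι o' = 0 → w' o o' = 0 := by
    intro o o' hq
    have h1 : ∑ o'', w' o'' o' ≤ 0 := hq ▸ hw'col o'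
    have h2 := Finset.sum_nonneg (fun o'' (_ : o'' ∈ Finset.univ) => hw'0 o'' o')
    have h3 : ∑ o'', w' o'' o' = 0 := le_antisymm h1 h2
    exact le_antisymm (h3 ▸ Finset.single_le_sum
      (fun o'' (_ : o'' ∈ Finset.univ) => hw'0 o'' o') (Finset.mem_univ o)) (hw'0 o o')
  have hp0w : ∀ o o', pι o = 0 → w' o o' = 0 := by
    intro o o' hp
    have h1 : ∑ o'', w' o o'' ≤ 0 := hp ▸ hw'row o
    have h2 := Finset.sum_nonneg (fun o'' (_ : o'' ∈ Finset.univ) => hw'0 o o'')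
    have h3 : ∑ o'', w' o o'' = 0 := le_antisymm h1 h2
    exact le_antisymm (h3 ▸ Finset.single_le_sum
      (fun o'' (_ : o'' ∈ Finset.univ) => hw'0 o o'') (Finset.mem_univ o')) (hw'0 o o')
  have hq0s : ∀ o', qι o' = 0 → s o' = 0 := by
    intro o' hq
    rw [hsdef]
    simp only [hq, zero_sub, neg_eq_zero]
    have h2 := Finset.sum_nonneg (fun o'' (_ : o'' ∈ Finset.univ) => hw'0 o'' o')
    have h1 : ∑ o'', w' o'' o' ≤ 0 := hq ▸ hw'col o'
    linarith
  have hp0r : ∀ o, pι o = 0 → r o = 0 := by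
    intro o hp
    rw [hrdef]
    simp only [hp, zero_sub, neg_eq_zero]
    have h2 := Finset.sum_nonneg (fun o'' (_ : o'' ∈ Finset.univ) => hw'0 o o'')
    have h1 : ∑ o'', w' o o'' ≤ 0 := hp ▸ hw'row o
    linarith
  -- the coupling coefficients
  set k : Option (Fin n) → Option (Fin n) → ℝ≥0∞ := fun o o' =>
    ENNReal.ofReal (w' o o' / (pι o * qι o') + (r o / pι o) * (s o' / qι o') / c) with hk
  have hbig0 : ∀ o o', 0 ≤ w' o o' / (pι o * qι o') + (r o / pι o) * (s o' / qι o') / c := by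
    intro o o'
    have := hw'0 o o'; have := hr0 o; have := hs0 o'; have := hc0
    have hp := ENNReal.toReal_nonneg (a := P (X o))
    have hq := ENNReal.toReal_nonneg (a := Q (X o'))
    positivity
  set m : Measure (S × S) := ∑ o, ∑ o',
    k o o' • ((P.restrict (X o)).prod (Q.restrict (X o'))) with hm
  -- key real identities
  have hkey1 : ∀ o o',
      (w' o o' / (pι o * qι o') + (r o / pι o) * (s o' / qι o') / c) * qι o'
        = w' o o' / pι o + (r o / pι o) * s o' / c := by
    intro o o'
    by_cases hq : qι o' = 0
    · rw [hq, hq0w o o' hq, hq0s o' hq]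
      simp
    · rw [add_mul]
      congr 1
      · rw [← div_div, div_mul_cancel₀ _ hq]
      · rw [div_mul_eq_mul_div, mul_assoc, div_mul_cancel₀ _ hq]
  have hkey2 : ∀ o o',
      (w' o o' / (pι o * qι o') + (r o / pι o) * (s o' / qι o') / c) * pι o
        = w' o o' / qι o' + (s o' / qι o') * r o / c := by
    intro o o'
    by_cases hp : pι o = 0
    · rw [hp, hp0w o o' hp, hp0r o hp]
      simp
    · rw [add_mul]
      congr 1
      · rw [mul_comm (pι o) (qι o'), ← div_div, div_mul_cancel₀ _ hp]
      · rw [div_mul_eq_mul_div, mul_comm (r o / pι o) (s o' / qι o'), mul_assoc,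
          div_mul_cancel₀ _ hp]
  have hkey0 : ∀ o o', w' o o' = 0 →
      (w' o o' / (pι o * qι o') + (r o / pι o) * (s o' / qι o') / c) * (pι o * qι o')
        = r o * s o' / c := by
    intro o o' hw0'
    by_cases hp : pι o = 0
    · rw [hw0', hp0r o hp, hp]
      simp
    by_cases hq : qι o' = 0
    · rw [hw0', hq0s o' hq, hq]
      simp
    rw [hw0', zero_div, zero_add, div_mul_eq_mul_div]
    congr 1
    field_simp
  have hPof : ∀ o, P (X o) = ENNReal.ofReal (pι o) :=
    fun o => (ENNReal.ofReal_toReal (measure_ne_top P _)).symm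
  have hQof : ∀ o, Q (X o) = ENNReal.ofReal (qι o) :=
    fun o => (ENNReal.ofReal_toReal (measure_ne_top Q _)).symm
  -- row/column normalizations
  have hrw' : ∀ o, ∑ o', w' o o' = pι o - r o := by
    intro o
    rw [hrdef]
    ring
  have hsw' : ∀ o', ∑ o, w' o o' = qι o' - s o' := by
    intro o'
    rw [hsdef]
    ring
  have hsumC1 : ∀ o, P (X o) ≠ 0 → ∑ o', k o o' * Q (X o') = 1 := by
    intro o ho
    have hp : pι o ≠ 0 := ENNReal.toReal_ne_zero.2 ⟨ho, measure_ne_top P _⟩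
    have hreal : ∑ o', (w' o o' / (pι o * qι o') + (r o / pι o) * (s o' / qι o') / c) * qι o'
        = 1 := by
      calc ∑ o', (w' o o' / (pι o * qι o') + (r o / pι o) * (s o' / qι o') / c) * qι o'
          = ∑ o', (w' o o' / pι o + (r o / pι o) * s o' / c) := by
            exact Finset.sum_congr rfl fun o' _ => hkey1 o o'
        _ = (∑ o', w' o o') / pι o + (r o / pι o) * ((∑ o', s o') / c) := by
            rw [Finset.sum_add_distrib, ← Finset.sum_div]
            congr 1
            simp_rw [mul_div_assoc]
            rw [← Finset.mul_sum, ← Finset.sum_div]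
        _ = 1 := by
            rw [hsum_s, hrw' o]
            rcases eq_or_ne c 0 with hc | hc
            · have hrall : ∀ o'' ∈ Finset.univ, r o'' = 0 :=
                (Finset.sum_eq_zero_iff_of_nonneg (fun o'' _ => hr0 o'')).1 (hsum_r.trans hc)
              rw [hrall o (Finset.mem_univ o), hc]
              simp [div_self hp]
            · rw [div_self hc, mul_one, ← add_div]
              have : pι o - r o + r o = pι o := by ring
              rw [this, div_self hp]
    calc ∑ o', k o o' * Q (X o')
        = ∑ o', ENNReal.ofReal
            ((w' o o' / (pι o * qι o') + (r o / pι o) * (s o' / qι o') / c) * qι o') := by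
          refine Finset.sum_congr rfl fun o' _ => ?_
          rw [hQof o', hk, ← ENNReal.ofReal_mul (hbig0 o o')]
      _ = ENNReal.ofReal (∑ o', (w' o o' / (pι o * qι o') + (r o / pι o) * (s o' / qι o') / c)
            * qι o') := by
          rw [ENNReal.ofReal_sum_of_nonneg
            (fun o' _ => mul_nonneg (hbig0 o o') ENNReal.toReal_nonneg)]
      _ = 1 := by rw [hreal, ENNReal.ofReal_one]
  have hsumC2 : ∀ o', Q (X o') ≠ 0 → ∑ o, k o o' * P (X o) = 1 := by
    intro o' ho
    have hq : qι o' ≠ 0 := ENNReal.toReal_ne_zero.2 ⟨ho, measure_ne_top Q _⟩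
    have hreal : ∑ o, (w' o o' / (pι o * qι o') + (r o / pι o) * (s o' / qι o') / c) * pι o
        = 1 := by
      calc ∑ o, (w' o o' / (pι o * qι o') + (r o / pι o) * (s o' / qι o') / c) * pι o
          = ∑ o, (w' o o' / qι o' + (s o' / qι o') * r o / c) := by
            exact Finset.sum_congr rfl fun o _ => hkey2 o o'
        _ = (∑ o, w' o o') / qι o' + (s o' / qι o') * ((∑ o, r o) / c) := by
            rw [Finset.sum_add_distrib, ← Finset.sum_div]
            congr 1
            simp_rw [mul_div_assoc]
            rw [← Finset.mul_sum, ← Finset.sum_div]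
        _ = 1 := by
            rw [hsum_r, hsw' o']
            rcases eq_or_ne c 0 with hc | hc
            · have hsall : ∀ o'' ∈ Finset.univ, s o'' = 0 :=
                (Finset.sum_eq_zero_iff_of_nonneg (fun o'' _ => hs0 o'')).1 (hsum_s.trans hc)
              rw [hsall o' (Finset.mem_univ o'), hc]
              simp [div_self hq]
            · rw [div_self hc, mul_one, ← add_div]
              have : qι o' - s o' + s o' = qι o' := by ring
              rw [this, div_self hq]
    calc ∑ o, k o o' * P (X o)
        = ∑ o, ENNReal.ofReal
            ((w' o o' / (pι o * qι o') + (r o / pι o) * (s o' / qι o') / c) * pι o) := by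
          refine Finset.sum_congr rfl fun o _ => ?_
          rw [hPof o, hk, ← ENNReal.ofReal_mul (hbig0 o o')]
      _ = ENNReal.ofReal (∑ o, (w' o o' / (pι o * qι o') + (r o / pι o) * (s o' / qι o') / c)
            * pι o) := by
          rw [ENNReal.ofReal_sum_of_nonneg
            (fun o _ => mul_nonneg (hbig0 o o') ENNReal.toReal_nonneg)]
      _ = 1 := by rw [hreal, ENNReal.ofReal_one]
  -- marginals
  have happly : ∀ (E : Set (S × S)), MeasurableSet E → m E =
      ∑ o, ∑ o', k o o' * ((P.restrict (X o)).prod (Q.restrict (X o'))) E := by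
    intro E hE
    rw [hm, Measure.finset_sum_apply]
    refine Finset.sum_congr rfl fun o _ => ?_
    rw [Measure.finset_sum_apply]
    refine Finset.sum_congr rfl fun o' _ => ?_
    rw [Measure.smul_apply, smul_eq_mul]
  have hfst : m.map Prod.fst = P := by
    refine Measure.ext fun A hA => ?_
    rw [Measure.map_apply measurable_fst hA]
    have hpre : (Prod.fst : S × S → S) ⁻¹' A = A ×ˢ (Set.univ : Set S) := Set.prod_univ.symm
    rw [hpre, happly _ ((hA.prod MeasurableSet.univ))]
    have hterm : ∀ o o', ((P.restrict (X o)).prod (Q.restrict (X o'))) (A ×ˢ Set.univ)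
        = P (A ∩ X o) * Q (X o') := by
      intro o o'
      rw [Measure.prod_prod, Measure.restrict_apply hA, Measure.restrict_apply_univ]
    calc ∑ o, ∑ o', k o o' * ((P.restrict (X o)).prod (Q.restrict (X o'))) (A ×ˢ Set.univ)
        = ∑ o, ∑ o', k o o' * (P (A ∩ X o) * Q (X o')) := by
          exact Finset.sum_congr rfl fun o _ => Finset.sum_congr rfl fun o' _ => by
            rw [hterm o o']
      _ = ∑ o, P (A ∩ X o) := by
          refine Finset.sum_congr rfl fun o _ => ?_
          rcases eq_or_ne (P (X o)) 0 with h0 | h0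
          · have hA0 : P (A ∩ X o) = 0 :=
              le_antisymm (le_trans (measure_mono Set.inter_subset_right) h0.le) zero_le
            simp [hA0]
          · calc ∑ o', k o o' * (P (A ∩ X o) * Q (X o'))
                = ∑ o', (k o o' * Q (X o')) * P (A ∩ X o) := by
                  exact Finset.sum_congr rfl fun o' _ => by ring
              _ = (∑ o', k o o' * Q (X o')) * P (A ∩ X o) := by rw [Finset.sum_mul]
              _ = P (A ∩ X o) := by rw [hsumC1 o h0, one_mul]
      _ = P A := hPpart hA
  have hsnd : m.map Prod.snd = Q := by
    refine Measure.ext fun B hB => ?_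
    rw [Measure.map_apply measurable_snd hB]
    have hpre : (Prod.snd : S × S → S) ⁻¹' B = (Set.univ : Set S) ×ˢ B := Set.univ_prod.symm
    rw [hpre, happly _ ((MeasurableSet.univ.prod hB))]
    have hterm : ∀ o o', ((P.restrict (X o)).prod (Q.restrict (X o'))) (Set.univ ×ˢ B)
        = P (X o) * Q (B ∩ X o') := by
      intro o o'
      rw [Measure.prod_prod, Measure.restrict_apply hB, Measure.restrict_apply_univ]
    calc ∑ o, ∑ o', k o o' * ((P.restrict (X o)).prod (Q.restrict (X o'))) (Set.univ ×ˢ B)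
        = ∑ o', ∑ o, k o o' * (P (X o) * Q (B ∩ X o')) := by
          rw [Finset.sum_comm]
          exact Finset.sum_congr rfl fun o' _ => Finset.sum_congr rfl fun o _ => by
            rw [hterm o o']
      _ = ∑ o', Q (B ∩ X o') := by
          refine Finset.sum_congr rfl fun o' _ => ?_
          rcases eq_or_ne (Q (X o')) 0 with h0 | h0
          · have hB0 : Q (B ∩ X o') = 0 :=
              le_antisymm (le_trans (measure_mono Set.inter_subset_right) h0.le) zero_le
            simp [hB0]
          · calc ∑ o, k o o' * (P (X o) * Q (B ∩ X o'))
                = ∑ o, (k o o' * P (X o)) * Q (B ∩ X o') := by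
                  exact Finset.sum_congr rfl fun o _ => by ring
              _ = (∑ o, k o o' * P (X o)) * Q (B ∩ X o') := by rw [Finset.sum_mul]
              _ = Q (B ∩ X o') := by rw [hsumC2 o' h0, one_mul]
      _ = Q B := hQpart hB
  have hprob : IsProbabilityMeasure m := by
    constructor
    have := Measure.map_apply (measurable_fst (α := S) (β := S)) MeasurableSet.univ (μ := m)
    rw [Set.preimage_univ] at this
    rw [← this, hfst, measure_univ]
  -- the bad set
  refine ⟨m, hprob, hfst, hsnd, ?_⟩
  set E : Set (S × S) := {p : S × S | ε ≤ dist p.1 p.2} with hE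
  have hEmeas : MeasurableSet E :=
    (isClosed_le continuous_const (continuous_fst.dist continuous_snd)).measurableSet
  -- for related pairs, the product measure of E vanishes
  have hzero : ∀ i j, R i j →
      ((P.restrict (X (some i))).prod (Q.restrict (X (some j)))) E = 0 := by
    intro i j hij
    have hEsub : E ⊆ (C i ×ˢ C j)ᶜ := by
      rintro ⟨x, y⟩ hExy hmem
      obtain ⟨y₀, hy₀, x₀, hx₀, hd⟩ := hij
      have hx1 := hCball i hmem.1
      have hx2 := hCball i hx₀
      have hy1 := hCball j hmem.2
      have hy2 := hCball j hy₀
      have h1 : dist x x₀ < 2*θ := by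
        calc dist x x₀ ≤ dist x (z i) + dist (z i) x₀ := dist_triangle _ _ _
          _ < θ + θ := add_lt_add (mem_ball.1 hx1) (by rw [dist_comm]; exact mem_ball.1 hx2)
          _ = 2*θ := by ring
      have h2 : dist y₀ y < 2*θ := by
        calc dist y₀ y ≤ dist y₀ (z j) + dist (z j) y := dist_triangle _ _ _
          _ < θ + θ := add_lt_add (mem_ball.1 hy2) (by rw [dist_comm]; exact mem_ball.1 hy1)
          _ = 2*θ := by ring
      have h3 : dist x y < α + 4*θ := by
        calc dist x y ≤ dist x x₀ + dist x₀ y₀ + dist y₀ y := dist_triangle4 _ _ _ _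
          _ < 2*θ + α + 2*θ := by
              have : dist x₀ y₀ < α := by rw [dist_comm]; exact hd
              linarith
          _ = α + 4*θ := by ring
      have h4 : ε ≤ dist x y := hExy
      linarith
    have h0 : ((P.restrict (C i)).prod (Q.restrict (C j))) ((C i ×ˢ C j)ᶜ) = 0 := by
      rw [Set.compl_prod_eq_union]
      refine le_antisymm (le_trans (measure_union_le _ _) ?_) zero_le
      rw [Measure.prod_prod, Measure.prod_prod,
        Measure.restrict_apply (hCmeas i).compl, Measure.restrict_apply (hCmeas j).compl,
        Set.compl_inter_self, Set.compl_inter_self]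
      simp
    exact le_antisymm (le_trans (measure_mono hEsub) h0.le) zero_le
  -- per-term bound
  have hterm : ∀ o o', k o o' * ((P.restrict (X o)).prod (Q.restrict (X o'))) E
      ≤ ENNReal.ofReal (r o * s o' / c) := by
    intro o o'
    by_cases hrel : ∃ i j, o = some i ∧ o' = some j ∧ R i j
    · obtain ⟨i, j, rfl, rfl, hij⟩ := hrel
      rw [hzero i j hij, mul_zero]
      exact zero_le
    · have hw0' : w' o o' = 0 := by
        rcases o with _ | i
        · simp [hw']
        rcases o' with _ | j
        · simp [hw']
        have hnR : ¬ R i j := fun hR' => hrel ⟨i, j, rfl, rfl, hR'⟩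
        simpa [hw'] using hwsupp i j hnR
      calc k o o' * ((P.restrict (X o)).prod (Q.restrict (X o'))) E
          ≤ k o o' * ((P.restrict (X o)).prod (Q.restrict (X o'))) Set.univ :=
            mul_le_mul_right (measure_mono (Set.subset_univ E)) _
        _ = k o o' * (P (X o) * Q (X o')) := by
            rw [← Set.univ_prod_univ, Measure.prod_prod, Measure.restrict_apply_univ,
              Measure.restrict_apply_univ]
        _ = ENNReal.ofReal (r o * s o' / c) := by
            rw [hPof o, hQof o', hk, ← ENNReal.ofReal_mul ENNReal.toReal_nonneg,
              ← ENNReal.ofReal_mul (hbig0 o o'), hkey0 o o' hw0']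
  -- sum the bounds
  have hsumbound : ∑ o, ∑ o', ENNReal.ofReal (r o * s o' / c) ≤ ENNReal.ofReal ε := by
    have h1 : ∀ o, ∑ o', ENNReal.ofReal (r o * s o' / c)
        = ENNReal.ofReal (r o * ((∑ o', s o') / c)) := by
      intro o
      rw [← ENNReal.ofReal_sum_of_nonneg (fun o' _ =>
        div_nonneg (mul_nonneg (hr0 o) (hs0 o')) hc0)]
      congr 1
      simp_rw [mul_div_assoc]
      rw [← Finset.mul_sum, ← Finset.sum_div]
    calc ∑ o, ∑ o', ENNReal.ofReal (r o * s o' / c)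
        = ∑ o, ENNReal.ofReal (r o * ((∑ o', s o') / c)) :=
          Finset.sum_congr rfl fun o _ => h1 o
      _ = ENNReal.ofReal (∑ o, r o * ((∑ o', s o') / c)) :=
          (ENNReal.ofReal_sum_of_nonneg (fun o _ =>
            mul_nonneg (hr0 o) (div_nonneg (Finset.sum_nonneg fun o' _ => hs0 o') hc0))).symm
      _ = ENNReal.ofReal ((∑ o, r o) * ((∑ o', s o') / c)) := by rw [Finset.sum_mul]
      _ ≤ ENNReal.ofReal ε := by
          apply ENNReal.ofReal_le_ofReal
          rw [hsum_r, hsum_s]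
          rcases eq_or_ne c 0 with hc | hc
          · rw [hc]
            simp
            linarith
          · rw [div_self hc, mul_one]
            linarith
  calc m E = ∑ o, ∑ o', k o o' * ((P.restrict (X o)).prod (Q.restrict (X o'))) E :=
        happly E hEmeas
    _ ≤ ∑ o, ∑ o', ENNReal.ofReal (r o * s o' / c) :=
        Finset.sum_le_sum fun o _ => Finset.sum_le_sum fun o' _ => hterm o o'
    _ ≤ ENNReal.ofReal ε := hsumbound
end

section
/- Let X, Y be Polish spaces. Metrize X × Y by d((x,y),(x',y')) = max(d_X(x,x'), d_Y(y,y')). Suppose μ, μ' ∈ P(X), ν, ν' ∈ P(Y), and π ∈ Π(μ,ν). Suppose v₁ is a coupling of (μ', μ) with v₁{(x,x') : d_X(x,x') ≥ ε} ≤ ε and v₂ is a coupling of (ν, ν') with v₂{(y,y') : d_Y(y,y') ≥ δ} ≤ δ. Then there exists π' ∈ Π(μ',ν') with Prokhorov distance d_P(π', π) ≤ ε + δ. -/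
open MeasureTheory ProbabilityTheory
open scoped ENNReal

/-- Given `π ∈ Π(μ,ν)`, a coupling `v₁` of `(μ',μ)` concentrated near the diagonal up to
`ε` and a coupling `v₂` of `(ν,ν')` concentrated near the diagonal up to `δ`, there is a
coupling `π' ∈ Π(μ',ν')` with Prokhorov distance at most `ε + δ` from `π`. -/
theorem exists_coupling_close
    {X Y : Type*} [MetricSpace X] [CompleteSpace X] [SecondCountableTopology X]
    [MeasurableSpace X] [BorelSpace X]
    [MetricSpace Y] [CompleteSpace Y] [SecondCountableTopology Y]
    [MeasurableSpace Y] [BorelSpace Y]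
    (μ μ' : Measure X) (ν ν' : Measure Y)
    [IsProbabilityMeasure μ] [IsProbabilityMeasure μ']
    [IsProbabilityMeasure ν] [IsProbabilityMeasure ν']
    (π : Measure (X × Y)) [IsProbabilityMeasure π]
    (hπ : π.map Prod.fst = μ ∧ π.map Prod.snd = ν)
    (ε δ : ℝ) (hε : 0 < ε) (hδ : 0 < δ)
    (v₁ : Measure (X × X)) [IsProbabilityMeasure v₁]
    (hv₁ : v₁.map Prod.fst = μ' ∧ v₁.map Prod.snd = μ)
    (hv₁close : v₁ {p : X × X | ε ≤ dist p.1 p.2} ≤ ENNReal.ofReal ε)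
    (v₂ : Measure (Y × Y)) [IsProbabilityMeasure v₂]
    (hv₂ : v₂.map Prod.fst = ν ∧ v₂.map Prod.snd = ν')
    (hv₂close : v₂ {p : Y × Y | δ ≤ dist p.1 p.2} ≤ ENNReal.ofReal δ) :
    ∃ π' : Measure (X × Y), IsProbabilityMeasure π' ∧
      π'.map Prod.fst = μ' ∧ π'.map Prod.snd = ν' ∧
      prokhorovDist π' π ≤ ε + δ := by
  -- nonemptiness
  have hX : Nonempty X := by
    by_contra h
    have h1 := measure_univ (μ := μ)
    rw [Set.univ_eq_empty_iff.2 (not_nonempty_iff.1 h), measure_empty] at h1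
    simp at h1
  have hY : Nonempty Y := by
    by_contra h
    have h1 := measure_univ (μ := ν)
    rw [Set.univ_eq_empty_iff.2 (not_nonempty_iff.1 h), measure_empty] at h1
    simp at h1
  -- conditional kernels
  set κ : Kernel X X := (v₁.map Prod.swap).condKernel with hκdef
  set K : Kernel X Y := π.condKernel with hKdef
  set L : Kernel Y Y := v₂.condKernel with hLdef
  have hswapfst : (v₁.map Prod.swap).fst = μ := by
    show (v₁.map Prod.swap).map Prod.fst = μ
    rw [Measure.map_map measurable_fst measurable_swap]
    exact hv₁.2
  have hd1 : μ ⊗ₘ κ = v₁.map Prod.swap := by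
    rw [← hswapfst]; exact Measure.disintegrate _ _
  have hd2 : μ ⊗ₘ K = π := by
    have := Measure.disintegrate π π.condKernel
    rwa [show π.fst = μ from hπ.1] at this
  have hd3 : ν ⊗ₘ L = v₂ := by
    have := Measure.disintegrate v₂ v₂.condKernel
    rwa [show v₂.fst = ν from hv₂.1] at this
  set η : Kernel X (Y × Y) := K ⊗ₖ (Kernel.prodMkLeft X L) with hηdef
  set ξ : Kernel X (X × (Y × Y)) := κ ×ₖ η with hξdef
  set ρ : Measure (X × (X × (Y × Y))) := μ ⊗ₘ ξ with hρdef
  have hρ_apply : ∀ {S : Set (X × (X × (Y × Y)))}, MeasurableSet S →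
      ρ S = ∫⁻ x, ((κ x).prod (η x)) (Prod.mk x ⁻¹' S) ∂μ := by
    intro S hS
    rw [hρdef, Measure.compProd_apply hS]
    refine lintegral_congr fun x => ?_
    rw [hξdef, Kernel.prod_apply]
  have hη_apply : ∀ (x : X) {t : Set (Y × Y)}, MeasurableSet t →
      η x t = ∫⁻ y, L y {c | (y, c) ∈ t} ∂(K x) := by
    intro x t ht
    rw [hηdef, Kernel.compProd_apply ht]
    refine lintegral_congr fun y => ?_
    rw [Kernel.prodMkLeft_apply]; rfl
  -- transfer lemma
  have htrans : ∀ {g : Y → ℝ≥0∞}, Measurable g →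
      ∫⁻ x, ∫⁻ y, g y ∂(K x) ∂μ = ∫⁻ y, g y ∂ν := by
    intro g hg
    have h1 : ∫⁻ p, g p.2 ∂π = ∫⁻ x, ∫⁻ y, g y ∂(K x) ∂μ := by
      rw [← hd2]; exact Measure.lintegral_compProd (hg.comp measurable_snd)
    rw [← hπ.2, lintegral_map hg measurable_snd]
    exact h1.symm
  -- the measure and the coupling
  set f : X × (X × (Y × Y)) → X × Y := fun p => (p.2.1, p.2.2.2) with hfdef
  have hf : Measurable f :=
    (measurable_fst.comp measurable_snd).prodMk
      (measurable_snd.comp (measurable_snd.comp measurable_snd))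
  refine ⟨ρ.map f, Measure.isProbabilityMeasure_map hf.aemeasurable, ?_, ?_, ?_⟩
  · -- first marginal
    rw [Measure.map_map measurable_fst hf]
    have hμ' : μ' = (μ ⊗ₘ κ).map Prod.snd := by
      rw [hd1, Measure.map_map measurable_snd measurable_swap]
      exact hv₁.1.symm
    rw [hμ']
    ext s hs
    rw [Measure.map_apply (measurable_fst.comp hf) hs,
      Measure.map_apply measurable_snd hs, hρ_apply ((measurable_fst.comp hf) hs),
      Measure.compProd_apply (measurable_snd hs)]
    refine lintegral_congr fun x => ?_
    have h1 : (Prod.mk x ⁻¹' ((Prod.fst ∘ f) ⁻¹' s)) = s ×ˢ (Set.univ : Set (Y × Y)) := by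
      ext q; simp [hfdef]
    rw [h1, Measure.prod_prod, measure_univ, mul_one]
    rfl
  · -- second marginal
    rw [Measure.map_map measurable_snd hf]
    have hν' : ν' = (ν ⊗ₘ L).map Prod.snd := by
      rw [hd3]; exact hv₂.2.symm
    rw [hν']
    ext s hs
    rw [Measure.map_apply (measurable_snd.comp hf) hs, Measure.map_apply measurable_snd hs,
      hρ_apply ((measurable_snd.comp hf) hs), Measure.compProd_apply (measurable_snd hs)]
    have hstep : ∀ x : X, ((κ x).prod (η x)) (Prod.mk x ⁻¹' ((Prod.snd ∘ f) ⁻¹' s))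
        = ∫⁻ y, L y s ∂(K x) := by
      intro x
      have h1 : (Prod.mk x ⁻¹' ((Prod.snd ∘ f) ⁻¹' s))
          = (Set.univ : Set X) ×ˢ (Prod.snd ⁻¹' s : Set (Y × Y)) := by ext q; simp [hfdef]
      rw [h1, Measure.prod_prod, measure_univ, one_mul,
        hη_apply x (measurable_snd hs)]
      simp
    calc ∫⁻ x, ((κ x).prod (η x)) (Prod.mk x ⁻¹' ((Prod.snd ∘ f) ⁻¹' s)) ∂μ
        = ∫⁻ x, ∫⁻ y, L y s ∂(K x) ∂μ := lintegral_congr hstep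
      _ = ∫⁻ y, L y s ∂ν := htrans (Kernel.measurable_coe L hs)
      _ = ∫⁻ y, L y (Prod.mk y ⁻¹' (Prod.snd ⁻¹' s)) ∂ν := by
            refine lintegral_congr fun y => ?_; rfl
  · -- Prokhorov distance
    have hD1m : MeasurableSet {p : X × X | ε ≤ dist p.1 p.2} :=
      measurableSet_le measurable_const (measurable_fst.dist measurable_snd)
    have hD2m : MeasurableSet {p : Y × Y | δ ≤ dist p.1 p.2} :=
      measurableSet_le measurable_const (measurable_fst.dist measurable_snd)
    have hT : ∀ A : Set (X × Y), MeasurableSet A →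
        (ρ.map f) A ≤ π (Metric.thickening (ε + δ) A) + ENNReal.ofReal (ε + δ) := by
      intro A hA
      set T := Metric.thickening (ε + δ) A with hTdef
      have hTm : MeasurableSet T := Metric.isOpen_thickening.measurableSet
      set G : Set (X × (X × (Y × Y))) := {p | (p.1, p.2.2.1) ∈ T} with hGdef
      set B₁ : Set (X × (X × (Y × Y))) := {p | ε ≤ dist p.1 p.2.1} with hB1def
      set B₂ : Set (X × (X × (Y × Y))) := {p | δ ≤ dist p.2.2.1 p.2.2.2} with hB2def
      have hGm : MeasurableSet G :=
        (measurable_fst.prodMk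
          (measurable_fst.comp (measurable_snd.comp measurable_snd))) hTm
      have hB1m : MeasurableSet B₁ :=
        measurableSet_le measurable_const
          (measurable_fst.dist (measurable_fst.comp measurable_snd))
      have hB2m : MeasurableSet B₂ :=
        measurableSet_le measurable_const
          ((measurable_fst.comp (measurable_snd.comp measurable_snd)).dist
            (measurable_snd.comp (measurable_snd.comp measurable_snd)))
      have hsub : f ⁻¹' A ⊆ G ∪ (B₁ ∪ B₂) := by
        intro p hp
        by_cases h1 : ε ≤ dist p.1 p.2.1
        · exact Or.inr (Or.inl h1)
        by_cases h2 : δ ≤ dist p.2.2.1 p.2.2.2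
        · exact Or.inr (Or.inr h2)
        refine Or.inl ?_
        refine Metric.mem_thickening_iff.2 ⟨(p.2.1, p.2.2.2), hp, ?_⟩
        rw [Prod.dist_eq]
        exact max_lt ((not_le.1 h1).trans_le (le_add_of_nonneg_right hδ.le))
          ((not_le.1 h2).trans_le (le_add_of_nonneg_left hε.le))
      have hρG : ρ G = π T := by
        rw [hρ_apply hGm, ← hd2, Measure.compProd_apply hTm]
        refine lintegral_congr fun x => ?_
        have h1 : Prod.mk x ⁻¹' G
            = (Set.univ : Set X) ×ˢ ((fun r : Y × Y => (x, r.1)) ⁻¹' T) := by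
          ext q; simp [hGdef]
        rw [h1, Measure.prod_prod, measure_univ, one_mul,
          hη_apply x (t := (fun r : Y × Y => (x, r.1)) ⁻¹' T)
            ((measurable_const.prodMk measurable_fst) hTm)]
        have h2 : ∀ y : Y, L y {c : Y | (x, y) ∈ T}
            = (Prod.mk x ⁻¹' T).indicator (fun _ => (1 : ℝ≥0∞)) y := by
          intro y
          by_cases hxy : (x, y) ∈ T
          · simp [hxy, Set.indicator]
          · simp [hxy, Set.indicator]
        calc ∫⁻ y, L y {c : Y | (x, y) ∈ T} ∂(K x)
            = ∫⁻ y, (Prod.mk x ⁻¹' T).indicator (fun _ => (1 : ℝ≥0∞)) y ∂(K x) :=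
              lintegral_congr h2
          _ = K x (Prod.mk x ⁻¹' T) := by
              rw [lintegral_indicator (measurable_prodMk_left hTm), setLIntegral_one]
      have hρB₁ : ρ B₁ ≤ ENNReal.ofReal ε := by
        have h0 : ρ B₁ = (μ ⊗ₘ κ) {p : X × X | ε ≤ dist p.1 p.2} := by
          rw [hρ_apply hB1m, Measure.compProd_apply hD1m]
          refine lintegral_congr fun x => ?_
          have h1 : Prod.mk x ⁻¹' B₁
              = {x' : X | ε ≤ dist x x'} ×ˢ (Set.univ : Set (Y × Y)) := by
            ext q; simp [hB1def]
          rw [h1, Measure.prod_prod, measure_univ, mul_one]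
          rfl
        rw [h0, hd1, Measure.map_apply measurable_swap hD1m]
        have h1 : Prod.swap ⁻¹' {p : X × X | ε ≤ dist p.1 p.2}
            = {p : X × X | ε ≤ dist p.1 p.2} := by
          ext q; simp [dist_comm]
        rw [h1]; exact hv₁close
      have hρB₂ : ρ B₂ ≤ ENNReal.ofReal δ := by
        have h0 : ρ B₂ = (ν ⊗ₘ L) {p : Y × Y | δ ≤ dist p.1 p.2} := by
          rw [hρ_apply hB2m, Measure.compProd_apply hD2m]
          have hstep : ∀ x : X, ((κ x).prod (η x)) (Prod.mk x ⁻¹' B₂)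
              = ∫⁻ y, L y {y' : Y | δ ≤ dist y y'} ∂(K x) := by
            intro x
            have h1 : Prod.mk x ⁻¹' B₂
                = (Set.univ : Set X) ×ˢ {r : Y × Y | δ ≤ dist r.1 r.2} := by
              ext q; simp [hB2def]
            rw [h1, Measure.prod_prod, measure_univ, one_mul, hη_apply x hD2m]
            rfl
          have hgm : Measurable fun y : Y => L y {y' : Y | δ ≤ dist y y'} :=
            Kernel.measurable_kernel_prodMk_left hD2m
          rw [lintegral_congr hstep, htrans hgm]
          exact lintegral_congr fun y => rfl
        rw [h0, hd3]; exact hv₂close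
      calc (ρ.map f) A = ρ (f ⁻¹' A) := Measure.map_apply hf hA
        _ ≤ ρ (G ∪ (B₁ ∪ B₂)) := measure_mono hsub
        _ ≤ ρ G + ρ (B₁ ∪ B₂) := measure_union_le _ _
        _ ≤ ρ G + (ρ B₁ + ρ B₂) := add_le_add le_rfl (measure_union_le _ _)
        _ ≤ π T + (ENNReal.ofReal ε + ENNReal.ofReal δ) := by
            rw [hρG]; exact add_le_add le_rfl (add_le_add hρB₁ hρB₂)
        _ = π T + ENNReal.ofReal (ε + δ) := by rw [ENNReal.ofReal_add hε.le hδ.le]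
    rw [prokhorovDist]
    refine csInf_le ⟨0, fun x hx => hx.1.le⟩ ⟨by positivity, hT⟩
end

section
/- (Lower hemicontinuity of the coupling correspondence) Let X, Y be Polish spaces, μₙ → μ weakly in P(X), νₙ → ν weakly in P(Y), and π ∈ Π(μ,ν). Then there exist πₙ ∈ Π(μₙ,νₙ) with πₙ → π weakly in P(X × Y). -/
open MeasureTheory Filter


open MeasureTheory Filter Set Metric Topology
open scoped ENNReal NNReal

lemma frontier_union_subset' {α : Type*} [TopologicalSpace α] (s t : Set α) :
    frontier (s ∪ t) ⊆ frontier s ∪ frontier t :=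
  (frontier_union_subset s t).trans
    (Set.union_subset_union Set.inter_subset_left Set.inter_subset_right)

-- frontier of finite unions
lemma frontier_biUnion_finset_subset {α : Type*} [TopologicalSpace α] {ι : Type*}
    (s : Finset ι) (A : ι → Set α) :
    frontier (⋃ i ∈ s, A i) ⊆ ⋃ i ∈ s, frontier (A i) := by
  classical
  induction s using Finset.induction with
  | empty => simp
  | insert _ _ _ ih =>
    rename_i a t ha
    simp only [Finset.mem_insert, Set.iUnion_iUnion_eq_or_left]
    exact (frontier_union_subset' _ _).trans (Set.union_subset_union le_rfl ih)

lemma frontier_diff_subset' {α : Type*} [TopologicalSpace α] (s t : Set α) :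
    frontier (s \ t) ⊆ frontier s ∪ frontier t := by
  rw [Set.diff_eq]
  refine (frontier_inter_subset s tᶜ).trans ?_
  rw [frontier_compl]
  exact Set.union_subset_union Set.inter_subset_left Set.inter_subset_right

lemma null_frontier_partition {X : Type*} [MetricSpace X] [SecondCountableTopology X]
    [MeasurableSpace X] [OpensMeasurableSpace X]
    (μ : Measure X) [IsFiniteMeasure μ] {δ : ℝ} (hδ : 0 < δ) :
    ∃ B : ℕ → Set X, (∀ i, MeasurableSet (B i)) ∧ Pairwise (Function.onFun Disjoint B) ∧
      (⋃ i, B i) = Set.univ ∧ (∀ i, EMetric.diam (B i) ≤ ENNReal.ofReal δ) ∧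
      (∀ i, μ (frontier (B i)) = 0) := by
  classical
  cases isEmpty_or_nonempty X with
  | inl h =>
    refine ⟨fun _ => ∅, by simp, by simp [Pairwise, Function.onFun], ?_, by simp [EMetric.diam], by simp⟩
    simp [Set.univ_eq_empty_iff.mpr h]
  | inr h =>
    have : TopologicalSpace.SeparableSpace X := inferInstance
    obtain ⟨x, hx⟩ : ∃ x : ℕ → X, DenseRange x := ⟨TopologicalSpace.denseSeq X,
      TopologicalSpace.denseRange_denseSeq X⟩
    have key : ∀ i : ℕ, ∃ r ∈ Set.Ioo (δ/4) (δ/2),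
        μ (frontier (Metric.ball (x i) r)) = 0 := by
      intro i
      obtain ⟨r, hr, hr0⟩ := exists_null_frontier_thickening μ {x i}
        (show δ/4 < δ/2 by linarith)
      exact ⟨r, hr, by rwa [Metric.thickening_singleton] at hr0⟩
    choose r hr hr0 using key
    set A : ℕ → Set X := fun i => Metric.ball (x i) (r i) with hA
    refine ⟨disjointed A, fun i => MeasurableSet.disjointed
      (fun j => measurableSet_ball) i, disjoint_disjointed A, ?_, ?_, ?_⟩
    · rw [iUnion_disjointed]
      apply Set.eq_univ_of_forall
      intro p
      obtain ⟨i, hi⟩ := Metric.denseRange_iff.mp hx p (δ/4) (by linarith)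
      exact Set.mem_iUnion.mpr ⟨i, by
        simp only [hA, Metric.mem_ball]
        calc dist p (x i) < δ/4 := hi
        _ < r i := (hr i).1⟩
    · intro i
      apply EMetric.diam_le
      intro p hp q hq
      have hp' := disjointed_subset A i hp
      have hq' := disjointed_subset A i hq
      rw [edist_dist]
      apply ENNReal.ofReal_le_ofReal
      have h1 : dist p (x i) < δ/2 := lt_trans (Metric.mem_ball.mp hp') (hr i).2
      have h2 : dist q (x i) < δ/2 := lt_trans (Metric.mem_ball.mp hq') (hr i).2
      calc dist p q ≤ dist p (x i) + dist q (x i) := dist_triangle_right _ _ _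
        _ ≤ δ := by linarith
    · intro i
      rw [disjointed_eq_inter_compl]
      have hsub : frontier (A i ∩ ⋂ j < i, (A j)ᶜ) ⊆
          frontier (A i) ∪ ⋃ j ∈ Finset.range i, frontier (A j) := by
        refine (frontier_inter_subset _ _).trans ?_
        refine (Set.union_subset_union Set.inter_subset_left Set.inter_subset_right).trans ?_
        apply Set.union_subset_union le_rfl
        have : (⋂ j < i, (A j)ᶜ) = (⋃ j ∈ Finset.range i, A j)ᶜ := by
          simp [Set.compl_iUnion]
        rw [this, frontier_compl]
        exact frontier_biUnion_finset_subset _ _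
      refine measure_mono_null hsub ?_
      rw [measure_union_null_iff]
      refine ⟨hr0 i, ?_⟩
      exact (measure_biUnion_null_iff (Finset.range i).countable_toSet).mpr
        fun j _ => hr0 j


section EV
variable {X Y : Type*} [MetricSpace X] [SecondCountableTopology X]
    [MeasurableSpace X] [BorelSpace X]
    [MetricSpace Y] [SecondCountableTopology Y]
    [MeasurableSpace Y] [BorelSpace Y]

-- tail bound : pick a finite part of the partition carrying almost all mass
lemma exists_tail_small (μ : Measure X) [IsProbabilityMeasure μ] (B : ℕ → Set X)
    (hBm : ∀ i, MeasurableSet (B i)) (hBu : (⋃ i, B i) = Set.univ)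
    {c : ℝ≥0∞} (hc : 0 < c) :
    ∃ N, μ ((⋃ i ∈ Finset.range N, B i)ᶜ) ≤ c := by
  have hmono : Monotone (fun N => ⋃ i ∈ Finset.range N, B i) := by
    intro N N' hNN'
    exact Set.biUnion_subset_biUnion_left (Finset.range_subset_range.mpr hNN')
  have hcup : (⋃ N, ⋃ i ∈ Finset.range N, B i) = Set.univ := by
    rw [← hBu]
    apply Set.Subset.antisymm
    · exact Set.iUnion_subset fun N => Set.iUnion₂_subset fun i _ => Set.subset_iUnion B i
    · intro x hx
      obtain ⟨i, hi⟩ := Set.mem_iUnion.mp hx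
      exact Set.mem_iUnion.mpr ⟨i + 1, Set.mem_biUnion (Finset.self_mem_range_succ i) hi⟩
  have hl : Tendsto (fun N => μ (⋃ i ∈ Finset.range N, B i)) atTop (𝓝 1) := by
    have := tendsto_measure_iUnion_atTop (μ := μ) hmono
    rwa [hcup, measure_univ] at this
  have hlt : (1 : ℝ≥0∞) - c < 1 := ENNReal.sub_lt_self ENNReal.one_ne_top one_ne_zero hc.ne'
  obtain ⟨N, hN⟩ := (hl.eventually (isOpen_Ioi.mem_nhds hlt)).exists
  refine ⟨N, ?_⟩
  have hmeas : MeasurableSet (⋃ i ∈ Finset.range N, B i) :=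
    MeasurableSet.biUnion (Finset.range N).countable_toSet fun i _ => hBm i
  rw [measure_compl hmeas (measure_ne_top μ _), measure_univ]
  rw [tsub_le_iff_right]
  calc (1:ℝ≥0∞) ≤ (1 - c) + c := le_tsub_add
    _ ≤ c + μ (⋃ i ∈ Finset.range N, B i) := by
        rw [add_comm]
        exact add_le_add_right (le_of_lt hN) c
end EV

lemma diam_prod_le {X Y : Type*} [PseudoEMetricSpace X] [PseudoEMetricSpace Y]
    (s : Set X) (t : Set Y) :
    EMetric.diam (s ×ˢ t) ≤ max (EMetric.diam s) (EMetric.diam t) := by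
  apply EMetric.diam_le
  rintro ⟨a, b⟩ ⟨ha, hb⟩ ⟨a', b'⟩ ⟨ha', hb'⟩
  rw [Prod.edist_eq]
  exact max_le_max (EMetric.edist_le_diam_of_mem ha ha') (EMetric.edist_le_diam_of_mem hb hb')

lemma disjoint_prod_left {X Y : Type*} {s s' : Set X} (t t' : Set Y) (h : Disjoint s s') :
    Disjoint (s ×ˢ t) (s' ×ˢ t') := by
  rw [Set.disjoint_left]
  rintro ⟨a, b⟩ ⟨ha, _⟩ ⟨ha', _⟩
  exact Set.disjoint_left.mp h ha ha'

lemma disjoint_prod_right {X Y : Type*} (s s' : Set X) {t t' : Set Y} (h : Disjoint t t') :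
    Disjoint (s ×ˢ t) (s' ×ˢ t') := by
  rw [Set.disjoint_left]
  rintro ⟨a, b⟩ ⟨_, hb⟩ ⟨_, hb'⟩
  exact Set.disjoint_left.mp h hb hb'

section EV2
variable {X : Type*} [MetricSpace X] [SecondCountableTopology X]
    [MeasurableSpace X] [BorelSpace X]

lemma exists_fin_partition (μ : Measure X) [IsProbabilityMeasure μ] {δ : ℝ} (hδ : 0 < δ)
    {c : ℝ≥0∞} (hc : 0 < c) :
    ∃ (N : ℕ) (B : (Sum (Fin N) Unit) → Set X),
      (∀ i, MeasurableSet (B i)) ∧ Pairwise (Function.onFun Disjoint B) ∧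
      (⋃ i, B i) = Set.univ ∧
      (∀ i : Fin N, EMetric.diam (B (Sum.inl i)) ≤ ENNReal.ofReal δ) ∧
      (∀ i, μ (frontier (B i)) = 0) ∧ μ (B (Sum.inr ())) ≤ c := by
  obtain ⟨B0, hB0m, hB0d, hB0u, hB0diam, hB0f⟩ := null_frontier_partition μ hδ
  obtain ⟨N, hN⟩ := exists_tail_small μ B0 hB0m hB0u hc
  set T : Set X := (⋃ i ∈ Finset.range N, B0 i)ᶜ with hTdef
  refine ⟨N, Sum.elim (fun i => B0 i) (fun _ => T), ?_, ?_, ?_, ?_, ?_, hN⟩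
  · rintro (i | u)
    · exact hB0m i
    · exact (MeasurableSet.biUnion (Finset.range N).countable_toSet
        fun i _ => hB0m i).compl
  · rintro (i | u) (i' | u') hne
    · exact hB0d (fun h => hne (congrArg Sum.inl (Fin.val_injective h)))
    · simp only [Function.onFun, Sum.elim_inl, Sum.elim_inr]
      have hsub : B0 (i : ℕ) ⊆ ⋃ j ∈ Finset.range N, B0 j :=
        Set.subset_biUnion_of_mem (Finset.mem_range.mpr i.isLt)
      exact Set.disjoint_left.mpr fun x hx hxT => hxT (hsub hx)
    · simp only [Function.onFun, Sum.elim_inl, Sum.elim_inr]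
      have hsub : B0 (i' : ℕ) ⊆ ⋃ j ∈ Finset.range N, B0 j :=
        Set.subset_biUnion_of_mem (Finset.mem_range.mpr i'.isLt)
      exact Set.disjoint_right.mpr fun x hx hxT => hxT (hsub hx)
    · exact absurd (by cases u; cases u'; rfl) hne
  · apply Set.eq_univ_of_forall
    intro x
    by_cases hx : x ∈ ⋃ i ∈ Finset.range N, B0 i
    · obtain ⟨i, hi, hxi⟩ := Set.mem_iUnion₂.mp hx
      exact Set.mem_iUnion.mpr ⟨Sum.inl ⟨i, Finset.mem_range.mp hi⟩, hxi⟩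
    · exact Set.mem_iUnion.mpr ⟨Sum.inr (), hx⟩
  · exact fun i => hB0diam (i : ℕ)
  · rintro (i | u)
    · exact hB0f i
    · simp only [Sum.elim_inr]
      rw [hTdef, frontier_compl]
      refine measure_mono_null (frontier_biUnion_finset_subset _ _) ?_
      exact (measure_biUnion_null_iff (Finset.range N).countable_toSet).mpr fun i _ => hB0f i
end EV2


lemma matrix_adjust {I J : Type*} [Fintype I] [Fintype J]
    (p : I → J → ℝ) (q q' : I → ℝ) (r r' : J → ℝ)
    (hp : ∀ i j, 0 ≤ p i j)
    (hq'0 : ∀ i, 0 ≤ q' i) (hr'0 : ∀ j, 0 ≤ r' j)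
    (hrow : ∀ i, ∑ j, p i j = q i) (hcol : ∀ j, ∑ i, p i j = r j)
    (hq'sum : ∑ i, q' i = 1) (hr'sum : ∑ j, r' j = 1) (hqsum : ∑ i, q i = 1) :
    ∃ p' : I → J → ℝ, (∀ i j, 0 ≤ p' i j) ∧ (∀ i, ∑ j, p' i j = q' i) ∧
      (∀ j, ∑ i, p' i j = r' j) ∧
      ∑ i, ∑ j, |p' i j - p i j| ≤ 4 * ∑ i, |q' i - q i| + 2 * ∑ j, |r' j - r j| := by
  classical
  have hq0 : ∀ i, 0 ≤ q i := fun i => (hrow i) ▸ Finset.sum_nonneg fun j _ => hp i j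
  have hr0 : ∀ j, 0 ≤ r j := fun j => (hcol j) ▸ Finset.sum_nonneg fun i _ => hp i j
  -- step 1 : scale rows down to min (q i) (q' i)
  set p1 : I → J → ℝ := fun i j => if q i = 0 then 0 else p i j * (min (q i) (q' i) / q i)
    with hp1def
  have hp1nn : ∀ i j, 0 ≤ p1 i j := by
    intro i j
    simp only [hp1def]
    split_ifs with h
    · exact le_rfl
    · exact mul_nonneg (hp i j) (div_nonneg (le_min (hq0 i) (hq'0 i)) (hq0 i))
  have hp1le : ∀ i j, p1 i j ≤ p i j := by
    intro i j
    simp only [hp1def]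
    split_ifs with h
    · exact hp i j
    · nlinarith [hp i j, div_le_one_of_le₀ (min_le_left (q i) (q' i)) (hq0 i)]
  have hrow1 : ∀ i, ∑ j, p1 i j = min (q i) (q' i) := by
    intro i
    by_cases h : q i = 0
    · simp only [hp1def, if_pos h, Finset.sum_const_zero, h]
      rw [min_eq_left (hq'0 i)]
    · simp only [hp1def, if_neg h]
      rw [← Finset.sum_mul, hrow i]
      field_simp
  -- column sums of p1
  set r1 : J → ℝ := fun j => ∑ i, p1 i j with hr1def
  have hr1nn : ∀ j, 0 ≤ r1 j := fun j => Finset.sum_nonneg fun i _ => hp1nn i j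
  have hr1le : ∀ j, r1 j ≤ r j := by
    intro j
    rw [hr1def, ← hcol j]
    exact Finset.sum_le_sum fun i _ => hp1le i j
  -- step 2 : scale columns down to min (r1 j) (r' j)
  set p2 : I → J → ℝ := fun i j => if r1 j = 0 then 0 else p1 i j * (min (r1 j) (r' j) / r1 j)
    with hp2def
  have hp2nn : ∀ i j, 0 ≤ p2 i j := by
    intro i j
    simp only [hp2def]
    split_ifs with h
    · exact le_rfl
    · exact mul_nonneg (hp1nn i j) (div_nonneg (le_min (hr1nn j) (hr'0 j)) (hr1nn j))
  have hp2le : ∀ i j, p2 i j ≤ p1 i j := by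
    intro i j
    simp only [hp2def]
    split_ifs with h
    · exact hp1nn i j
    · nlinarith [hp1nn i j, div_le_one_of_le₀ (min_le_left (r1 j) (r' j)) (hr1nn j)]
  have hcol2 : ∀ j, ∑ i, p2 i j = min (r1 j) (r' j) := by
    intro j
    by_cases h : r1 j = 0
    · simp only [hp2def, if_pos h, Finset.sum_const_zero, h]
      rw [min_eq_left (hr'0 j)]
    · simp only [hp2def, if_neg h]
      rw [← Finset.sum_mul]
      have hr1j : (∑ i, p1 i j) = r1 j := rfl
      rw [hr1j]
      field_simp
  have hrow2le : ∀ i, ∑ j, p2 i j ≤ q' i := by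
    intro i
    calc ∑ j, p2 i j ≤ ∑ j, p1 i j := Finset.sum_le_sum fun j _ => hp2le i j
      _ = min (q i) (q' i) := hrow1 i
      _ ≤ q' i := min_le_right _ _
  -- deficits
  set a : I → ℝ := fun i => q' i - ∑ j, p2 i j with hadef
  set b : J → ℝ := fun j => r' j - min (r1 j) (r' j) with hbdef
  have hann : ∀ i, 0 ≤ a i := fun i => sub_nonneg.mpr (hrow2le i)
  have hbnn : ∀ j, 0 ≤ b j := fun j => sub_nonneg.mpr (min_le_right _ _)
  set s : ℝ := ∑ i, a i with hsdef
  have hsnn : 0 ≤ s := Finset.sum_nonneg fun i _ => hann i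
  have hTa : s = 1 - ∑ i, ∑ j, p2 i j := by
    rw [hsdef, ← hq'sum, ← Finset.sum_sub_distrib]
  have hswap2 : ∑ i, ∑ j, p2 i j = ∑ j, min (r1 j) (r' j) := by
    rw [Finset.sum_comm]
    exact Finset.sum_congr rfl fun j _ => hcol2 j
  have hTb : ∑ j, b j = 1 - ∑ i, ∑ j, p2 i j := by
    have h1 : ∑ j, b j = ∑ j, r' j - ∑ j, min (r1 j) (r' j) := by
      rw [← Finset.sum_sub_distrib]
    rw [h1, hr'sum, hswap2]
  have hbs : ∑ j, b j = s := by rw [hTb, hTa]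
  -- final matrix
  set p' : I → J → ℝ := fun i j => p2 i j + (if s = 0 then 0 else a i * b j / s) with hp'def
  have hp'nn : ∀ i j, 0 ≤ p' i j := by
    intro i j
    apply add_nonneg (hp2nn i j)
    split_ifs with h
    · exact le_rfl
    · exact div_nonneg (mul_nonneg (hann i) (hbnn j)) hsnn
  have hs0a : s = 0 → ∀ i, a i = 0 := by
    intro h i
    exact (Finset.sum_eq_zero_iff_of_nonneg (fun i _ => hann i)).mp (hsdef ▸ h) i
      (Finset.mem_univ i)
  have hs0b : s = 0 → ∀ j, b j = 0 := by
    intro h j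
    have h2 : ∑ j, b j = 0 := by rw [hbs, h]
    exact (Finset.sum_eq_zero_iff_of_nonneg (fun j _ => hbnn j)).mp h2 j (Finset.mem_univ j)
  have hrow' : ∀ i, ∑ j, p' i j = q' i := by
    intro i
    simp only [hp'def]
    rw [Finset.sum_add_distrib]
    by_cases h : s = 0
    · simp only [if_pos h, Finset.sum_const_zero, add_zero]
      have h2 : q' i - ∑ j, p2 i j = 0 := hs0a h i
      linarith
    · simp only [if_neg h]
      have h3 : ∑ j, a i * b j / s = (a i * ∑ j, b j) / s := by
        rw [Finset.mul_sum, Finset.sum_div]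
      rw [h3, hbs, mul_div_assoc, div_self h, mul_one]
      have h4 : a i = q' i - ∑ j, p2 i j := rfl
      linarith
  have hcol' : ∀ j, ∑ i, p' i j = r' j := by
    intro j
    simp only [hp'def]
    rw [Finset.sum_add_distrib, hcol2 j]
    by_cases h : s = 0
    · simp only [if_pos h, Finset.sum_const_zero, add_zero]
      have h2 : r' j - min (r1 j) (r' j) = 0 := hs0b h j
      linarith
    · simp only [if_neg h]
      have h3 : ∑ i, a i * b j / s = ((∑ i, a i) * b j) / s := by
        rw [Finset.sum_mul, Finset.sum_div]
      rw [h3, ← hsdef, mul_comm, mul_div_assoc, div_self h, mul_one]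
      have h4 : b j = r' j - min (r1 j) (r' j) := rfl
      linarith
  refine ⟨p', hp'nn, hrow', hcol', ?_⟩
  -- the L¹ bound
  have E1 : ∑ i, ∑ j, (p i j - p1 i j) ≤ ∑ i, |q' i - q i| := by
    apply Finset.sum_le_sum
    intro i _
    rw [Finset.sum_sub_distrib, hrow i, hrow1 i, abs_sub_comm]
    cases le_total (q i) (q' i) with
    | inl h => rw [min_eq_left h]; simp [abs_nonneg]
    | inr h => rw [min_eq_right h, abs_of_nonneg (sub_nonneg.mpr h)]
  have hcolswap : ∑ j, (r j - r1 j) = ∑ i, ∑ j, (p i j - p1 i j) := by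
    have h1 : ∑ j, (r j - r1 j) = ∑ j, ∑ i, (p i j - p1 i j) := by
      apply Finset.sum_congr rfl
      intro j _
      rw [Finset.sum_sub_distrib, hcol j]
    rw [h1, Finset.sum_comm]
  have E2 : ∑ j, (r1 j - min (r1 j) (r' j)) ≤ ∑ i, |q' i - q i| + ∑ j, |r' j - r j| := by
    have step : ∀ j, r1 j - min (r1 j) (r' j) ≤ (r j - r1 j) + |r' j - r j| := by
      intro j
      cases le_total (r1 j) (r' j) with
      | inl h =>
        rw [min_eq_left h]
        have := hr1le j
        have := abs_nonneg (r' j - r j)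
        linarith
      | inr h =>
        rw [min_eq_right h]
        have h2 : r j - r' j ≤ |r' j - r j| := by rw [abs_sub_comm]; exact le_abs_self _
        linarith [hr1le j]
    calc ∑ j, (r1 j - min (r1 j) (r' j)) ≤ ∑ j, ((r j - r1 j) + |r' j - r j|) :=
          Finset.sum_le_sum fun j _ => step j
      _ = ∑ j, (r j - r1 j) + ∑ j, |r' j - r j| := Finset.sum_add_distrib
      _ ≤ ∑ i, |q' i - q i| + ∑ j, |r' j - r j| := by
          rw [hcolswap]; linarith [E1]
  have D1 : ∑ i, ∑ j, |p1 i j - p i j| = ∑ i, ∑ j, (p i j - p1 i j) := by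
    apply Finset.sum_congr rfl; intro i _; apply Finset.sum_congr rfl; intro j _
    rw [abs_sub_comm, abs_of_nonneg (sub_nonneg.mpr (hp1le i j))]
  have D2' : ∑ i, ∑ j, (p1 i j - p2 i j) = ∑ j, (r1 j - min (r1 j) (r' j)) := by
    rw [Finset.sum_comm]
    apply Finset.sum_congr rfl
    intro j _
    rw [Finset.sum_sub_distrib, hcol2 j]
  have D2 : ∑ i, ∑ j, |p2 i j - p1 i j| = ∑ j, (r1 j - min (r1 j) (r' j)) := by
    rw [← D2']
    apply Finset.sum_congr rfl; intro i _; apply Finset.sum_congr rfl; intro j _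
    rw [abs_sub_comm, abs_of_nonneg (sub_nonneg.mpr (hp2le i j))]
  have D3 : ∑ i, ∑ j, |p' i j - p2 i j| = s := by
    by_cases h : s = 0
    · simp only [hp'def, if_pos h, add_zero, sub_self, abs_zero, Finset.sum_const_zero]
      exact h.symm
    · have habs : ∀ i j, |p' i j - p2 i j| = a i * b j / s := by
        intro i j
        simp only [hp'def, if_neg h, add_sub_cancel_left]
        exact abs_of_nonneg (div_nonneg (mul_nonneg (hann i) (hbnn j)) hsnn)
      calc ∑ i, ∑ j, |p' i j - p2 i j| = ∑ i, ∑ j, a i * b j / s := by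
            apply Finset.sum_congr rfl; intro i _; apply Finset.sum_congr rfl
            intro j _; exact habs i j
        _ = ∑ i, (a i * ∑ j, b j) / s := by
            apply Finset.sum_congr rfl; intro i _
            rw [Finset.mul_sum, Finset.sum_div]
        _ = s := by
            rw [hbs]
            have : ∀ i ∈ Finset.univ (α := I), (a i * s) / s = a i := by
              intro i _; field_simp
            rw [Finset.sum_congr rfl this]
  have Ds : s ≤ 2 * ∑ i, |q' i - q i| + ∑ j, |r' j - r j| := by
    have hsum_p : ∑ i, ∑ j, p i j = 1 := by
      rw [← hqsum]; exact Finset.sum_congr rfl fun i _ => hrow i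
    have hsub : ∑ i, ∑ j, (p i j - p2 i j) = ∑ i, ∑ j, p i j - ∑ i, ∑ j, p2 i j := by
      rw [← Finset.sum_sub_distrib]
      exact Finset.sum_congr rfl fun i _ => Finset.sum_sub_distrib _ _
    have hs2 : s = ∑ i, ∑ j, (p i j - p2 i j) := by
      rw [hsub, hsum_p, ← hTa]
    have hsplit : ∑ i, ∑ j, (p i j - p2 i j)
        = ∑ i, ∑ j, (p i j - p1 i j) + ∑ i, ∑ j, (p1 i j - p2 i j) := by
      rw [← Finset.sum_add_distrib]
      apply Finset.sum_congr rfl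
      intro i _
      rw [← Finset.sum_add_distrib]
      apply Finset.sum_congr rfl
      intro j _
      ring
    rw [hs2, hsplit, D2']
    linarith [E1, E2]
  have tri : ∑ i, ∑ j, |p' i j - p i j| ≤
      ∑ i, ∑ j, |p' i j - p2 i j| + ∑ i, ∑ j, |p2 i j - p1 i j|
        + ∑ i, ∑ j, |p1 i j - p i j| := by
    have step : ∀ i j, |p' i j - p i j|
        ≤ |p' i j - p2 i j| + |p2 i j - p1 i j| + |p1 i j - p i j| := by
      intro i j
      calc |p' i j - p i j| ≤ |p' i j - p1 i j| + |p1 i j - p i j| := abs_sub_le _ _ _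
        _ ≤ (|p' i j - p2 i j| + |p2 i j - p1 i j|) + |p1 i j - p i j| := by
            have := abs_sub_le (p' i j) (p2 i j) (p1 i j)
            linarith
    calc ∑ i, ∑ j, |p' i j - p i j|
        ≤ ∑ i, ∑ j, (|p' i j - p2 i j| + |p2 i j - p1 i j| + |p1 i j - p i j|) := by
          apply Finset.sum_le_sum; intro i _; apply Finset.sum_le_sum; intro j _
          exact step i j
      _ = _ := by
          rw [← Finset.sum_add_distrib, ← Finset.sum_add_distrib]
          apply Finset.sum_congr rfl
          intro i _
          rw [← Finset.sum_add_distrib, ← Finset.sum_add_distrib]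
  rw [D1, D2, D3] at tri
  linarith [E1, E2, Ds, tri]


lemma exists_good_coupling {X Y : Type*}
    [MeasurableSpace X] [MeasurableSpace Y]
    (μ' : Measure X) [IsProbabilityMeasure μ'] (ν' : Measure Y) [IsProbabilityMeasure ν']
    {I J : Type*} [Fintype I] [Fintype J]
    (B : I → Set X) (C : J → Set Y)
    (hBm : ∀ i, MeasurableSet (B i)) (hCm : ∀ j, MeasurableSet (C j))
    (hBd : Pairwise (Function.onFun Disjoint B)) (hCd : Pairwise (Function.onFun Disjoint C))
    (hBu : (⋃ i, B i) = Set.univ) (hCu : (⋃ j, C j) = Set.univ)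
    (p' : I → J → ℝ) (hp'nn : ∀ i j, 0 ≤ p' i j)
    (hrow : ∀ i, ∑ j, p' i j = (μ' (B i)).toReal)
    (hcol : ∀ j, ∑ i, p' i j = (ν' (C j)).toReal) :
    ∃ ρ : Measure (X × Y), IsProbabilityMeasure ρ ∧
      ρ.map Prod.fst = μ' ∧ ρ.map Prod.snd = ν' ∧
      ∀ i j, ρ (B i ×ˢ C j) = ENNReal.ofReal (p' i j) := by
  classical
  set κ : I → Measure X := fun i => (μ' (B i))⁻¹ • μ'.restrict (B i) with hκdef
  set lam : J → Measure Y := fun j => (ν' (C j))⁻¹ • ν'.restrict (C j) with hlamdef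
  -- coefficient vanishing
  have hq0 : ∀ i, μ' (B i) = 0 → ∀ j, p' i j = 0 := by
    intro i h0 j
    have hsum : ∑ j, p' i j = 0 := by rw [hrow i, h0, ENNReal.toReal_zero]
    exact (Finset.sum_eq_zero_iff_of_nonneg (fun j _ => hp'nn i j)).mp hsum j (Finset.mem_univ j)
  have hr0 : ∀ j, ν' (C j) = 0 → ∀ i, p' i j = 0 := by
    intro j h0 i
    have hsum : ∑ i, p' i j = 0 := by rw [hcol j, h0, ENNReal.toReal_zero]
    exact (Finset.sum_eq_zero_iff_of_nonneg (fun i _ => hp'nn i j)).mp hsum i (Finset.mem_univ i)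
  -- basic facts about κ and lam
  have hκ0 : ∀ i, μ' (B i) = 0 → κ i = 0 := by
    intro i h0
    simp [hκdef, Measure.restrict_eq_zero.mpr h0]
  have hκuniv : ∀ i, μ' (B i) ≠ 0 → κ i Set.univ = 1 := by
    intro i h0
    simp only [hκdef, Measure.smul_apply, Measure.restrict_apply MeasurableSet.univ,
      Set.univ_inter, smul_eq_mul]
    exact ENNReal.inv_mul_cancel h0 (measure_ne_top μ' _)
  have hlam0 : ∀ j, ν' (C j) = 0 → lam j = 0 := by
    intro j h0
    simp [hlamdef, Measure.restrict_eq_zero.mpr h0]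
  have hlamuniv : ∀ j, ν' (C j) ≠ 0 → lam j Set.univ = 1 := by
    intro j h0
    simp only [hlamdef, Measure.smul_apply, Measure.restrict_apply MeasurableSet.univ,
      Set.univ_inter, smul_eq_mul]
    exact ENNReal.inv_mul_cancel h0 (measure_ne_top ν' _)
  have hκB : ∀ i i', κ i (B i') = if i = i' then (μ' (B i))⁻¹ * μ' (B i) else 0 := by
    intro i i'
    simp only [hκdef, Measure.smul_apply, Measure.restrict_apply (hBm i'), smul_eq_mul]
    by_cases h : i = i'
    · subst h; rw [if_pos rfl, Set.inter_self]
    · rw [if_neg h]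
      have : B i' ∩ B i = ∅ := Set.disjoint_iff_inter_eq_empty.mp (hBd (Ne.symm h))
      rw [this, measure_empty, mul_zero]
  have hlamC : ∀ j j', lam j (C j') = if j = j' then (ν' (C j))⁻¹ * ν' (C j) else 0 := by
    intro j j'
    simp only [hlamdef, Measure.smul_apply, Measure.restrict_apply (hCm j'), smul_eq_mul]
    by_cases h : j = j'
    · subst h; rw [if_pos rfl, Set.inter_self]
    · rw [if_neg h]
      have : C j' ∩ C j = ∅ := Set.disjoint_iff_inter_eq_empty.mp (hCd (Ne.symm h))
      rw [this, measure_empty, mul_zero]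
  -- the coupling
  set ρ : Measure (X × Y) :=
    ∑ i, ∑ j, ENNReal.ofReal (p' i j) • (κ i).prod (lam j) with hρdef
  have hρapp : ∀ S : Set (X × Y),
      ρ S = ∑ i, ∑ j, ENNReal.ofReal (p' i j) * ((κ i).prod (lam j)) S := by
    intro S
    rw [hρdef, Measure.finset_sum_apply]
    exact Finset.sum_congr rfl fun i _ => by
      rw [Measure.finset_sum_apply]
      exact Finset.sum_congr rfl fun j _ => Measure.smul_apply _ _ _
  -- row/column coefficient sums in ℝ≥0∞
  have hofq : ∀ i, ENNReal.ofReal ((μ' (B i)).toReal) = μ' (B i) :=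
    fun i => ENNReal.ofReal_toReal (measure_ne_top μ' _)
  have hofr : ∀ j, ENNReal.ofReal ((ν' (C j)).toReal) = ν' (C j) :=
    fun j => ENNReal.ofReal_toReal (measure_ne_top ν' _)
  have hsumj : ∀ i, ∑ j, ENNReal.ofReal (p' i j) * lam j Set.univ = μ' (B i) := by
    intro i
    have : ∀ j, ENNReal.ofReal (p' i j) * lam j Set.univ = ENNReal.ofReal (p' i j) := by
      intro j
      by_cases h : ν' (C j) = 0
      · rw [hr0 j h i]; simp
      · rw [hlamuniv j h, mul_one]
    rw [Finset.sum_congr rfl fun j _ => this j, ← ENNReal.ofReal_sum_of_nonneg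
      (fun j _ => hp'nn i j), hrow i, hofq i]
  have hsumi : ∀ j, ∑ i, ENNReal.ofReal (p' i j) * κ i Set.univ = ν' (C j) := by
    intro j
    have : ∀ i, ENNReal.ofReal (p' i j) * κ i Set.univ = ENNReal.ofReal (p' i j) := by
      intro i
      by_cases h : μ' (B i) = 0
      · rw [hq0 i h j]; simp
      · rw [hκuniv i h, mul_one]
    rw [Finset.sum_congr rfl fun i _ => this i, ← ENNReal.ofReal_sum_of_nonneg
      (fun i _ => hp'nn i j), hcol j, hofr j]
  -- partition sums
  have hpartX : ∀ (m : Measure X) (E : Set X), MeasurableSet E →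
      ∑ i, m (E ∩ B i) = m E := by
    intro m E hE
    have hU : (⋃ i ∈ (Finset.univ : Finset I), (E ∩ B i)) = E := by
      have : (⋃ i ∈ (Finset.univ : Finset I), (E ∩ B i)) = ⋃ i, (E ∩ B i) := by
        simp
      rw [this, ← Set.inter_iUnion, hBu, Set.inter_univ]
    have hdisj : (↑(Finset.univ : Finset I) : Set I).PairwiseDisjoint (fun i => E ∩ B i) := by
      intro i _ i' _ hne
      exact (hBd hne).mono Set.inter_subset_right Set.inter_subset_right
    rw [← measure_biUnion_finset hdisj fun i _ => hE.inter (hBm i), hU]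
  have hpartY : ∀ (m : Measure Y) (F : Set Y), MeasurableSet F →
      ∑ j, m (F ∩ C j) = m F := by
    intro m F hF
    have hU : (⋃ j ∈ (Finset.univ : Finset J), (F ∩ C j)) = F := by
      have : (⋃ j ∈ (Finset.univ : Finset J), (F ∩ C j)) = ⋃ j, (F ∩ C j) := by
        simp
      rw [this, ← Set.inter_iUnion, hCu, Set.inter_univ]
    have hdisj : (↑(Finset.univ : Finset J) : Set J).PairwiseDisjoint (fun j => F ∩ C j) := by
      intro j _ j' _ hne
      exact (hCd hne).mono Set.inter_subset_right Set.inter_subset_right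
    rw [← measure_biUnion_finset hdisj fun j _ => hF.inter (hCm j), hU]
  -- κ applied
  have hκE : ∀ i (E : Set X), MeasurableSet E → μ' (B i) * κ i E = μ' (E ∩ B i) := by
    intro i E hE
    by_cases h : μ' (B i) = 0
    · rw [h, zero_mul]
      exact (measure_mono_null Set.inter_subset_right h).symm
    · simp only [hκdef, Measure.smul_apply, Measure.restrict_apply hE, smul_eq_mul]
      rw [← mul_assoc, ENNReal.mul_inv_cancel h (measure_ne_top μ' _), one_mul]
  have hlamF : ∀ j (F : Set Y), MeasurableSet F → ν' (C j) * lam j F = ν' (F ∩ C j) := by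
    intro j F hF
    by_cases h : ν' (C j) = 0
    · rw [h, zero_mul]
      exact (measure_mono_null Set.inter_subset_right h).symm
    · simp only [hlamdef, Measure.smul_apply, Measure.restrict_apply hF, smul_eq_mul]
      rw [← mul_assoc, ENNReal.mul_inv_cancel h (measure_ne_top ν' _), one_mul]
  -- total mass
  have hρuniv : ρ Set.univ = 1 := by
    rw [hρapp]
    have : ∀ i j, ENNReal.ofReal (p' i j) * ((κ i).prod (lam j)) Set.univ
        = ENNReal.ofReal (p' i j) * lam j Set.univ * κ i Set.univ := by
      intro i j
      rw [← Set.univ_prod_univ, Measure.prod_prod]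
      ring
    calc ∑ i, ∑ j, ENNReal.ofReal (p' i j) * ((κ i).prod (lam j)) Set.univ
        = ∑ i, (∑ j, ENNReal.ofReal (p' i j) * lam j Set.univ) * κ i Set.univ := by
          apply Finset.sum_congr rfl; intro i _
          rw [Finset.sum_mul]
          exact Finset.sum_congr rfl fun j _ => this i j
      _ = ∑ i, μ' (B i) * κ i Set.univ := by
          apply Finset.sum_congr rfl; intro i _; rw [hsumj i]
      _ = ∑ i, μ' (Set.univ ∩ B i) := by
          apply Finset.sum_congr rfl; intro i _; rw [hκE i _ MeasurableSet.univ]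
      _ = μ' Set.univ := hpartX μ' _ MeasurableSet.univ
      _ = 1 := measure_univ
  -- first marginal
  have hfst : ρ.map Prod.fst = μ' := by
    ext E hE
    rw [Measure.map_apply measurable_fst hE, ← Set.prod_univ, hρapp]
    calc ∑ i, ∑ j, ENNReal.ofReal (p' i j) * ((κ i).prod (lam j)) (E ×ˢ Set.univ)
        = ∑ i, (∑ j, ENNReal.ofReal (p' i j) * lam j Set.univ) * κ i E := by
          apply Finset.sum_congr rfl; intro i _
          rw [Finset.sum_mul]
          apply Finset.sum_congr rfl; intro j _
          rw [Measure.prod_prod]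
          ring
      _ = ∑ i, μ' (B i) * κ i E := by
          apply Finset.sum_congr rfl; intro i _; rw [hsumj i]
      _ = ∑ i, μ' (E ∩ B i) := by
          apply Finset.sum_congr rfl; intro i _; rw [hκE i E hE]
      _ = μ' E := hpartX μ' E hE
  -- second marginal
  have hsnd : ρ.map Prod.snd = ν' := by
    ext F hF
    rw [Measure.map_apply measurable_snd hF, ← Set.univ_prod, hρapp]
    calc ∑ i, ∑ j, ENNReal.ofReal (p' i j) * ((κ i).prod (lam j)) (Set.univ ×ˢ F)
        = ∑ j, (∑ i, ENNReal.ofReal (p' i j) * κ i Set.univ) * lam j F := by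
          rw [Finset.sum_comm]
          apply Finset.sum_congr rfl; intro j _
          rw [Finset.sum_mul]
          apply Finset.sum_congr rfl; intro i _
          rw [Measure.prod_prod]
          ring
      _ = ∑ j, ν' (C j) * lam j F := by
          apply Finset.sum_congr rfl; intro j _; rw [hsumi j]
      _ = ∑ j, ν' (F ∩ C j) := by
          apply Finset.sum_congr rfl; intro j _; rw [hlamF j F hF]
      _ = ν' F := hpartY ν' F hF
  -- cell masses
  have hcell : ∀ i j, ρ (B i ×ˢ C j) = ENNReal.ofReal (p' i j) := by
    intro i j
    rw [hρapp]
    have inner : ∀ i', ∑ j', ENNReal.ofReal (p' i' j') * ((κ i').prod (lam j')) (B i ×ˢ C j)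
        = ENNReal.ofReal (p' i' j) * (κ i' (B i) * lam j (C j)) := by
      intro i'
      have h1 := Finset.sum_eq_single (s := Finset.univ)
        (f := fun j' => ENNReal.ofReal (p' i' j') * ((κ i').prod (lam j')) (B i ×ˢ C j)) j
        (fun j' _ hne => by simp only [Measure.prod_prod, hlamC j' j, if_neg hne,
          mul_zero])
        (fun h => absurd (Finset.mem_univ j) h)
      rw [h1]
      simp only [Measure.prod_prod]
    have h2 := Finset.sum_eq_single (s := Finset.univ)
      (f := fun i' => ENNReal.ofReal (p' i' j) * (κ i' (B i) * lam j (C j))) i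
      (fun i' _ hne => by simp only [hκB i' i, if_neg hne, zero_mul, mul_zero])
      (fun h => absurd (Finset.mem_univ i) h)
    rw [Finset.sum_congr rfl fun i' _ => inner i', h2]
    show ENNReal.ofReal (p' i j) * (κ i (B i) * lam j (C j)) = ENNReal.ofReal (p' i j)
    by_cases hbi : μ' (B i) = 0
    · rw [hq0 i hbi j]
      simp
    · by_cases hcj : ν' (C j) = 0
      · rw [hr0 j hcj i]
        simp
      · rw [hκB i i, if_pos rfl, hlamC j j, if_pos rfl,
          ENNReal.inv_mul_cancel hbi (measure_ne_top μ' _),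
          ENNReal.inv_mul_cancel hcj (measure_ne_top ν' _), one_mul, mul_one]
  exact ⟨ρ, ⟨hρuniv⟩, hfst, hsnd, hcell⟩


lemma sum_ennreal_le_of_abs_toReal {K : Type*} [Fintype K] (T : Finset K) (f g : K → ℝ≥0∞)
    (hf : ∀ k, f k ≠ ⊤) (hg : ∀ k, g k ≠ ⊤) {δ : ℝ}
    (h : ∑ k, |(f k).toReal - (g k).toReal| ≤ δ) :
    ∑ k ∈ T, f k ≤ ∑ k ∈ T, g k + ENNReal.ofReal δ := by
  have h1 : ∑ k ∈ T, (f k).toReal ≤ ∑ k ∈ T, (g k).toReal + δ := by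
    have e1 : ∑ k ∈ T, ((f k).toReal - (g k).toReal)
        ≤ ∑ k ∈ T, |(f k).toReal - (g k).toReal| :=
      Finset.sum_le_sum fun k _ => le_abs_self _
    have e2 : ∑ k ∈ T, |(f k).toReal - (g k).toReal|
        ≤ ∑ k, |(f k).toReal - (g k).toReal| :=
      Finset.sum_le_sum_of_subset_of_nonneg (Finset.subset_univ T)
        (fun k _ _ => abs_nonneg _)
    have e3 : ∑ k ∈ T, ((f k).toReal - (g k).toReal)
        = ∑ k ∈ T, (f k).toReal - ∑ k ∈ T, (g k).toReal := Finset.sum_sub_distrib _ _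
    linarith
  calc ∑ k ∈ T, f k = ENNReal.ofReal (∑ k ∈ T, (f k).toReal) := by
        rw [ENNReal.ofReal_sum_of_nonneg fun k _ => ENNReal.toReal_nonneg]
        exact Finset.sum_congr rfl fun k _ => (ENNReal.ofReal_toReal (hf k)).symm
    _ ≤ ENNReal.ofReal (∑ k ∈ T, (g k).toReal + δ) := ENNReal.ofReal_le_ofReal h1
    _ ≤ ENNReal.ofReal (∑ k ∈ T, (g k).toReal) + ENNReal.ofReal δ := ENNReal.ofReal_add_le
    _ = ∑ k ∈ T, g k + ENNReal.ofReal δ := by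
        rw [ENNReal.ofReal_sum_of_nonneg fun k _ => ENNReal.toReal_nonneg]
        congr 1
        exact Finset.sum_congr rfl fun k _ => ENNReal.ofReal_toReal (hg k)

lemma meas_partition {Z : Type*} [MeasurableSpace Z] {K : Type*} [Fintype K]
    (cell : K → Set Z) (hm : ∀ k, MeasurableSet (cell k))
    (hdis : Pairwise (Function.onFun Disjoint cell)) (hcov : (⋃ k, cell k) = Set.univ)
    (m : Measure Z) (E : Set Z) (hE : MeasurableSet E) :
    ∑ k, m (E ∩ cell k) = m E := by
  have hU : (⋃ k ∈ (Finset.univ : Finset K), (E ∩ cell k)) = E := by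
    have : (⋃ k ∈ (Finset.univ : Finset K), (E ∩ cell k)) = ⋃ k, (E ∩ cell k) := by simp
    rw [this, ← Set.inter_iUnion, hcov, Set.inter_univ]
  have hdisj : (↑(Finset.univ : Finset K) : Set K).PairwiseDisjoint (fun k => E ∩ cell k) := by
    intro k _ k' _ hne
    exact (hdis hne).mono Set.inter_subset_right Set.inter_subset_right
  rw [← measure_biUnion_finset hdisj fun k _ => hE.inter (hm k), hU]

lemma lp_coupling_bound {Z : Type*} [PseudoMetricSpace Z] [MeasurableSpace Z]
    [OpensMeasurableSpace Z]
    (ρ π : Measure Z) [IsProbabilityMeasure ρ] [IsProbabilityMeasure π]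
    {K : Type*} [Fintype K] [DecidableEq K] (cell : K → Set Z)
    (hm : ∀ k, MeasurableSet (cell k))
    (hdis : Pairwise (Function.onFun Disjoint cell))
    (hcov : (⋃ k, cell k) = Set.univ)
    (good : Finset K) {δ : ℝ} (hδ : 0 < δ)
    (hdiam : ∀ k ∈ good, EMetric.diam (cell k) ≤ ENNReal.ofReal δ)
    (hbadπ : π (⋃ k ∈ (goodᶜ : Finset K), cell k) ≤ ENNReal.ofReal δ)
    (hclose : ∑ k, |(ρ (cell k)).toReal - (π (cell k)).toReal| ≤ δ) :
    levyProkhorovEDist ρ π ≤ ENNReal.ofReal (3 * δ) := by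
  classical
  have hbadcells : ∀ (m : Measure Z), ∑ k ∈ (goodᶜ : Finset K), m (cell k)
      = m (⋃ k ∈ (goodᶜ : Finset K), cell k) := by
    intro m
    rw [measure_biUnion_finset ?_ fun k _ => hm k]
    intro k _ k' _ hne
    exact hdis hne
  have hbadρ : ∑ k ∈ (goodᶜ : Finset K), ρ (cell k) ≤ ENNReal.ofReal δ + ENNReal.ofReal δ := by
    calc ∑ k ∈ (goodᶜ : Finset K), ρ (cell k)
        ≤ ∑ k ∈ (goodᶜ : Finset K), π (cell k) + ENNReal.ofReal δ :=
          sum_ennreal_le_of_abs_toReal _ _ _ (fun k => measure_ne_top ρ _)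
            (fun k => measure_ne_top π _) hclose
      _ ≤ ENNReal.ofReal δ + ENNReal.ofReal δ := by
          rw [hbadcells π]
          exact add_le_add_left hbadπ _
  apply levyProkhorovEDist_le_of_forall ρ π (ENNReal.ofReal (3 * δ))
  intro ε E hε hεtop hE
  -- the collection of good cells meeting E
  set S : Finset K := Finset.univ.filter (fun k => k ∈ good ∧ (cell k ∩ E).Nonempty) with hSdef
  have hδε : ENNReal.ofReal δ < ε :=
    lt_of_le_of_lt (ENNReal.ofReal_le_ofReal (by linarith)) hε
  have hsub : ∀ k ∈ S, cell k ⊆ thickening ε.toReal E := by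
    intro k hk z hz
    obtain ⟨hkgood, w, hw⟩ : k ∈ good ∧ ∃ w, w ∈ cell k ∩ E := by
      have := Finset.mem_filter.mp hk
      exact ⟨this.2.1, this.2.2⟩
    rw [mem_thickening_iff]
    refine ⟨w, hw.2, ?_⟩
    have hed : edist z w ≤ ENNReal.ofReal δ :=
      le_trans (EMetric.edist_le_diam_of_mem hz hw.1) (hdiam k hkgood)
    have hd : dist z w ≤ δ := by
      rw [edist_dist] at hed
      exact (ENNReal.ofReal_le_ofReal_iff hδ.le).mp hed
    have : δ < ε.toReal := by
      have := (ENNReal.ofReal_lt_iff_lt_toReal hδ.le hεtop.ne).mp hδε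
      exact this
    linarith
  have hSunion : ∀ (m : Measure Z), ∑ k ∈ S, m (cell k) = m (⋃ k ∈ S, cell k) := by
    intro m
    rw [measure_biUnion_finset ?_ fun k _ => hm k]
    intro k _ k' _ hne
    exact hdis hne
  have hSsub : (⋃ k ∈ S, cell k) ⊆ thickening ε.toReal E := Set.iUnion₂_subset hsub
  -- splitting an arbitrary measure of E
  have hsplit : ∀ (m : Measure Z), m E ≤ ∑ k ∈ S, m (cell k)
      + ∑ k ∈ (goodᶜ : Finset K), m (cell k) := by
    intro m
    rw [← meas_partition cell hm hdis hcov m E hE]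
    rw [← Finset.sum_filter_add_sum_filter_not Finset.univ
      (fun k => k ∈ good ∧ (cell k ∩ E).Nonempty) (fun k => m (E ∩ cell k))]
    apply add_le_add
    · exact Finset.sum_le_sum fun k _ => measure_mono Set.inter_subset_right
    · apply le_trans (Finset.sum_le_sum_of_ne_zero ?_)
        (Finset.sum_le_sum fun k _ => measure_mono Set.inter_subset_right)
      intro k hk hne
      rw [Finset.mem_filter] at hk
      rw [Finset.mem_compl]
      intro hkgood
      apply hk.2
      refine ⟨hkgood, ?_⟩
      rw [Set.inter_comm]
      exact Set.nonempty_iff_ne_empty.mpr fun hemp => hne (by rw [hemp, measure_empty])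
  constructor
  · -- ρ E ≤ π (thickening) + ε
    calc ρ E ≤ ∑ k ∈ S, ρ (cell k) + ∑ k ∈ (goodᶜ : Finset K), ρ (cell k) := hsplit ρ
      _ ≤ (∑ k ∈ S, π (cell k) + ENNReal.ofReal δ)
          + (ENNReal.ofReal δ + ENNReal.ofReal δ) := by
          apply add_le_add ?_ hbadρ
          exact sum_ennreal_le_of_abs_toReal _ _ _ (fun k => measure_ne_top ρ _)
            (fun k => measure_ne_top π _) hclose
      _ ≤ π (thickening ε.toReal E) + ENNReal.ofReal (3 * δ) := by
          rw [hSunion π]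
          have h3 : ENNReal.ofReal δ + (ENNReal.ofReal δ + ENNReal.ofReal δ)
              = ENNReal.ofReal (3 * δ) := by
            rw [← ENNReal.ofReal_add hδ.le hδ.le, ← ENNReal.ofReal_add hδ.le (by linarith)]
            congr 1; ring
          calc π (⋃ k ∈ S, cell k) + ENNReal.ofReal δ + (ENNReal.ofReal δ + ENNReal.ofReal δ)
              = π (⋃ k ∈ S, cell k) + ENNReal.ofReal (3 * δ) := by
                rw [add_assoc, h3]
            _ ≤ π (thickening ε.toReal E) + ENNReal.ofReal (3 * δ) :=
                add_le_add_left (measure_mono hSsub) _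
      _ ≤ π (thickening ε.toReal E) + ε := add_le_add_right hε.le _
  · -- π E ≤ ρ (thickening) + ε
    calc π E ≤ ∑ k ∈ S, π (cell k) + ∑ k ∈ (goodᶜ : Finset K), π (cell k) := hsplit π
      _ ≤ (∑ k ∈ S, ρ (cell k) + ENNReal.ofReal δ) + ENNReal.ofReal δ := by
          apply add_le_add
          · apply sum_ennreal_le_of_abs_toReal _ _ _ (fun k => measure_ne_top π _)
              (fun k => measure_ne_top ρ _)
            calc ∑ k, |(π (cell k)).toReal - (ρ (cell k)).toReal|
                = ∑ k, |(ρ (cell k)).toReal - (π (cell k)).toReal| :=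
                  Finset.sum_congr rfl fun k _ => abs_sub_comm _ _
              _ ≤ δ := hclose
          · rw [hbadcells π]; exact hbadπ
      _ ≤ ρ (thickening ε.toReal E) + ENNReal.ofReal (3 * δ) := by
          rw [hSunion ρ]
          have h3 : ENNReal.ofReal δ + ENNReal.ofReal δ ≤ ENNReal.ofReal (3 * δ) := by
            rw [← ENNReal.ofReal_add hδ.le hδ.le]
            exact ENNReal.ofReal_le_ofReal (by linarith)
          calc ρ (⋃ k ∈ S, cell k) + ENNReal.ofReal δ + ENNReal.ofReal δ
              ≤ ρ (thickening ε.toReal E) + (ENNReal.ofReal δ + ENNReal.ofReal δ) := by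
                rw [add_assoc]
                exact add_le_add_left (measure_mono hSsub) _
            _ ≤ ρ (thickening ε.toReal E) + ENNReal.ofReal (3 * δ) := add_le_add_right h3 _
      _ ≤ ρ (thickening ε.toReal E) + ε := add_le_add_right hε.le _


section Main
variable {X Y : Type*} [MetricSpace X] [SecondCountableTopology X]
    [MeasurableSpace X] [BorelSpace X]
    [MetricSpace Y] [SecondCountableTopology Y]
    [MeasurableSpace Y] [BorelSpace Y]

lemma eventually_good_coupling
    (μs : ℕ → ProbabilityMeasure X) (μ : ProbabilityMeasure X)
    (νs : ℕ → ProbabilityMeasure Y) (ν : ProbabilityMeasure Y)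
    (hμ : Tendsto μs atTop (nhds μ)) (hν : Tendsto νs atTop (nhds ν))
    (π : ProbabilityMeasure (X × Y))
    (hπ1 : π.toMeasure.map Prod.fst = μ.toMeasure)
    (hπ2 : π.toMeasure.map Prod.snd = ν.toMeasure)
    {ε : ℝ≥0∞} (hε : 0 < ε) :
    ∀ᶠ n in atTop, ∃ ρ : Measure (X × Y), IsProbabilityMeasure ρ ∧
      ρ.map Prod.fst = (μs n).toMeasure ∧ ρ.map Prod.snd = (νs n).toMeasure ∧
      levyProkhorovEDist ρ π.toMeasure ≤ ε := by
  classical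
  set δ : ℝ := (min ε 1).toReal / 3 with hδdef
  have hmin_ne_top : min ε 1 ≠ ⊤ := ne_top_of_le_ne_top ENNReal.one_ne_top (min_le_right _ _)
  have hmin_pos : 0 < min ε 1 := lt_min hε zero_lt_one
  have hδ : 0 < δ := by
    have := ENNReal.toReal_pos hmin_pos.ne' hmin_ne_top
    positivity
  have h3δ : ENNReal.ofReal (3 * δ) ≤ ε := by
    have : 3 * δ = (min ε 1).toReal := by rw [hδdef]; ring
    rw [this, ENNReal.ofReal_toReal hmin_ne_top]
    exact min_le_left _ _
  have hhalf : (0:ℝ≥0∞) < ENNReal.ofReal (δ/2) := ENNReal.ofReal_pos.mpr (by linarith)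
  obtain ⟨N, B, hBm, hBd, hBu, hBdiam, hBf, hBtail⟩ :=
    exists_fin_partition μ.toMeasure hδ hhalf
  obtain ⟨M, C, hCm, hCd, hCu, hCdiam, hCf, hCtail⟩ :=
    exists_fin_partition ν.toMeasure hδ hhalf
  -- mass functions
  set q : Sum (Fin N) Unit → ℝ := fun i => (μ.toMeasure (B i)).toReal with hqdef
  set r : Sum (Fin M) Unit → ℝ := fun j => (ν.toMeasure (C j)).toReal with hrdef
  set qn : ℕ → Sum (Fin N) Unit → ℝ := fun n i => ((μs n).toMeasure (B i)).toReal with hqndef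
  set rn : ℕ → Sum (Fin M) Unit → ℝ := fun n j => ((νs n).toMeasure (C j)).toReal with hrndef
  -- convergence of masses
  have hqconv : Tendsto (fun n => ∑ i, |qn n i - q i|) atTop (𝓝 0) := by
    have h0 : ∀ i : Sum (Fin N) Unit, Tendsto (fun n => |qn n i - q i|) atTop (𝓝 0) := by
      intro i
      have h1 : Tendsto (fun n => (μs n).toMeasure (B i)) atTop (𝓝 (μ.toMeasure (B i))) :=
        MeasureTheory.ProbabilityMeasure.tendsto_measure_of_null_frontier_of_tendsto' hμ (hBf i)
      have h2 : Tendsto (fun n => qn n i) atTop (𝓝 (q i)) :=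
        (ENNReal.tendsto_toReal (measure_ne_top μ.toMeasure _)).comp h1
      have := (h2.sub (tendsto_const_nhds (x := q i))).abs
      simpa using this
    have := tendsto_finset_sum (Finset.univ : Finset (Sum (Fin N) Unit)) (fun i _ => h0 i)
    simpa using this
  have hrconv : Tendsto (fun n => ∑ j, |rn n j - r j|) atTop (𝓝 0) := by
    have h0 : ∀ j : Sum (Fin M) Unit, Tendsto (fun n => |rn n j - r j|) atTop (𝓝 0) := by
      intro j
      have h1 : Tendsto (fun n => (νs n).toMeasure (C j)) atTop (𝓝 (ν.toMeasure (C j))) :=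
        MeasureTheory.ProbabilityMeasure.tendsto_measure_of_null_frontier_of_tendsto' hν (hCf j)
      have h2 : Tendsto (fun n => rn n j) atTop (𝓝 (r j)) :=
        (ENNReal.tendsto_toReal (measure_ne_top ν.toMeasure _)).comp h1
      have := (h2.sub (tendsto_const_nhds (x := r j))).abs
      simpa using this
    have := tendsto_finset_sum (Finset.univ : Finset (Sum (Fin M) Unit)) (fun j _ => h0 j)
    simpa using this
  have evq : ∀ᶠ n in atTop, ∑ i, |qn n i - q i| ≤ δ/6 :=
    (hqconv.eventually (gt_mem_nhds (by positivity))).mono fun n h => le_of_lt h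
  have evr : ∀ᶠ n in atTop, ∑ j, |rn n j - r j| ≤ δ/6 :=
    (hrconv.eventually (gt_mem_nhds (by positivity))).mono fun n h => le_of_lt h
  filter_upwards [evq, evr] with n hA hB
  -- partition sums of a measure on X (resp Y)
  have hsumX : ∀ (m : Measure X), ∑ i, m (B i) = m Set.univ := by
    intro m
    have := meas_partition B hBm hBd hBu m Set.univ MeasurableSet.univ
    simpa using this
  have hsumY : ∀ (m : Measure Y), ∑ j, m (C j) = m Set.univ := by
    intro m
    have := meas_partition C hCm hCd hCu m Set.univ MeasurableSet.univ
    simpa using this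
  -- the matrix of π-masses
  set p : Sum (Fin N) Unit → Sum (Fin M) Unit → ℝ := fun i j => (π.toMeasure (B i ×ˢ C j)).toReal with hpdef
  have hverm : ∀ j : Sum (Fin M) Unit, MeasurableSet ((Set.univ : Set X) ×ˢ C j) :=
    fun j => MeasurableSet.univ.prod (hCm j)
  have hverd : Pairwise (Function.onFun Disjoint (fun j => (Set.univ : Set X) ×ˢ C j)) :=
    fun j j' hne => disjoint_prod_right _ _ (hCd hne)
  have hveru : (⋃ j, (Set.univ : Set X) ×ˢ C j) = Set.univ := by
    rw [← Set.prod_iUnion, hCu, Set.univ_prod_univ]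
  have hhorm : ∀ i : Sum (Fin N) Unit, MeasurableSet (B i ×ˢ (Set.univ : Set Y)) :=
    fun i => (hBm i).prod MeasurableSet.univ
  have hhord : Pairwise (Function.onFun Disjoint (fun i => B i ×ˢ (Set.univ : Set Y))) :=
    fun i i' hne => disjoint_prod_left _ _ (hBd hne)
  have hhoru : (⋃ i, B i ×ˢ (Set.univ : Set Y)) = Set.univ := by
    rw [← Set.iUnion_prod_const, hBu, Set.univ_prod_univ]
  have hπB : ∀ i, π.toMeasure (B i ×ˢ (Set.univ : Set Y)) = μ.toMeasure (B i) := by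
    intro i
    rw [← hπ1, Measure.map_apply measurable_fst (hBm i), ← Set.prod_univ]
  have hπC : ∀ j, π.toMeasure ((Set.univ : Set X) ×ˢ C j) = ν.toMeasure (C j) := by
    intro j
    rw [← hπ2, Measure.map_apply measurable_snd (hCm j), ← Set.univ_prod]
  have hrowp : ∀ i, ∑ j, p i j = q i := by
    intro i
    have key : ∑ j, π.toMeasure (B i ×ˢ C j) = μ.toMeasure (B i) := by
      have := meas_partition (fun j => (Set.univ : Set X) ×ˢ C j) hverm hverd hveru
        π.toMeasure (B i ×ˢ (Set.univ : Set Y)) (hhorm i)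
      rw [← hπB i, ← this]
      apply Finset.sum_congr rfl
      intro j _
      congr 1
      rw [Set.prod_inter_prod, Set.inter_univ, Set.univ_inter]
    rw [hpdef, hqdef]
    simp only
    rw [← ENNReal.toReal_sum (fun j _ => measure_ne_top π.toMeasure _), key]
  have hcolp : ∀ j, ∑ i, p i j = r j := by
    intro j
    have key : ∑ i, π.toMeasure (B i ×ˢ C j) = ν.toMeasure (C j) := by
      have := meas_partition (fun i => B i ×ˢ (Set.univ : Set Y)) hhorm hhord hhoru
        π.toMeasure ((Set.univ : Set X) ×ˢ C j) (hverm j)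
      rw [← hπC j, ← this]
      apply Finset.sum_congr rfl
      intro i _
      congr 1
      rw [Set.prod_inter_prod, Set.inter_univ, Set.univ_inter]
    rw [hrdef]
    simp only
    rw [← ENNReal.toReal_sum (fun i _ => measure_ne_top π.toMeasure _), key]
  have hqsum : ∑ i, q i = 1 := by
    rw [hqdef]
    simp only
    rw [← ENNReal.toReal_sum (fun i _ => measure_ne_top μ.toMeasure _), hsumX, measure_univ,
      ENNReal.toReal_one]
  have hqnsum : ∑ i, qn n i = 1 := by
    rw [hqndef]
    simp only
    rw [← ENNReal.toReal_sum (fun i _ => measure_ne_top (μs n).toMeasure _), hsumX, measure_univ,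
      ENNReal.toReal_one]
  have hrnsum : ∑ j, rn n j = 1 := by
    rw [hrndef]
    simp only
    rw [← ENNReal.toReal_sum (fun j _ => measure_ne_top (νs n).toMeasure _), hsumY, measure_univ,
      ENNReal.toReal_one]
  -- adjust the matrix
  obtain ⟨p', hp'nn, hrow', hcol', hp'close⟩ := matrix_adjust p q (qn n) r (rn n)
    (fun i j => ENNReal.toReal_nonneg) (fun i => ENNReal.toReal_nonneg)
    (fun j => ENNReal.toReal_nonneg) hrowp hcolp hqnsum hrnsum hqsum
  have hclose : ∑ i, ∑ j, |p' i j - p i j| ≤ δ := by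
    calc ∑ i, ∑ j, |p' i j - p i j|
        ≤ 4 * ∑ i, |qn n i - q i| + 2 * ∑ j, |rn n j - r j| := hp'close
      _ ≤ 4 * (δ/6) + 2 * (δ/6) := by
          have h4 : (0:ℝ) ≤ 4 := by norm_num
          gcongr
      _ = δ := by ring
  -- build the coupling
  obtain ⟨ρ, hρprob, hρfst, hρsnd, hρcell⟩ := exists_good_coupling
    (μs n).toMeasure (νs n).toMeasure B C hBm hCm hBd hCd hBu hCu p' hp'nn hrow' hcol'
  refine ⟨ρ, hρprob, hρfst, hρsnd, ?_⟩
  -- the Lévy-Prokhorov estimate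
  have := hρprob
  set K := Sum (Fin N) Unit × Sum (Fin M) Unit
  set cell : K → Set (X × Y) := fun k => B k.1 ×ˢ C k.2 with hcelldef
  have hcm : ∀ k, MeasurableSet (cell k) := fun k => (hBm k.1).prod (hCm k.2)
  have hcdis : Pairwise (Function.onFun Disjoint cell) := by
    rintro ⟨i, j⟩ ⟨i', j'⟩ hne
    by_cases hii : i = i'
    · subst hii
      have hjj : j ≠ j' := fun h => hne (by rw [h])
      exact disjoint_prod_right _ _ (hCd hjj)
    · exact disjoint_prod_left _ _ (hBd hii)
  have hccov : (⋃ k, cell k) = Set.univ := by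
    apply Set.eq_univ_of_forall
    rintro ⟨a, b⟩
    have ha := hBu ▸ Set.mem_univ a
    have hb := hCu ▸ Set.mem_univ b
    obtain ⟨i, hi⟩ := Set.mem_iUnion.mp ha
    obtain ⟨j, hj⟩ := Set.mem_iUnion.mp hb
    exact Set.mem_iUnion.mpr ⟨(i, j), ⟨hi, hj⟩⟩
  set good : Finset K := Finset.univ.filter (fun k => k.1.isLeft ∧ k.2.isLeft) with hgooddef
  have hdiam : ∀ k ∈ good, EMetric.diam (cell k) ≤ ENNReal.ofReal δ := by
    rintro ⟨i, j⟩ hk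
    obtain ⟨hileft, hjleft⟩ := (Finset.mem_filter.mp hk).2
    obtain ⟨i0, rfl⟩ := Sum.isLeft_iff.mp hileft
    obtain ⟨j0, rfl⟩ := Sum.isLeft_iff.mp hjleft
    exact le_trans (diam_prod_le _ _) (max_le (hBdiam i0) (hCdiam j0))
  have hbadπ : π.toMeasure (⋃ k ∈ (goodᶜ : Finset K), cell k) ≤ ENNReal.ofReal δ := by
    have hsub : (⋃ k ∈ (goodᶜ : Finset K), cell k) ⊆
        (B (Sum.inr ()) ×ˢ (Set.univ : Set Y)) ∪ ((Set.univ : Set X) ×ˢ C (Sum.inr ())) := by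
      rintro z hz
      obtain ⟨k, hk, hzk⟩ := Set.mem_iUnion₂.mp hz
      have hknotgood : ¬(k.1.isLeft ∧ k.2.isLeft) := by
        have := Finset.mem_compl.mp hk
        intro hcon
        exact this (Finset.mem_filter.mpr ⟨Finset.mem_univ _, hcon⟩)
      rcases k with ⟨i, j⟩
      by_cases hi : i.isLeft
      · have hj : ¬ j.isLeft := fun h => hknotgood ⟨hi, h⟩
        obtain ⟨u, rfl⟩ := Sum.isRight_iff.mp (Sum.not_isLeft.mp hj)
        right
        exact ⟨Set.mem_univ _, by cases u; exact hzk.2⟩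
      · obtain ⟨u, rfl⟩ := Sum.isRight_iff.mp (Sum.not_isLeft.mp hi)
        left
        exact ⟨by cases u; exact hzk.1, Set.mem_univ _⟩
    calc π.toMeasure (⋃ k ∈ (goodᶜ : Finset K), cell k)
        ≤ π.toMeasure (B (Sum.inr ()) ×ˢ (Set.univ : Set Y))
          + π.toMeasure ((Set.univ : Set X) ×ˢ C (Sum.inr ())) :=
          le_trans (measure_mono hsub) (measure_union_le _ _)
      _ ≤ ENNReal.ofReal (δ/2) + ENNReal.ofReal (δ/2) := by
          rw [hπB, hπC]
          exact add_le_add hBtail hCtail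
      _ = ENNReal.ofReal δ := by
          rw [← ENNReal.ofReal_add (by linarith) (by linarith)]
          congr 1; ring
  have hclosecells : ∑ k : Sum (Fin N) Unit × Sum (Fin M) Unit, |(ρ (cell k)).toReal - (π.toMeasure (cell k)).toReal| ≤ δ := by
    have : ∀ k : Sum (Fin N) Unit × Sum (Fin M) Unit, |(ρ (cell k)).toReal - (π.toMeasure (cell k)).toReal|
        = |p' k.1 k.2 - p k.1 k.2| := by
      rintro ⟨i, j⟩
      rw [hcelldef]
      simp only
      rw [hρcell i j, ENNReal.toReal_ofReal (hp'nn i j)]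
    rw [Finset.sum_congr rfl fun k _ => this k]
    rw [Fintype.sum_prod_type]
    exact hclose
  have := lp_coupling_bound ρ π.toMeasure cell hcm hcdis hccov good hδ hdiam hbadπ hclosecells
  exact le_trans this h3δ
end Main


/-- Lower hemicontinuity (sequential form): if `μₙ → μ`, `νₙ → ν` weakly and
`π ∈ Π(μ,ν)`, then there are couplings `πₙ ∈ Π(μₙ,νₙ)` with `πₙ → π` weakly. -/
theorem couplings_lowerHemicontinuous_seq
    {X Y : Type*} [MetricSpace X] [CompleteSpace X] [SecondCountableTopology X]
    [MeasurableSpace X] [BorelSpace X]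
    [MetricSpace Y] [CompleteSpace Y] [SecondCountableTopology Y]
    [MeasurableSpace Y] [BorelSpace Y]
    (μs : ℕ → ProbabilityMeasure X) (μ : ProbabilityMeasure X)
    (νs : ℕ → ProbabilityMeasure Y) (ν : ProbabilityMeasure Y)
    (hμ : Tendsto μs atTop (nhds μ)) (hν : Tendsto νs atTop (nhds ν))
    (π : ProbabilityMeasure (X × Y))
    (hπ : π.toMeasure.map Prod.fst = μ.toMeasure ∧ π.toMeasure.map Prod.snd = ν.toMeasure) :
    ∃ πs : ℕ → ProbabilityMeasure (X × Y),
      (∀ n, (πs n).toMeasure.map Prod.fst = (μs n).toMeasure ∧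
          (πs n).toMeasure.map Prod.snd = (νs n).toMeasure) ∧
      Tendsto πs atTop (nhds π) := by
  classical
  obtain ⟨hπ1, hπ2⟩ := hπ
  -- nonemptiness of the set of couplings
  have hprod : ∀ n : ℕ, ∃ ρ : Measure (X × Y), IsProbabilityMeasure ρ ∧
      ρ.map Prod.fst = (μs n).toMeasure ∧ ρ.map Prod.snd = (νs n).toMeasure := by
    intro n
    refine ⟨(μs n).toMeasure.prod (νs n).toMeasure, inferInstance, ?_, ?_⟩
    · rw [Measure.map_fst_prod]; simp
    · rw [Measure.map_snd_prod]; simp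
  -- infimal Lévy-Prokhorov distance to π over couplings
  set D : ℕ → ℝ≥0∞ := fun n => sInf {d | ∃ ρ : Measure (X × Y),
    (IsProbabilityMeasure ρ ∧ ρ.map Prod.fst = (μs n).toMeasure ∧
      ρ.map Prod.snd = (νs n).toMeasure) ∧ d = levyProkhorovEDist ρ π.toMeasure} with hDdef
  have hDlt : ∀ n, D n ≠ ⊤ := by
    intro n
    obtain ⟨ρ, h1, h2, h3⟩ := hprod n
    haveI := h1
    have hle : D n ≤ levyProkhorovEDist ρ π.toMeasure := sInf_le ⟨ρ, ⟨h1, h2, h3⟩, rfl⟩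
    exact ne_top_of_le_ne_top (levyProkhorovEDist_ne_top _ _) hle
  have hDto : Tendsto D atTop (𝓝 0) := by
    rw [ENNReal.tendsto_nhds_zero]
    intro ε hε
    filter_upwards [eventually_good_coupling μs μ νs ν hμ hν π hπ1 hπ2 hε] with n hn
    obtain ⟨ρ, h1, h2, h3, h4⟩ := hn
    exact le_trans (sInf_le ⟨ρ, ⟨h1, h2, h3⟩, rfl⟩) h4
  -- choose near-optimal couplings
  have hex : ∀ n, ∃ ρ : Measure (X × Y),
      (IsProbabilityMeasure ρ ∧ ρ.map Prod.fst = (μs n).toMeasure ∧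
        ρ.map Prod.snd = (νs n).toMeasure) ∧
      levyProkhorovEDist ρ π.toMeasure ≤ D n + ((n : ℝ≥0∞) + 1)⁻¹ := by
    intro n
    have hlt : D n < D n + ((n : ℝ≥0∞) + 1)⁻¹ := by
      apply ENNReal.lt_add_right (hDlt n)
      simp
    obtain ⟨d, ⟨ρ, hρ, rfl⟩, hdlt⟩ := sInf_lt_iff.mp hlt
    exact ⟨ρ, hρ, hdlt.le⟩
  choose ρs hρs hdist using hex
  -- the chosen couplings converge in Lévy-Prokhorov distance
  have hinv : Tendsto (fun n : ℕ => ((n : ℝ≥0∞) + 1)⁻¹) atTop (𝓝 0) := by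
    have h1 : Tendsto (fun n : ℕ => (n : ℝ≥0∞))  atTop (𝓝 ⊤) := ENNReal.tendsto_nat_nhds_top
    have h2 : Tendsto (fun n : ℕ => (n : ℝ≥0∞) + 1) atTop (𝓝 ⊤) := by
      simpa using h1.add_const 1
    simpa using (ENNReal.tendsto_inv_iff.mpr h2)
  have hedist : Tendsto (fun n => levyProkhorovEDist (ρs n) π.toMeasure) atTop (𝓝 0) := by
    have hsum : Tendsto (fun n => D n + ((n : ℝ≥0∞) + 1)⁻¹) atTop (𝓝 0) := by
      simpa using hDto.add hinv
    exact tendsto_of_tendsto_of_tendsto_of_le_of_le tendsto_const_nhds hsum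
      (fun n => zero_le) hdist
  -- package as probability measures
  set πs : ℕ → ProbabilityMeasure (X × Y) := fun n => ⟨ρs n, (hρs n).1⟩ with hπsdef
  refine ⟨πs, fun n => ⟨(hρs n).2.1, (hρs n).2.2⟩, ?_⟩
  -- convergence in Lévy-Prokhorov metric
  set lps : ℕ → LevyProkhorov (ProbabilityMeasure (X × Y)) :=
    fun n => LevyProkhorov.toMeasureEquiv.symm (πs n) with hlpsdef
  set lpπ : LevyProkhorov (ProbabilityMeasure (X × Y)) :=
    LevyProkhorov.toMeasureEquiv.symm π with hlpπdef
  have hlp : Tendsto lps atTop (𝓝 lpπ) := by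
    rw [tendsto_iff_dist_tendsto_zero]
    have hd : ∀ n, dist (lps n) lpπ = (levyProkhorovEDist (ρs n) π.toMeasure).toReal := by
      intro n
      rw [LevyProkhorov.dist_probabilityMeasure_def]
      rfl
    rw [funext hd]
    have := (ENNReal.tendsto_toReal (by simp : (0:ℝ≥0∞) ≠ ⊤)).comp hedist
    simpa [Function.comp_def] using this
  have hcont := (LevyProkhorov.continuous_toMeasure_probabilityMeasure
    (Ω := X × Y)).tendsto lpπ
  have := hcont.comp hlp
  exact this
end

section
/- (Upper hemicontinuity of the argmax correspondence) Let X, Y be Polish spaces and Φ : X × Y → ℝ bounded continuous. If μₙ → μ, νₙ → ν weakly, and πₙ ∈ Π(μₙ,νₙ) is optimal for (μₙ,νₙ) (i.e., ∫ Φ dπₙ = V(μₙ,νₙ)) with πₙ → π weakly, then π ∈ Π(μ,ν) and π is optimal for (μ,ν). -/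
open MeasureTheory Filter Set Metric ProbabilityTheory
open scoped ENNReal NNReal Topology

variable {X Y : Type*}

/-- The set of couplings of `μ` and `ν`. -/
def couplings [MetricSpace X] [MeasurableSpace X] [MetricSpace Y] [MeasurableSpace Y]
    (μ : ProbabilityMeasure X) (ν : ProbabilityMeasure Y) :
    Set (ProbabilityMeasure (X × Y)) :=
  {π | π.toMeasure.map Prod.fst = μ.toMeasure ∧ π.toMeasure.map Prod.snd = ν.toMeasure}

section Aux



lemma null_frontier_biUnion {α : Type*} [TopologicalSpace α] [MeasurableSpace α]
    [OpensMeasurableSpace α] (μ : Measure α) (f : ℕ → Set α)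
    (h : ∀ i, μ (frontier (f i)) = 0) (s : Finset ℕ) :
    μ (frontier (⋃ i ∈ s, f i)) = 0 := by
  classical
  induction s using Finset.induction with
  | empty => simp
  | @insert a s' ha ih =>
      rw [Finset.set_biUnion_insert]
      refine le_antisymm ?_ (zero_le)
      calc μ (frontier (f a ∪ ⋃ i ∈ s', f i))
          ≤ μ (frontier (f a) ∪ frontier (⋃ i ∈ s', f i)) :=
            measure_mono ((frontier_union_subset _ _).trans (Set.union_subset_union
              Set.inter_subset_left Set.inter_subset_right))
        _ ≤ μ (frontier (f a)) + μ (frontier (⋃ i ∈ s', f i)) := measure_union_le _ _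
        _ = 0 := by rw [h a, ih]; simp

/-- A finite partition of a separable metric space into small null-frontier pieces plus a
remainder of small mass. -/
lemma exists_partition {α : Type*} [MetricSpace α] [SecondCountableTopology α]
    [MeasurableSpace α] [OpensMeasurableSpace α]
    (μ : Measure α) [IsProbabilityMeasure μ] {ε : ℝ} (hε : 0 < ε) :
    ∃ (k : ℕ) (A : ℕ → Set α), (∀ i, MeasurableSet (A i)) ∧
      (Pairwise (Function.onFun Disjoint A)) ∧
      (∀ i < k, ∀ x ∈ A i, ∀ y ∈ A i, dist x y ≤ ε) ∧
      (∀ i, μ (frontier (A i)) = 0) ∧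
      (⋃ i, A i) = univ ∧ (∀ i, k < i → A i = ∅) ∧ μ (A k) ≤ ENNReal.ofReal ε := by
  have hne : Nonempty α := by
    by_contra h
    have : μ univ = 0 := by
      rw [Set.univ_eq_empty_iff.mpr (not_nonempty_iff.mp h)]; simp
    simp [measure_univ] at this
  obtain ⟨u, hu⟩ := TopologicalSpace.exists_dense_seq α
  -- choose radii with null frontier
  have hradii : ∀ i : ℕ, ∃ r : ℝ, r ∈ Set.Ioo (ε/3) (ε/2) ∧ μ (frontier (ball (u i) r)) = 0 := by
    intro i
    obtain ⟨r, hr, hr0⟩ := exists_null_frontier_thickening μ {u i} (by linarith : ε/3 < ε/2)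
    exact ⟨r, hr, by rwa [Metric.thickening_singleton] at hr0⟩
  choose r hr hr0 using hradii
  set B : ℕ → Set α := fun i => ball (u i) (r i) with hB
  have hcover : (⋃ i, B i) = univ := by
    apply Set.eq_univ_of_forall
    intro x
    obtain ⟨i, hi⟩ := Metric.denseRange_iff.mp hu x (ε/3) (by linarith)
    refine Set.mem_iUnion.mpr ⟨i, ?_⟩
    rw [hB]
    simp only [Metric.mem_ball]
    exact lt_trans hi (hr i).1
  -- choose k with most of the mass
  have hmono : Monotone (fun k => ⋃ i ∈ Finset.range k, B i) := by
    intro a b hab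
    exact Set.biUnion_subset_biUnion_left (fun i hi => Finset.mem_range.mpr
      (lt_of_lt_of_le (Finset.mem_range.mp hi) hab))
  have htend : Tendsto (fun k => μ (⋃ i ∈ Finset.range k, B i)) atTop (𝓝 (μ (⋃ k, ⋃ i ∈ Finset.range k, B i))) :=
    tendsto_measure_iUnion_atTop hmono
  have hUU : (⋃ k, ⋃ i ∈ Finset.range k, B i) = univ := by
    rw [← hcover]
    ext x
    simp only [Set.mem_iUnion, Finset.mem_range]
    exact ⟨fun ⟨k, i, h1, h2⟩ => ⟨i, h2⟩, fun ⟨i, h2⟩ => ⟨i+1, i, Nat.lt_succ_self i, h2⟩⟩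
  rw [hUU, measure_univ] at htend
  have hev : ∀ᶠ k in atTop, (1 : ℝ≥0∞) - ENNReal.ofReal ε < μ (⋃ i ∈ Finset.range k, B i) := by
    apply htend.eventually_const_lt
    exact ENNReal.sub_lt_self ENNReal.one_ne_top one_ne_zero (by simpa using hε)
  obtain ⟨k, hk⟩ := hev.exists
  -- define the partition
  classical
  set A : ℕ → Set α := fun i =>
    if i < k then B i \ ⋃ j ∈ Finset.range i, B j
    else if i = k then (⋃ j ∈ Finset.range k, B j)ᶜ else ∅ with hA
  have hAsub : ∀ i, i < k → A i ⊆ B i := by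
    intro i hi; rw [hA]; simp only [if_pos hi]; exact Set.diff_subset
  refine ⟨k, A, ?_, ?_, ?_, ?_, ?_, ?_, ?_⟩
  · intro i
    simp only [hA]
    split_ifs
    · exact measurableSet_ball.diff (Finset.measurableSet_biUnion _ (fun _ _ => measurableSet_ball))
    · exact (Finset.measurableSet_biUnion _ (fun _ _ => measurableSet_ball)).compl
    · exact MeasurableSet.empty
  · -- pairwise disjoint
    have key : ∀ i j, i < j → Disjoint (A i) (A j) := by
      intro i j hij
      rcases lt_or_ge i k with hik | hik
      · have hBi : A j ⊆ (B i)ᶜ := by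
          simp only [hA]
          split_ifs with h1 h2
          · intro x hx
            simp only [Set.mem_diff, Set.mem_iUnion, Finset.mem_range] at hx
            exact fun hxB => hx.2 ⟨i, hij, hxB⟩
          · intro x hx
            simp only [Set.mem_compl_iff, Set.mem_iUnion, Finset.mem_range] at hx ⊢
            exact fun hxB => hx ⟨i, hik, hxB⟩
          · simp
        exact Set.disjoint_left.mpr fun x hxi hxj => (hBi hxj) (hAsub i hik hxi)
      · have : A j = ∅ := by
          rw [hA]
          have h1 : ¬ (j < k) := by omega
          have h2 : ¬ (j = k) := by omega
          simp [h1, h2]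
        simp [this]
    intro i j hij
    rcases lt_or_gt_of_ne hij with h | h
    · exact key i j h
    · exact (key j i h).symm
  · -- small diameter
    intro i hi x hx y hy
    have hx' := hAsub i hi hx
    have hy' := hAsub i hi hy
    rw [hB] at hx' hy'
    have := dist_triangle x (u i) y
    rw [Metric.mem_ball] at hx' hy'
    have h1 : dist x (u i) < ε/2 := lt_trans hx' (hr i).2
    have h2 : dist (u i) y < ε/2 := lt_trans (by rwa [dist_comm] at hy') (hr i).2
    linarith
  · -- null frontiers
    intro i
    simp only [hA]
    split_ifs with h1 h2
    · refine le_antisymm ?_ (zero_le)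
      calc μ (frontier (B i \ ⋃ j ∈ Finset.range i, B j))
          ≤ μ (frontier (B i) ∪ frontier ((⋃ j ∈ Finset.range i, B j)ᶜ)) := by
            apply measure_mono
            rw [Set.diff_eq]
            exact (frontier_inter_subset _ _).trans
              (Set.union_subset_union (Set.inter_subset_left) (Set.inter_subset_right))
        _ ≤ μ (frontier (B i)) + μ (frontier ((⋃ j ∈ Finset.range i, B j)ᶜ)) := measure_union_le _ _
        _ = 0 := by
            rw [frontier_compl, hr0 i, null_frontier_biUnion μ B hr0]; simp
    · rw [frontier_compl]
      exact null_frontier_biUnion μ B hr0 _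
    · simp
  · -- covers
    apply Set.eq_univ_of_forall
    intro x
    rcases Classical.em (x ∈ ⋃ j ∈ Finset.range k, B j) with hx | hx
    · simp only [Set.mem_iUnion, Finset.mem_range] at hx
      have hex : ∃ i, i < k ∧ x ∈ B i := by
        obtain ⟨i, hi1, hi2⟩ := hx
        exact ⟨i, hi1, hi2⟩
      classical
      let i₀ := Nat.find hex
      have hi₀ := Nat.find_spec hex
      refine Set.mem_iUnion.mpr ⟨i₀, ?_⟩
      rw [show A i₀ = B i₀ \ ⋃ j ∈ Finset.range i₀, B j by rw [hA]; exact if_pos hi₀.1]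
      refine ⟨hi₀.2, ?_⟩
      simp only [Set.mem_iUnion, Finset.mem_range, not_exists]
      intro j hj hxj
      exact Nat.find_min hex hj ⟨lt_trans hj hi₀.1, hxj⟩
    · refine Set.mem_iUnion.mpr ⟨k, ?_⟩
      have hAk : A k = (⋃ j ∈ Finset.range k, B j)ᶜ := by simp [hA]
      rw [hAk]
      exact hx
  · intro i hi
    simp only [hA]
    have h1 : ¬ (i < k) := by omega
    have h2 : ¬ (i = k) := by omega
    simp [h1, h2]
  · -- remainder small
    have hAk : A k = (⋃ j ∈ Finset.range k, B j)ᶜ := by simp [hA]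
    rw [hAk]
    have := measure_compl (μ := μ) (Finset.measurableSet_biUnion _ (fun _ _ => measurableSet_ball : ∀ i ∈ Finset.range k, MeasurableSet (B i))) (measure_ne_top μ _)
    rw [this, measure_univ]
    calc (1 : ℝ≥0∞) - μ (⋃ i ∈ Finset.range k, B i) ≤ 1 - (1 - ENNReal.ofReal ε) :=
          tsub_le_tsub_left hk.le 1
      _ ≤ ENNReal.ofReal ε := by
          rw [tsub_le_iff_right]
          rcases le_total (ENNReal.ofReal ε) 1 with h | h
          · rw [add_comm, tsub_add_cancel_of_le h]
          · exact le_add_right h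

private lemma helper1 {a b x : ℝ≥0∞} (ha : a ≠ ∞) (hb : b ≠ ∞) (hx : x ≤ a) :
    (min a b * a⁻¹ * b⁻¹) * (x * b) + ((a - min a b) * a⁻¹) * x = x := by
  rcases eq_or_ne a 0 with ha0 | ha0
  · have : x = 0 := le_antisymm (ha0 ▸ hx) (zero_le)
    simp [this]
  rcases eq_or_ne b 0 with hb0 | hb0
  · simp only [hb0, min_eq_right (zero_le : (0:ℝ≥0∞) ≤ a), tsub_zero]
    simp [ENNReal.mul_inv_cancel ha0 ha]
  · have hbb : b⁻¹ * b = 1 := ENNReal.inv_mul_cancel hb0 hb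
    have : (min a b * a⁻¹ * b⁻¹) * (x * b) = min a b * a⁻¹ * x := by
      calc (min a b * a⁻¹ * b⁻¹) * (x * b) = min a b * a⁻¹ * x * (b⁻¹ * b) := by ring
        _ = min a b * a⁻¹ * x := by rw [hbb, mul_one]
    rw [this]
    calc min a b * a⁻¹ * x + (a - min a b) * a⁻¹ * x
        = (min a b + (a - min a b)) * a⁻¹ * x := by ring
      _ = a * a⁻¹ * x := by rw [add_tsub_cancel_of_le (min_le_left a b)]
      _ = x := by rw [ENNReal.mul_inv_cancel ha0 ha, one_mul]

private lemma helper2 {a c : ℝ≥0∞} (ha : a ≠ ∞) (hc : c ≤ a) :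
    ((a - c) * a⁻¹) * a = a - c := by
  rcases eq_or_ne a 0 with ha0 | ha0
  · have : c = 0 := le_antisymm (ha0 ▸ hc) (zero_le)
    simp [ha0, this]
  · rw [mul_assoc, ENNReal.inv_mul_cancel ha0 ha, mul_one]

private lemma helper1' {a b x : ℝ≥0∞} (ha : a ≠ ∞) (hb : b ≠ ∞) (hx : x ≤ b) :
    (min a b * a⁻¹ * b⁻¹) * (a * x) + ((b - min a b) * b⁻¹) * x = x := by
  have h1 := helper1 hb ha hx
  rw [min_comm b a] at h1
  have h2 : (min a b * a⁻¹ * b⁻¹) * (a * x) = (min a b * b⁻¹ * a⁻¹) * (x * a) := by ring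
  rw [h2, h1]

private lemma helper3 {a : ℝ≥0∞} (ha : a ≠ ∞) : a⁻¹ * a ≤ 1 := by
  rcases eq_or_ne a 0 with h | h
  · simp [h]
  · rw [ENNReal.inv_mul_cancel h ha]

/-- construction of a near-diagonal coupling from a partition -/
lemma coupling_of_partition {α : Type*} [MetricSpace α] [MeasurableSpace α] [BorelSpace α]
    [SecondCountableTopology α]
    (m μM : Measure α) [IsProbabilityMeasure m] [IsProbabilityMeasure μM]
    {ε : ℝ} (hε : 0 < ε) (k : ℕ) (A : ℕ → Set α)
    (hmeas : ∀ i, MeasurableSet (A i))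
    (hdisj : Pairwise (Function.onFun Disjoint A))
    (hdiam : ∀ i < k, ∀ x ∈ A i, ∀ y ∈ A i, dist x y ≤ ε)
    (hcover : (⋃ i, A i) = univ) (hempty : ∀ i, k < i → A i = ∅)
    (hrem : μM (A k) ≤ ENNReal.ofReal ε)
    (hclose : ∀ i ∈ Finset.range (k+1), μM (A i) ≤ m (A i) + ENNReal.ofReal ε / (k+1)) :
    ∃ γ : Measure (α × α), IsProbabilityMeasure γ ∧
      γ.map Prod.fst = m ∧ γ.map Prod.snd = μM ∧
      ∫⁻ p, min (edist p.1 p.2) 1 ∂γ ≤ 3 * ENNReal.ofReal ε := by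
  classical
  set I := Finset.range (k+1) with hI
  -- basic facts
  have hcover' : (⋃ i ∈ I, A i) = univ := by
    rw [← hcover]
    ext x
    simp only [Set.mem_iUnion, Finset.mem_range, hI]
    constructor
    · rintro ⟨i, hi, hx⟩; exact ⟨i, hx⟩
    · rintro ⟨i, hx⟩
      by_cases hik : i < k + 1
      · exact ⟨i, hik, hx⟩
      · exact absurd hx (by rw [hempty i (by omega)]; exact Set.notMem_empty x)
  have hdisj' : ∀ s : Set α, MeasurableSet s → ∀ ν : Measure α, ν s = ∑ i ∈ I, ν (s ∩ A i) := by
    intro s hs ν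
    have : s = ⋃ i ∈ I, s ∩ A i := by
      rw [← Set.inter_iUnion₂, hcover', Set.inter_univ]
    conv_lhs => rw [this]
    rw [measure_biUnion_finset]
    · intro i hi j hj hij
      exact (hdisj hij).mono Set.inter_subset_right Set.inter_subset_right
    · exact fun i _ => hs.inter (hmeas i)
  have hsum_m : ∑ i ∈ I, m (A i) = 1 := by
    have := hdisj' univ MeasurableSet.univ m
    simp only [Set.univ_inter] at this
    rw [← this, measure_univ]
  have hsum_μM : ∑ i ∈ I, μM (A i) = 1 := by
    have := hdisj' univ MeasurableSet.univ μM
    simp only [Set.univ_inter] at this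
    rw [← this, measure_univ]
  -- definitions
  set c : ℕ → ℝ≥0∞ := fun i => min (m (A i)) (μM (A i)) with hc
  set coef : ℕ → ℝ≥0∞ := fun i => c i * (m (A i))⁻¹ * (μM (A i))⁻¹ with hcoef
  set r : ℝ≥0∞ := 1 - ∑ i ∈ I, c i with hrdef
  set ρn : Measure α := ∑ i ∈ I, ((m (A i) - c i) * (m (A i))⁻¹) • m.restrict (A i) with hρn
  set ρM : Measure α := ∑ i ∈ I, ((μM (A i) - c i) * (μM (A i))⁻¹) • μM.restrict (A i) with hρM
  set γ : Measure (α × α) :=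
    (∑ i ∈ I, coef i • ((m.restrict (A i)).prod (μM.restrict (A i)))) + r⁻¹ • (ρn.prod ρM)
    with hγ
  have hcsum_le : ∑ i ∈ I, c i ≤ 1 := by
    rw [← hsum_m]
    exact Finset.sum_le_sum (fun i _ => min_le_left _ _)
  have hrne : r ≠ ∞ := by
    rw [hrdef]
    exact (tsub_le_self.trans_lt ENNReal.one_lt_top).ne
  -- masses of residuals
  have hρn_univ : ρn univ = r := by
    rw [hρn]
    simp only [Measure.coe_finset_sum, Finset.sum_apply, Measure.smul_apply, smul_eq_mul,
      Measure.restrict_apply_univ]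
    have : ∀ i ∈ I, (m (A i) - c i) * (m (A i))⁻¹ * m (A i) = m (A i) - c i :=
      fun i _ => helper2 (measure_ne_top m _) (min_le_left _ _)
    rw [Finset.sum_congr rfl this, hrdef, ← hsum_m]
    have key : ∑ i ∈ I, (m (A i) - c i) + ∑ i ∈ I, c i = ∑ i ∈ I, m (A i) := by
      rw [← Finset.sum_add_distrib]
      exact Finset.sum_congr rfl fun i _ => tsub_add_cancel_of_le (min_le_left _ _)
    exact ENNReal.eq_sub_of_add_eq (hcsum_le.trans_lt ENNReal.one_lt_top).ne key
  have hρM_univ : ρM univ = r := by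
    rw [hρM]
    simp only [Measure.coe_finset_sum, Finset.sum_apply, Measure.smul_apply, smul_eq_mul,
      Measure.restrict_apply_univ]
    have : ∀ i ∈ I, (μM (A i) - c i) * (μM (A i))⁻¹ * μM (A i) = μM (A i) - c i :=
      fun i _ => helper2 (measure_ne_top μM _) (min_le_right _ _)
    rw [Finset.sum_congr rfl this, hrdef, ← hsum_μM]
    have key : ∑ i ∈ I, (μM (A i) - c i) + ∑ i ∈ I, c i = ∑ i ∈ I, μM (A i) := by
      rw [← Finset.sum_add_distrib]
      exact Finset.sum_congr rfl fun i _ => tsub_add_cancel_of_le (min_le_right _ _)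
    exact ENNReal.eq_sub_of_add_eq (hcsum_le.trans_lt ENNReal.one_lt_top).ne key
  have hfin1 : IsFiniteMeasure ρn := ⟨by rw [hρn_univ]; exact hrne.lt_top⟩
  have hfin2 : IsFiniteMeasure ρM := ⟨by rw [hρM_univ]; exact hrne.lt_top⟩
  -- first marginal
  have hfst : γ.map Prod.fst = m := by
    ext s hs
    rw [Measure.map_apply measurable_fst hs]
    have hpre : (Prod.fst ⁻¹' s : Set (α × α)) = s ×ˢ univ := by ext p; simp
    have hρns : ρn s = ∑ i ∈ I, (m (A i) - c i) * (m (A i))⁻¹ * m (s ∩ A i) := by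
      rw [hρn]
      simp only [Measure.coe_finset_sum, Finset.sum_apply, Measure.smul_apply, smul_eq_mul,
        Measure.restrict_apply hs]
    rw [hpre, hγ, Measure.add_apply, Measure.smul_apply, smul_eq_mul,
      Measure.coe_finset_sum, Finset.sum_apply]
    simp only [Measure.smul_apply, smul_eq_mul, Measure.prod_prod,
      Measure.restrict_apply hs, Measure.restrict_apply_univ]
    rw [hρM_univ]
    have hres2 : r⁻¹ * (ρn s * r) = ρn s := by
      rcases eq_or_ne r 0 with hr0 | hr0
      · have h1 : ρn s ≤ ρn univ := measure_mono (subset_univ s)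
        rw [hρn_univ, hr0, le_zero_iff] at h1
        rw [h1, zero_mul, mul_zero]
      · rw [mul_comm (ρn s) r, ← mul_assoc, ENNReal.inv_mul_cancel hr0 hrne, one_mul]
    rw [hres2, hρns, ← Finset.sum_add_distrib]
    have : ∀ i ∈ I, coef i * (m (s ∩ A i) * μM (A i))
        + (m (A i) - c i) * (m (A i))⁻¹ * m (s ∩ A i) = m (s ∩ A i) := by
      intro i _
      exact helper1 (measure_ne_top m _) (measure_ne_top μM _)
        (measure_mono Set.inter_subset_right)
    rw [Finset.sum_congr rfl this]
    exact (hdisj' s hs m).symm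
  -- second marginal
  have hsnd : γ.map Prod.snd = μM := by
    ext s hs
    rw [Measure.map_apply measurable_snd hs]
    have hpre : (Prod.snd ⁻¹' s : Set (α × α)) = univ ×ˢ s := by ext p; simp
    have hρMs : ρM s = ∑ i ∈ I, (μM (A i) - c i) * (μM (A i))⁻¹ * μM (s ∩ A i) := by
      rw [hρM]
      simp only [Measure.coe_finset_sum, Finset.sum_apply, Measure.smul_apply, smul_eq_mul,
        Measure.restrict_apply hs]
    rw [hpre, hγ, Measure.add_apply, Measure.smul_apply, smul_eq_mul,
      Measure.coe_finset_sum, Finset.sum_apply]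
    simp only [Measure.smul_apply, smul_eq_mul, Measure.prod_prod,
      Measure.restrict_apply hs, Measure.restrict_apply_univ]
    rw [hρn_univ]
    have hres2 : r⁻¹ * (r * ρM s) = ρM s := by
      rcases eq_or_ne r 0 with hr0 | hr0
      · have h1 : ρM s ≤ ρM univ := measure_mono (subset_univ s)
        rw [hρM_univ, hr0, le_zero_iff] at h1
        rw [h1, mul_zero, mul_zero]
      · rw [← mul_assoc, ENNReal.inv_mul_cancel hr0 hrne, one_mul]
    rw [hres2, hρMs, ← Finset.sum_add_distrib]
    have : ∀ i ∈ I, coef i * (m (A i) * μM (s ∩ A i))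
        + (μM (A i) - c i) * (μM (A i))⁻¹ * μM (s ∩ A i) = μM (s ∩ A i) := by
      intro i _
      exact helper1' (measure_ne_top m _) (measure_ne_top μM _)
        (measure_mono Set.inter_subset_right)
    rw [Finset.sum_congr rfl this]
    exact (hdisj' s hs μM).symm
  -- probability measure
  have hγuniv : IsProbabilityMeasure γ := by
    constructor
    have : (γ.map Prod.fst) univ = γ univ := by
      rw [Measure.map_apply measurable_fst MeasurableSet.univ, Set.preimage_univ]
    rw [← this, hfst, measure_univ]
  -- the integral estimate
  refine ⟨γ, hγuniv, hfst, hsnd, ?_⟩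
  have hr_le : r ≤ ENNReal.ofReal ε := by
    have h1 : r ≤ ∑ i ∈ I, (μM (A i) - c i) := by
      rw [hrdef, tsub_le_iff_right]
      have key : ∑ i ∈ I, (μM (A i) - c i) + ∑ i ∈ I, c i = ∑ i ∈ I, μM (A i) := by
        rw [← Finset.sum_add_distrib]
        exact Finset.sum_congr rfl fun i _ => tsub_add_cancel_of_le (min_le_right _ _)
      rw [key, hsum_μM]
    have h2 : ∀ i ∈ I, μM (A i) - c i ≤ ENNReal.ofReal ε / (k+1) := by
      intro i hi
      rw [tsub_le_iff_right]
      rcases min_choice (m (A i)) (μM (A i)) with hmin | hmin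
      · rw [hc]
        simp only
        rw [hmin, add_comm]
        exact hclose i hi
      · rw [hc]
        simp only
        rw [hmin]
        exact le_add_left (le_refl _)
    calc r ≤ ∑ i ∈ I, (μM (A i) - c i) := h1
      _ ≤ ∑ _i ∈ I, ENNReal.ofReal ε / (k+1) := Finset.sum_le_sum h2
      _ = (k+1 : ℕ) * (ENNReal.ofReal ε / (k+1)) := by
          rw [Finset.sum_const, hI, Finset.card_range, nsmul_eq_mul]
      _ = ENNReal.ofReal ε := by
          push_cast
          refine ENNReal.mul_div_cancel ?_ (by simp)
          exact fun h => one_ne_zero (add_eq_zero.mp h).2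
  have hfle1 : ∀ p : α × α, min (edist p.1 p.2) 1 ≤ 1 := fun p => min_le_right _ _
  rw [hγ, lintegral_add_measure, lintegral_finset_sum_measure, lintegral_smul_measure]
  simp only [lintegral_smul_measure]
  -- residual bound
  have hresb : r⁻¹ * ∫⁻ p, min (edist p.1 p.2) 1 ∂(ρn.prod ρM) ≤ r := by
    have h1 : ∫⁻ p, min (edist p.1 p.2) 1 ∂(ρn.prod ρM) ≤ r * r := by
      calc ∫⁻ p, min (edist p.1 p.2) 1 ∂(ρn.prod ρM) ≤ ∫⁻ _, 1 ∂(ρn.prod ρM) :=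
            lintegral_mono hfle1
        _ = (ρn.prod ρM) univ := by rw [lintegral_one]
        _ = r * r := by
            rw [← Set.univ_prod_univ, Measure.prod_prod, hρn_univ, hρM_univ]
    rcases eq_or_ne r 0 with hr0 | hr0
    · have : ∫⁻ p, min (edist p.1 p.2) 1 ∂(ρn.prod ρM) = 0 := by
        rw [hr0, mul_zero, le_zero_iff] at h1
        exact h1
      rw [this, mul_zero]
      exact zero_le
    · calc r⁻¹ * ∫⁻ p, min (edist p.1 p.2) 1 ∂(ρn.prod ρM) ≤ r⁻¹ * (r * r) :=
            mul_le_mul_right h1 _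
        _ = r := by rw [← mul_assoc, ENNReal.inv_mul_cancel hr0 hrne, one_mul]
  -- piecewise bounds
  have hpiece : ∀ i ∈ I, coef i * ∫⁻ p, min (edist p.1 p.2) 1
      ∂((m.restrict (A i)).prod (μM.restrict (A i)))
      ≤ (if i < k then ENNReal.ofReal ε * c i else c i) := by
    intro i hi
    have hmass : ∀ (b : ℝ≥0∞), coef i * (b * (m (A i) * μM (A i))) ≤ b * c i := by
      intro b
      have : coef i * (b * (m (A i) * μM (A i)))
          = b * (c i * ((m (A i))⁻¹ * m (A i)) * ((μM (A i))⁻¹ * μM (A i))) := by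
        rw [hcoef]; ring
      rw [this]
      calc b * (c i * ((m (A i))⁻¹ * m (A i)) * ((μM (A i))⁻¹ * μM (A i)))
          ≤ b * (c i * 1 * 1) := by
            refine mul_le_mul_right ?_ b
            exact mul_le_mul (mul_le_mul_right (helper3 (measure_ne_top m _)) _)
              (helper3 (measure_ne_top μM _)) (zero_le) (zero_le)
        _ = b * c i := by rw [mul_one, mul_one]
    by_cases hik : i < k
    · rw [if_pos hik]
      have hbound : ∫⁻ p, min (edist p.1 p.2) 1 ∂((m.restrict (A i)).prod (μM.restrict (A i)))
          ≤ ENNReal.ofReal ε * (m (A i) * μM (A i)) := by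
        rw [Measure.prod_restrict]
        calc ∫⁻ p in (A i) ×ˢ (A i), min (edist p.1 p.2) 1 ∂(m.prod μM)
            ≤ ∫⁻ _ in (A i) ×ˢ (A i), ENNReal.ofReal ε ∂(m.prod μM) := by
              refine setLIntegral_mono measurable_const ?_
              intro p hp
              refine le_trans (min_le_left _ _) ?_
              rw [edist_dist]
              exact ENNReal.ofReal_le_ofReal (hdiam i hik p.1 hp.1 p.2 hp.2)
          _ = ENNReal.ofReal ε * (m (A i) * μM (A i)) := by
              rw [setLIntegral_const, Measure.prod_prod]
      exact le_trans (mul_le_mul_right hbound _) (hmass _)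
    · rw [if_neg hik]
      have hbound : ∫⁻ p, min (edist p.1 p.2) 1 ∂((m.restrict (A i)).prod (μM.restrict (A i)))
          ≤ 1 * (m (A i) * μM (A i)) := by
        calc ∫⁻ p, min (edist p.1 p.2) 1 ∂((m.restrict (A i)).prod (μM.restrict (A i)))
            ≤ ∫⁻ _, 1 ∂((m.restrict (A i)).prod (μM.restrict (A i))) := lintegral_mono hfle1
          _ = 1 * (m (A i) * μM (A i)) := by
              rw [lintegral_one, ← Set.univ_prod_univ, Measure.prod_prod,
                Measure.restrict_apply_univ, Measure.restrict_apply_univ, one_mul]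
      exact le_trans (le_trans (mul_le_mul_right hbound _) (hmass _)) (by rw [one_mul])
  -- summing up
  have hsum_bound : ∑ i ∈ I, coef i * ∫⁻ p, min (edist p.1 p.2) 1
      ∂((m.restrict (A i)).prod (μM.restrict (A i)))
      ≤ ENNReal.ofReal ε + ENNReal.ofReal ε := by
    calc ∑ i ∈ I, coef i * ∫⁻ p, min (edist p.1 p.2) 1
          ∂((m.restrict (A i)).prod (μM.restrict (A i)))
        ≤ ∑ i ∈ I, (if i < k then ENNReal.ofReal ε * c i else c i) :=
          Finset.sum_le_sum hpiece
      _ = (∑ i ∈ Finset.range k, (if i < k then ENNReal.ofReal ε * c i else c i))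
          + (if k < k then ENNReal.ofReal ε * c k else c k) := by
          rw [hI, Finset.sum_range_succ]
      _ ≤ ENNReal.ofReal ε * (∑ i ∈ Finset.range k, c i) + c k := by
          rw [if_neg (lt_irrefl k), Finset.mul_sum]
          refine add_le_add ?_ (le_refl _)
          refine Finset.sum_le_sum ?_
          intro i hi
          rw [if_pos (Finset.mem_range.mp hi)]
      _ ≤ ENNReal.ofReal ε * 1 + ENNReal.ofReal ε := by
          refine add_le_add (mul_le_mul_right ?_ _) ((min_le_right _ _).trans hrem)
          refine le_trans ?_ hcsum_le
          refine Finset.sum_le_sum_of_subset ?_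
          rw [hI]
          exact Finset.range_subset_range.mpr (Nat.le_succ k)
      _ = ENNReal.ofReal ε + ENNReal.ofReal ε := by rw [mul_one]
  calc (∑ i ∈ I, coef i * ∫⁻ p, min (edist p.1 p.2) 1
        ∂((m.restrict (A i)).prod (μM.restrict (A i))))
      + r⁻¹ * ∫⁻ p, min (edist p.1 p.2) 1 ∂(ρn.prod ρM)
      ≤ (ENNReal.ofReal ε + ENNReal.ofReal ε) + ENNReal.ofReal ε :=
        add_le_add hsum_bound (hresb.trans hr_le)
    _ = 3 * ENNReal.ofReal ε := by ring

lemma exists_coupling_close_s14 {α : Type*} [MetricSpace α] [SecondCountableTopology α]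
    [MeasurableSpace α] [BorelSpace α]
    {μs : ℕ → ProbabilityMeasure α} {μ : ProbabilityMeasure α}
    (h : Tendsto μs atTop (𝓝 μ)) {ε : ℝ} (hε : 0 < ε) :
    ∀ᶠ n in atTop, ∃ γ : Measure (α × α), IsProbabilityMeasure γ ∧
      γ.map Prod.fst = (μs n).toMeasure ∧ γ.map Prod.snd = μ.toMeasure ∧
      ∫⁻ p, min (edist p.1 p.2) 1 ∂γ ≤ ENNReal.ofReal ε := by
  have hε3 : 0 < ε/3 := by linarith
  obtain ⟨k, A, hmeas, hdisj, hdiam, hfront, hcover, hempty, hrem⟩ :=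
    exists_partition (μ.toMeasure) hε3
  have hclose : ∀ᶠ n in atTop, ∀ i ∈ Finset.range (k+1),
      μ.toMeasure (A i) ≤ (μs n).toMeasure (A i) + ENNReal.ofReal (ε/3) / (k+1) := by
    rw [Filter.eventually_all_finset]
    intro i _
    have htend := ProbabilityMeasure.tendsto_measure_of_null_frontier_of_tendsto' h (hfront i)
    set a := μ.toMeasure (A i) with ha
    set δ : ℝ≥0∞ := ENNReal.ofReal (ε/3) / (k+1) with hδdef
    have hδ : 0 < δ := ENNReal.div_pos (ENNReal.ofReal_pos.mpr hε3).ne' (by simp)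
    rcases le_or_gt a δ with hle | hlt
    · exact Eventually.of_forall fun n => le_add_left hle
    · have h2 : a - δ < a := ENNReal.sub_lt_self (measure_ne_top _ _)
        (by intro h0; rw [h0] at hlt; exact absurd hlt (not_lt.mpr (zero_le))) hδ.ne'
      filter_upwards [htend.eventually_const_lt h2] with n hn
      calc a = (a - δ) + δ := (tsub_add_cancel_of_le hlt.le).symm
        _ ≤ (μs n).toMeasure (A i) + δ := add_le_add_left hn.le _
  filter_upwards [hclose] with n hn
  obtain ⟨γ, h1, h2, h3, h4⟩ := coupling_of_partition (μs n).toMeasure μ.toMeasure hε3 k A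
    hmeas hdisj hdiam hcover hempty hrem hn
  refine ⟨γ, h1, h2, h3, h4.trans (le_of_eq ?_)⟩
  rw [show (3 : ℝ≥0∞) = ENNReal.ofReal 3 by simp [ENNReal.ofReal_ofNat],
    ← ENNReal.ofReal_mul (by norm_num : (0:ℝ) ≤ 3)]
  rw [show 3*(ε/3) = ε by ring]

lemma exists_lipschitz_approx {α : Type*} [MetricSpace α] [Nonempty α]
    (Φ : α → ℝ) (hc : Continuous Φ) {C : ℝ} (hb : ∀ p, |Φ p| ≤ C) :
    ∃ F : ℕ → α → ℝ, (∀ k : ℕ, LipschitzWith (k : ℝ≥0) (F k)) ∧ (∀ k p, |F k p| ≤ C) ∧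
      (∀ k p, F k p ≤ Φ p) ∧ (∀ p, Tendsto (fun k => F k p) atTop (𝓝 (Φ p))) := by
  set F : ℕ → α → ℝ := fun k p => ⨅ q, Φ q + k * dist p q with hF
  have hbd : ∀ (k : ℕ) (p : α), BddBelow (Set.range fun q => Φ q + k * dist p q) := by
    intro k p
    refine ⟨-C, ?_⟩
    rintro w ⟨q, rfl⟩
    have h1 := (abs_le.mp (hb q)).1
    have h2 : (0:ℝ) ≤ k * dist p q := by positivity
    simp only
    linarith
  have hle : ∀ (k : ℕ) p, F k p ≤ Φ p := by
    intro k p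
    have := ciInf_le (hbd k p) p
    simpa using this
  have hlow : ∀ (k : ℕ) p, -C ≤ F k p := by
    intro k p
    refine le_ciInf fun q => ?_
    have h1 := (abs_le.mp (hb q)).1
    have h2 : (0:ℝ) ≤ k * dist p q := by positivity
    linarith
  refine ⟨F, ?_, ?_, hle, ?_⟩
  · intro k
    refine LipschitzWith.of_le_add_mul _ fun x y => ?_
    rw [← sub_le_iff_le_add]
    refine le_ciInf fun q => ?_
    rw [sub_le_iff_le_add]
    have hcast : ((k : ℝ≥0) : ℝ) = (k : ℝ) := by norm_cast
    calc F k x ≤ Φ q + k * dist x q := ciInf_le (hbd k x) q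
      _ ≤ Φ q + k * dist y q + ((k:ℝ≥0):ℝ) * dist x y := by
          rw [hcast]
          have ht := dist_triangle x y q
          have hk : (0:ℝ) ≤ k := Nat.cast_nonneg k
          nlinarith
  · intro k p
    rw [abs_le]
    exact ⟨hlow k p, (hle k p).trans (abs_le.mp (hb p)).2⟩
  · intro p
    rw [Metric.tendsto_atTop]
    intro ε hε
    obtain ⟨δ, hδpos, hδ'⟩ := Metric.continuous_iff.mp hc p (ε/2) (by linarith)
    refine ⟨Nat.ceil ((2*C)/δ), fun k hk => ?_⟩
    have hFk : Φ p - ε/2 ≤ F k p := by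
      refine le_ciInf fun q => ?_
      rcases lt_or_ge (dist q p) δ with hq | hq
      · have h3 := hδ' q hq
        rw [Real.dist_eq] at h3
        have h4 := abs_lt.mp h3
        have h2 : (0:ℝ) ≤ k * dist p q := by positivity
        linarith [h4.1]
      · have hkC : (2*C)/δ ≤ (k:ℝ) := le_trans (Nat.le_ceil _) (by exact_mod_cast hk)
        have h2C : 2*C ≤ (k:ℝ) * δ := by
          rw [div_le_iff₀ hδpos] at hkC; linarith
        have hdpq : δ ≤ dist p q := by rwa [dist_comm p q]
        have h5 : (k:ℝ) * δ ≤ k * dist p q := by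
          have hk : (0:ℝ) ≤ k := Nat.cast_nonneg k
          nlinarith
        have h1 := (abs_le.mp (hb q)).1
        have hp2 := (abs_le.mp (hb p)).2
        linarith
    have hup := hle k p
    rw [Real.dist_eq, abs_lt]
    constructor <;> linarith


lemma map_compProd_comap {α β Ω : Type*} [MeasurableSpace α] [MeasurableSpace β] [MeasurableSpace Ω]
    (m : Measure α) [SFinite m] {g : α → β} (hg : Measurable g)
    (κ : Kernel β Ω) [IsSFiniteKernel κ] :
    (m ⊗ₘ (κ.comap g hg)).map (fun p => (g p.1, p.2)) = m.map g ⊗ₘ κ := by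
  have hm : Measurable (fun p : α × Ω => (g p.1, p.2)) :=
    (hg.comp measurable_fst).prodMk measurable_snd
  ext s hs
  rw [Measure.map_apply hm hs, Measure.compProd_apply (hs.preimage hm),
    Measure.compProd_apply hs, lintegral_map (Kernel.measurable_kernel_prodMk_left hs) hg]
  rfl

lemma compProd_prob {α β : Type*} [MeasurableSpace α] [MeasurableSpace β]
    (m : Measure α) [IsProbabilityMeasure m] (κ : Kernel α β) [IsMarkovKernel κ] :
    IsProbabilityMeasure (m ⊗ₘ κ) := by
  constructor
  have h1 := Measure.fst_compProd m κ
  have h2 : (m ⊗ₘ κ).fst univ = (m ⊗ₘ κ) univ := Measure.fst_univ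
  rw [← h2, h1, measure_univ]

lemma integrable_of_bound {β : Type*} [MeasurableSpace β] (μ : Measure β) [IsFiniteMeasure μ]
    (f : β → ℝ) (hf : AEStronglyMeasurable f μ) (C : ℝ) (h : ∀ x, |f x| ≤ C) :
    Integrable f μ :=
  ⟨hf, MeasureTheory.HasFiniteIntegral.of_bounded
    (Eventually.of_forall fun x => by rw [Real.norm_eq_abs]; exact h x)⟩

lemma ofReal_min_dist {β : Type*} [MetricSpace β] (a b : β) :
    ENNReal.ofReal (min (dist a b) 1) = min (edist a b) 1 := by
  rcases le_total (dist a b) 1 with h | h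
  · rw [min_eq_left h, edist_dist, min_eq_left]
    exact le_trans (ENNReal.ofReal_le_ofReal h) (by simp)
  · rw [min_eq_right h, ENNReal.ofReal_one, min_eq_right]
    rw [edist_dist]
    calc (1 : ℝ≥0∞) = ENNReal.ofReal 1 := by simp
      _ ≤ ENNReal.ofReal (dist a b) := ENNReal.ofReal_le_ofReal h

lemma real_min_int {β : Type*} [MeasurableSpace β] [MetricSpace β] [BorelSpace β]
    [SecondCountableTopology β] (ν : Measure (β × β)) [IsFiniteMeasure ν] :
    ∫ p, min (dist p.1 p.2) 1 ∂ν = (∫⁻ p, min (edist p.1 p.2) 1 ∂ν).toReal := by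
  rw [integral_eq_lintegral_of_nonneg_ae
    (Eventually.of_forall fun p => le_min dist_nonneg zero_le_one)
    ((continuous_dist.comp (continuous_fst.prodMk continuous_snd)).min
      continuous_const).aestronglyMeasurable]
  congr 1
  refine lintegral_congr fun p => ?_
  exact ofReal_min_dist p.1 p.2

lemma glue_estimate {X Y : Type*}
    [MetricSpace X] [CompleteSpace X] [SecondCountableTopology X] [MeasurableSpace X] [BorelSpace X]
    [MetricSpace Y] [CompleteSpace Y] [SecondCountableTopology Y] [MeasurableSpace Y] [BorelSpace Y]
    (π' : Measure (X × Y)) [IsProbabilityMeasure π']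
    (γ : Measure (X × X)) [IsProbabilityMeasure γ]
    (δ : Measure (Y × Y)) [IsProbabilityMeasure δ]
    (hγ2 : γ.map Prod.snd = π'.map Prod.fst)
    (hδ1 : δ.map Prod.fst = π'.map Prod.snd) :
    ∃ π'' : Measure (X × Y), IsProbabilityMeasure π'' ∧
      π''.map Prod.fst = γ.map Prod.fst ∧ π''.map Prod.snd = δ.map Prod.snd ∧
      ∀ (Ψ : X × Y → ℝ) (L C : ℝ), 0 ≤ L → 0 ≤ C →
        (∀ a b, |Ψ a - Ψ b| ≤ L * dist a b) → (∀ p, |Ψ p| ≤ C) →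
        ∫ q, Ψ q ∂π' ≤ (∫ q, Ψ q ∂π'') +
          (max L (2*C)) * ((∫⁻ p, min (edist p.1 p.2) 1 ∂γ).toReal
            + (∫⁻ p, min (edist p.1 p.2) 1 ∂δ).toReal) := by
  have hne : Nonempty (X × Y) := by
    rcases isEmpty_or_nonempty (X × Y) with h | h
    · exfalso
      have h1 : π' univ = 1 := measure_univ
      rw [Set.univ_eq_empty_iff.mpr h, measure_empty] at h1
      exact zero_ne_one h1
    · exact h
  haveI : Nonempty X := ⟨(Classical.arbitrary (X × Y)).1⟩
  haveI : Nonempty Y := ⟨(Classical.arbitrary (X × Y)).2⟩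
  set κ₁ : Kernel X Y := π'.condKernel with hκ₁
  set κ₂ : Kernel Y Y := δ.condKernel with hκ₂
  set θ₁ : Measure ((X × X) × Y) := γ ⊗ₘ (κ₁.comap Prod.snd measurable_snd) with hθ₁
  haveI : IsProbabilityMeasure θ₁ := compProd_prob _ _
  set θ₂ : Measure (((X × X) × Y) × Y) :=
    θ₁ ⊗ₘ (κ₂.comap (fun p => p.2) measurable_snd) with hθ₂
  haveI : IsProbabilityMeasure θ₂ := compProd_prob _ _
  -- (a)
  have ha : θ₁.map (fun p => (p.1.2, p.2)) = π' := by
    rw [hθ₁, map_compProd_comap γ measurable_snd κ₁, hγ2]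
    have : π'.map Prod.fst = π'.fst := rfl
    rw [this, hκ₁, Measure.disintegrate]
  -- (b)
  have hb : θ₁.map Prod.fst = γ := by
    rw [hθ₁]
    exact Measure.fst_compProd γ _
  -- (c)
  have hc : θ₂.map Prod.fst = θ₁ := Measure.fst_compProd θ₁ _
  -- (d)
  have hd : θ₂.map (fun q => (q.1.2, q.2)) = δ := by
    rw [hθ₂, map_compProd_comap θ₁ measurable_snd κ₂]
    have hmb1 : Measurable (fun p : (X × X) × Y => (p.1.2, p.2)) :=
      (measurable_snd.comp measurable_fst).prodMk measurable_snd
    have h1 : θ₁.map (Prod.snd : (X × X) × Y → Y) = π'.map Prod.snd := by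
      ext s hs
      rw [Measure.map_apply measurable_snd hs, Measure.map_apply measurable_snd hs, ← ha,
        Measure.map_apply hmb1 (measurable_snd hs)]
      rfl
    rw [h1, ← hδ1]
    have : δ.map Prod.fst = δ.fst := rfl
    rw [this, hκ₂, Measure.disintegrate]
  -- the candidate
  set π'' : Measure (X × Y) := θ₂.map (fun q => (q.1.1.1, q.2)) with hπ''
  have hmble : Measurable (fun q : ((X × X) × Y) × Y => (q.1.1.1, q.2)) :=
    ((measurable_fst.comp (measurable_fst.comp measurable_fst)).prodMk measurable_snd)
  haveI : IsProbabilityMeasure π'' := by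
    rw [hπ'']
    exact Measure.isProbabilityMeasure_map hmble.aemeasurable
  refine ⟨π'', inferInstance, ?_, ?_, ?_⟩
  · -- fst marginal
    ext s hs
    rw [hπ'', Measure.map_apply measurable_fst hs, Measure.map_apply hmble (measurable_fst hs)]
    have e1 : ((fun q : ((X × X) × Y) × Y => (q.1.1.1, q.2)) ⁻¹' (Prod.fst ⁻¹' s))
        = Prod.fst ⁻¹' (Prod.fst ⁻¹' (Prod.fst ⁻¹' s)) := rfl
    rw [e1, ← Measure.map_apply measurable_fst (measurable_fst (measurable_fst hs)), hc,
      ← Measure.map_apply measurable_fst (measurable_fst hs), hb,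
      Measure.map_apply measurable_fst hs]
  · -- snd marginal
    ext s hs
    have hmb2 : Measurable (fun q : ((X × X) × Y) × Y => (q.1.2, q.2)) :=
      (measurable_snd.comp measurable_fst).prodMk measurable_snd
    rw [hπ'', Measure.map_apply measurable_snd hs, Measure.map_apply hmble (measurable_snd hs)]
    have e1 : ((fun q : ((X × X) × Y) × Y => (q.1.1.1, q.2)) ⁻¹' (Prod.snd ⁻¹' s))
        = (fun q : ((X × X) × Y) × Y => (q.1.2, q.2)) ⁻¹' (Prod.snd ⁻¹' s) := rfl
    rw [e1, ← Measure.map_apply hmb2 (measurable_snd hs), hd,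
      Measure.map_apply measurable_snd hs]
  · -- the integral estimate
    intro Ψ L C hL0 hC0 hLip hbd
    set M := max L (2*C) with hM
    have hM0 : 0 ≤ M := le_trans hL0 (le_max_left _ _)
    -- continuity of Ψ
    have hΨlip : LipschitzWith (Real.toNNReal L) Ψ := by
      refine LipschitzWith.of_dist_le_mul fun a b => ?_
      rw [Real.dist_eq]
      calc |Ψ a - Ψ b| ≤ L * dist a b := hLip a b
        _ ≤ (Real.toNNReal L) * dist a b := by
            refine mul_le_mul_of_nonneg_right ?_ dist_nonneg
            exact Real.le_coe_toNNReal L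
    have hΨc : Continuous Ψ := hΨlip.continuous
    -- express π' as a pushforward of θ₂
    have hg₂ : Measurable (fun q : ((X × X) × Y) × Y => (q.1.1.2, q.1.2)) :=
      ((measurable_snd.comp (measurable_fst.comp measurable_fst)).prodMk
        (measurable_snd.comp measurable_fst))
    have hπ'θ : θ₂.map (fun q : ((X × X) × Y) × Y => (q.1.1.2, q.1.2)) = π' := by
      ext s hs
      rw [Measure.map_apply hg₂ hs]
      have e1 : ((fun q : ((X × X) × Y) × Y => (q.1.1.2, q.1.2)) ⁻¹' s)
          = Prod.fst ⁻¹' ((fun p : (X × X) × Y => (p.1.2, p.2)) ⁻¹' s) := rfl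
      have hmb1 : Measurable (fun p : (X × X) × Y => (p.1.2, p.2)) :=
        (measurable_snd.comp measurable_fst).prodMk measurable_snd
      rw [e1, ← Measure.map_apply measurable_fst (hmb1 hs), hc,
        ← Measure.map_apply hmb1 hs, ha]
    -- express γ and δ as pushforwards of θ₂
    have hg₃ : Measurable (fun q : ((X × X) × Y) × Y => q.1.1) :=
      measurable_fst.comp measurable_fst
    have hγθ : θ₂.map (fun q : ((X × X) × Y) × Y => q.1.1) = γ := by
      ext s hs
      rw [Measure.map_apply hg₃ hs]
      have e1 : ((fun q : ((X × X) × Y) × Y => q.1.1) ⁻¹' s)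
          = Prod.fst ⁻¹' (Prod.fst ⁻¹' s) := rfl
      rw [e1, ← Measure.map_apply measurable_fst (measurable_fst hs), hc,
        ← Measure.map_apply measurable_fst hs, hb]
    have hg₄ : Measurable (fun q : ((X × X) × Y) × Y => ((q.1.2, q.2) : Y × Y)) :=
      (measurable_snd.comp measurable_fst).prodMk measurable_snd
    -- integrals as integrals over θ₂
    have hint1 : ∫ q, Ψ q ∂π' = ∫ q, Ψ (q.1.1.2, q.1.2) ∂θ₂ := by
      rw [← hπ'θ, integral_map hg₂.aemeasurable hΨc.aestronglyMeasurable]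
    have hint2 : ∫ q, Ψ q ∂π'' = ∫ q, Ψ (q.1.1.1, q.2) ∂θ₂ := by
      rw [hπ'', integral_map hmble.aemeasurable hΨc.aestronglyMeasurable]
    have hcont_min : Continuous fun p : X × X => min (dist p.1 p.2) 1 :=
      (continuous_dist.comp (continuous_fst.prodMk continuous_snd)).min continuous_const
    have hcont_minY : Continuous fun p : Y × Y => min (dist p.1 p.2) 1 :=
      (continuous_dist.comp (continuous_fst.prodMk continuous_snd)).min continuous_const
    have hint3 : ∫ p, min (dist p.1 p.2) 1 ∂γ = ∫ q, min (dist q.1.1.1 q.1.1.2) 1 ∂θ₂ := by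
      rw [← hγθ, integral_map hg₃.aemeasurable hcont_min.aestronglyMeasurable]
    have hint4 : ∫ p, min (dist p.1 p.2) 1 ∂δ = ∫ q, min (dist q.1.2 q.2) 1 ∂θ₂ := by
      rw [← hd, integral_map hg₄.aemeasurable hcont_minY.aestronglyMeasurable]
    -- pointwise estimate
    have hpt : ∀ q : ((X × X) × Y) × Y, Ψ (q.1.1.2, q.1.2) - Ψ (q.1.1.1, q.2)
        ≤ M * (min (dist q.1.1.1 q.1.1.2) 1 + min (dist q.1.2 q.2) 1) := by
      intro q
      set dx := dist q.1.1.1 q.1.1.2 with hdx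
      set dy := dist q.1.2 q.2 with hdy
      have hdx0 : 0 ≤ dx := dist_nonneg
      have hdy0 : 0 ≤ dy := dist_nonneg
      have hdist : dist ((q.1.1.2, q.1.2) : X × Y) ((q.1.1.1, q.2) : X × Y)
          = max (dist q.1.1.2 q.1.1.1) (dist q.1.2 q.2) := Prod.dist_eq
      rcases le_or_gt dx 1 with hx1 | hx1
      · rcases le_or_gt dy 1 with hy1 | hy1
        · -- both small
          rw [min_eq_left hx1, min_eq_left hy1]
          have h1 : Ψ (q.1.1.2, q.1.2) - Ψ (q.1.1.1, q.2) ≤ L * (max dx dy) := by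
            calc Ψ (q.1.1.2, q.1.2) - Ψ (q.1.1.1, q.2) ≤ |Ψ (q.1.1.2, q.1.2) - Ψ (q.1.1.1, q.2)| :=
                  le_abs_self _
              _ ≤ L * dist ((q.1.1.2, q.1.2) : X × Y) ((q.1.1.1, q.2) : X × Y) := hLip _ _
              _ = L * (max (dist q.1.1.2 q.1.1.1) dy) := by rw [hdist]
              _ = L * (max dx dy) := by rw [dist_comm q.1.1.2 q.1.1.1]
          have h2 : max dx dy ≤ dx + dy := max_le (by linarith) (by linarith)
          have h3 : L ≤ M := le_max_left _ _
          calc Ψ (q.1.1.2, q.1.2) - Ψ (q.1.1.1, q.2) ≤ L * (max dx dy) := h1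
            _ ≤ M * (dx + dy) := by nlinarith [le_max_left dx dy, le_max_right dx dy]
        · -- dy big
          have hsum : (1:ℝ) ≤ min dx 1 + min dy 1 := by
            rw [min_eq_right hy1.le]
            have : 0 ≤ min dx 1 := le_min hdx0 zero_le_one
            linarith
          have h2C : Ψ (q.1.1.2, q.1.2) - Ψ (q.1.1.1, q.2) ≤ 2*C := by
            have ha1 := abs_le.mp (hbd (q.1.1.2, q.1.2))
            have ha2 := abs_le.mp (hbd (q.1.1.1, q.2))
            linarith [ha1.2, ha2.1]
          calc Ψ (q.1.1.2, q.1.2) - Ψ (q.1.1.1, q.2) ≤ 2*C := h2C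
            _ ≤ M := le_max_right _ _
            _ = M * 1 := (mul_one M).symm
            _ ≤ M * (min dx 1 + min dy 1) := by nlinarith
      · -- dx big
        have hsum : (1:ℝ) ≤ min dx 1 + min dy 1 := by
          rw [min_eq_right hx1.le]
          have : 0 ≤ min dy 1 := le_min hdy0 zero_le_one
          linarith
        have h2C : Ψ (q.1.1.2, q.1.2) - Ψ (q.1.1.1, q.2) ≤ 2*C := by
          have ha1 := abs_le.mp (hbd (q.1.1.2, q.1.2))
          have ha2 := abs_le.mp (hbd (q.1.1.1, q.2))
          linarith [ha1.2, ha2.1]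
        calc Ψ (q.1.1.2, q.1.2) - Ψ (q.1.1.1, q.2) ≤ 2*C := h2C
          _ ≤ M := le_max_right _ _
          _ = M * 1 := (mul_one M).symm
          _ ≤ M * (min dx 1 + min dy 1) := by nlinarith
    -- integrability
    have hcθ : Continuous (fun q : ((X × X) × Y) × Y => Ψ (q.1.1.2, q.1.2)) := by
      exact hΨc.comp ((continuous_snd.comp (continuous_fst.comp continuous_fst)).prodMk
        (continuous_snd.comp continuous_fst))
    have hcθ' : Continuous (fun q : ((X × X) × Y) × Y => Ψ (q.1.1.1, q.2)) := by
      exact hΨc.comp ((continuous_fst.comp (continuous_fst.comp continuous_fst)).prodMk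
        continuous_snd)
    have hi1 : Integrable (fun q : ((X × X) × Y) × Y => Ψ (q.1.1.2, q.1.2)) θ₂ :=
      integrable_of_bound θ₂ _ hcθ.aestronglyMeasurable C (fun x => hbd _)
    have hi2 : Integrable (fun q : ((X × X) × Y) × Y => Ψ (q.1.1.1, q.2)) θ₂ :=
      integrable_of_bound θ₂ _ hcθ'.aestronglyMeasurable C (fun x => hbd _)
    have hcm1 : Continuous (fun q : ((X × X) × Y) × Y => min (dist q.1.1.1 q.1.1.2) 1) := by
      exact hcont_min.comp (continuous_fst.comp continuous_fst)
    have hcm2 : Continuous (fun q : ((X × X) × Y) × Y => min (dist q.1.2 q.2) 1) := by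
      exact hcont_minY.comp ((continuous_snd.comp continuous_fst).prodMk continuous_snd)
    have hi3 : Integrable (fun q : ((X × X) × Y) × Y => min (dist q.1.1.1 q.1.1.2) 1) θ₂ :=
      integrable_of_bound θ₂ _ hcm1.aestronglyMeasurable 1 (fun x => by
        rw [abs_of_nonneg (le_min dist_nonneg zero_le_one)]; exact min_le_right _ _)
    have hi4 : Integrable (fun q : ((X × X) × Y) × Y => min (dist q.1.2 q.2) 1) θ₂ :=
      integrable_of_bound θ₂ _ hcm2.aestronglyMeasurable 1 (fun x => by
        rw [abs_of_nonneg (le_min dist_nonneg zero_le_one)]; exact min_le_right _ _)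
    -- main chain
    have hmain : ∫ q, Ψ (q.1.1.2, q.1.2) ∂θ₂ - ∫ q, Ψ (q.1.1.1, q.2) ∂θ₂
        ≤ M * (∫ q, min (dist q.1.1.1 q.1.1.2) 1 ∂θ₂ + ∫ q, min (dist q.1.2 q.2) 1 ∂θ₂) := by
      rw [← integral_sub hi1 hi2, ← integral_add hi3 hi4, ← MeasureTheory.integral_const_mul]
      exact integral_mono (hi1.sub hi2) (((hi3.add hi4)).const_mul M) hpt
    have hreal1 : ∫ p, min (dist p.1 p.2) 1 ∂γ = (∫⁻ p, min (edist p.1 p.2) 1 ∂γ).toReal :=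
      real_min_int γ
    have hreal2 : ∫ p, min (dist p.1 p.2) 1 ∂δ = (∫⁻ p, min (edist p.1 p.2) 1 ∂δ).toReal :=
      real_min_int δ
    rw [hint1, hint2]
    have := hmain
    rw [← hint3, ← hint4, hreal1, hreal2] at this
    linarith

end Aux

/-- Upper hemicontinuity of the argmax correspondence: limits of optimal plans along
weakly convergent marginals are optimal plans for the limit marginals. -/
theorem argmax_upperHemicontinuous
    [MetricSpace X] [CompleteSpace X] [SecondCountableTopology X]
    [MeasurableSpace X] [BorelSpace X]
    [MetricSpace Y] [CompleteSpace Y] [SecondCountableTopology Y]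
    [MeasurableSpace Y] [BorelSpace Y]
    (Φ : X × Y → ℝ) (hΦc : Continuous Φ) (hΦb : ∃ C, ∀ p, |Φ p| ≤ C)
    (μs : ℕ → ProbabilityMeasure X) (μ : ProbabilityMeasure X)
    (νs : ℕ → ProbabilityMeasure Y) (ν : ProbabilityMeasure Y)
    (hμ : Tendsto μs atTop (nhds μ)) (hν : Tendsto νs atTop (nhds ν))
    (πs : ℕ → ProbabilityMeasure (X × Y)) (π : ProbabilityMeasure (X × Y))
    (hπs : ∀ n, πs n ∈ couplings (μs n) (νs n))
    (hopt : ∀ n, (∫ q, Φ q ∂(πs n).toMeasure) =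
      sSup {r : ℝ | ∃ π' ∈ couplings (μs n) (νs n), r = ∫ q, Φ q ∂π'.toMeasure})
    (hπ : Tendsto πs atTop (nhds π)) :
    π ∈ couplings μ ν ∧
      (∫ q, Φ q ∂π.toMeasure) =
        sSup {r : ℝ | ∃ π' ∈ couplings μ ν, r = ∫ q, Φ q ∂π'.toMeasure} := by
  obtain ⟨C, hC⟩ := hΦb
  haveI hne : Nonempty (X × Y) := by
    rcases isEmpty_or_nonempty (X × Y) with h | h
    · exfalso
      have h1 : π.toMeasure univ = 1 := measure_univ
      rw [Set.univ_eq_empty_iff.mpr h, measure_empty] at h1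
      exact zero_ne_one h1
    · exact h
  have hC0 : 0 ≤ C := le_trans (abs_nonneg _) (hC (Classical.arbitrary _))
  -- part 1 : π is a coupling
  have hcoup : π ∈ couplings μ ν := by
    constructor
    · have h1 := ProbabilityMeasure.tendsto_map_of_tendsto_of_continuous πs π hπ continuous_fst
      have h2 : ∀ n, (πs n).map continuous_fst.measurable.aemeasurable = μs n := by
        intro n
        apply ProbabilityMeasure.toMeasure_injective
        rw [ProbabilityMeasure.toMeasure_map]
        exact (hπs n).1
      rw [tendsto_congr h2] at h1
      have h3 : π.map continuous_fst.measurable.aemeasurable = μ := tendsto_nhds_unique h1 hμ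
      rw [← h3, ProbabilityMeasure.toMeasure_map]
    · have h1 := ProbabilityMeasure.tendsto_map_of_tendsto_of_continuous πs π hπ continuous_snd
      have h2 : ∀ n, (πs n).map continuous_snd.measurable.aemeasurable = νs n := by
        intro n
        apply ProbabilityMeasure.toMeasure_injective
        rw [ProbabilityMeasure.toMeasure_map]
        exact (hπs n).2
      rw [tendsto_congr h2] at h1
      have h3 : π.map continuous_snd.measurable.aemeasurable = ν := tendsto_nhds_unique h1 hν
      rw [← h3, ProbabilityMeasure.toMeasure_map]
  -- part 2 : convergence of the integrals
  set Φb : BoundedContinuousFunction (X × Y) ℝ :=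
    BoundedContinuousFunction.ofNormedAddCommGroup Φ hΦc C
      (fun x => by rw [Real.norm_eq_abs]; exact hC x) with hΦbdef
  have hΦbcoe : ∀ p, Φb p = Φ p := fun p => rfl
  have hlim : Tendsto (fun n => ∫ q, Φ q ∂(πs n).toMeasure) atTop
      (𝓝 (∫ q, Φ q ∂π.toMeasure)) := by
    have := ProbabilityMeasure.tendsto_iff_forall_integral_tendsto.mp hπ Φb
    exact this
  -- a generic integral bound
  have hintC : ∀ (ρ : Measure (X × Y)), IsProbabilityMeasure ρ → ∫ q, Φ q ∂ρ ≤ C := by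
    intro ρ hρ
    calc ∫ q, Φ q ∂ρ ≤ ∫ _, C ∂ρ := by
          refine integral_mono ?_ (integrable_const C) (fun q => (abs_le.mp (hC q)).2)
          exact integrable_of_bound ρ _ hΦc.aestronglyMeasurable C hC
      _ = C := by simp
  -- part 3 : the key inequality
  have key : ∀ π' : ProbabilityMeasure (X × Y), π' ∈ couplings μ ν →
      ∫ q, Φ q ∂π'.toMeasure ≤ ∫ q, Φ q ∂π.toMeasure := by
    intro π' hπ'
    obtain ⟨F, hFlip, hFbd, hFle, hFtend⟩ := exists_lipschitz_approx Φ hΦc hC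
    have hdct : Tendsto (fun k => ∫ q, F k q ∂π'.toMeasure) atTop
        (𝓝 (∫ q, Φ q ∂π'.toMeasure)) := by
      refine tendsto_integral_of_dominated_convergence (fun _ => C)
        (fun k => ((hFlip k).continuous).aestronglyMeasurable)
        (integrable_const C)
        (fun k => Eventually.of_forall fun q => by rw [Real.norm_eq_abs]; exact hFbd k q)
        (Eventually.of_forall fun q => hFtend q)
    refine le_of_tendsto hdct (Eventually.of_forall fun k => ?_)
    -- fixed k
    set M : ℝ := max (k : ℝ) (2*C) with hM
    have hM0 : 0 ≤ M := le_trans (Nat.cast_nonneg k) (le_max_left _ _)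
    refine le_of_forall_pos_le_add fun ε' hε' => ?_
    set ε : ℝ := ε' / (2*M+1) with hεdef
    have hε : 0 < ε := by positivity
    have hcoupX := exists_coupling_close_s14 hμ hε
    have hcoupY := exists_coupling_close_s14 hν hε
    have hev : ∀ᶠ n in atTop,
        ∫ q, F k q ∂π'.toMeasure ≤ (∫ q, Φ q ∂(πs n).toMeasure) + 2*M*ε := by
      filter_upwards [hcoupX, hcoupY] with n hX hY
      obtain ⟨γ, hγprob, hγfst, hγsnd, hγint⟩ := hX
      obtain ⟨δ₀, hδ₀prob, hδ₀fst, hδ₀snd, hδ₀int⟩ := hY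
      haveI := hγprob
      haveI := hδ₀prob
      set δ : Measure (Y × Y) := δ₀.map Prod.swap with hδdef
      haveI : IsProbabilityMeasure δ := Measure.isProbabilityMeasure_map
        measurable_swap.aemeasurable
      have hδfst : δ.map Prod.fst = ν.toMeasure := by
        rw [hδdef, Measure.map_map measurable_fst measurable_swap]
        have : (Prod.fst ∘ Prod.swap : Y × Y → Y) = Prod.snd := rfl
        rw [this, hδ₀snd]
      have hδsnd : δ.map Prod.snd = (νs n).toMeasure := by
        rw [hδdef, Measure.map_map measurable_snd measurable_swap]
        have : (Prod.snd ∘ Prod.swap : Y × Y → Y) = Prod.fst := rfl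
        rw [this, hδ₀fst]
      have hδint : ∫⁻ p, min (edist p.1 p.2) 1 ∂δ ≤ ENNReal.ofReal ε := by
        rw [hδdef, lintegral_map ((continuous_edist.min continuous_const).measurable)
          measurable_swap]
        calc ∫⁻ p : Y × Y, min (edist (Prod.swap p).1 (Prod.swap p).2) 1 ∂δ₀
            = ∫⁻ p : Y × Y, min (edist p.1 p.2) 1 ∂δ₀ := by
              refine lintegral_congr fun p => ?_
              rw [Prod.fst_swap, Prod.snd_swap, edist_comm]
          _ ≤ ENNReal.ofReal ε := hδ₀int
      -- glue
      have hγ2 : γ.map Prod.snd = π'.toMeasure.map Prod.fst := by rw [hγsnd, hπ'.1]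
      have hδ1 : δ.map Prod.fst = π'.toMeasure.map Prod.snd := by rw [hδfst, hπ'.2]
      obtain ⟨π'', hπ''prob, hπ''fst, hπ''snd, hπ''est⟩ :=
        glue_estimate π'.toMeasure γ δ hγ2 hδ1
      haveI := hπ''prob
      have hπ''coup : (⟨π'', hπ''prob⟩ : ProbabilityMeasure (X × Y)) ∈
          couplings (μs n) (νs n) := by
        constructor
        · show π''.map Prod.fst = (μs n).toMeasure
          rw [hπ''fst, hγfst]
        · show π''.map Prod.snd = (νs n).toMeasure
          rw [hπ''snd, hδsnd]
      -- Lipschitz data for F k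
      have hFLip' : ∀ a b, |F k a - F k b| ≤ (k : ℝ) * dist a b := by
        intro a b
        have := (hFlip k).dist_le_mul a b
        rw [Real.dist_eq] at this
        calc |F k a - F k b| ≤ ((k : ℝ≥0) : ℝ) * dist a b := this
          _ = (k : ℝ) * dist a b := by norm_cast
      have hest := hπ''est (F k) (k : ℝ) C (Nat.cast_nonneg k) hC0 hFLip' (hFbd k)
      -- bound the error terms
      have herr1 : (∫⁻ p, min (edist p.1 p.2) 1 ∂γ).toReal ≤ ε := by
        calc (∫⁻ p, min (edist p.1 p.2) 1 ∂γ).toReal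
            ≤ (ENNReal.ofReal ε).toReal := ENNReal.toReal_mono ENNReal.ofReal_ne_top hγint
          _ = ε := ENNReal.toReal_ofReal hε.le
      have herr2 : (∫⁻ p, min (edist p.1 p.2) 1 ∂δ).toReal ≤ ε := by
        calc (∫⁻ p, min (edist p.1 p.2) 1 ∂δ).toReal
            ≤ (ENNReal.ofReal ε).toReal := ENNReal.toReal_mono ENNReal.ofReal_ne_top hδint
          _ = ε := ENNReal.toReal_ofReal hε.le
      -- F k ≤ Φ on π''
      have hFΦ : ∫ q, F k q ∂π'' ≤ ∫ q, Φ q ∂π'' := by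
        refine integral_mono ?_ ?_ (fun q => hFle k q)
        · exact integrable_of_bound π'' _ ((hFlip k).continuous).aestronglyMeasurable C (hFbd k)
        · exact integrable_of_bound π'' _ hΦc.aestronglyMeasurable C hC
      -- π'' is dominated by the optimum
      have hΦπ'' : ∫ q, Φ q ∂π'' ≤ ∫ q, Φ q ∂(πs n).toMeasure := by
        rw [hopt n]
        have hbdd : BddAbove {r : ℝ | ∃ π₀ ∈ couplings (μs n) (νs n),
            r = ∫ q, Φ q ∂π₀.toMeasure} := by
          refine ⟨C, ?_⟩
          rintro r ⟨π₀, _, rfl⟩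
          exact hintC π₀.toMeasure π₀.prop
        refine le_csSup hbdd ?_
        exact ⟨⟨π'', hπ''prob⟩, hπ''coup, rfl⟩
      -- combine
      have hstep : ∫ q, F k q ∂π'.toMeasure ≤ (∫ q, F k q ∂π'') + M * (ε + ε) := by
        refine hest.trans ?_
        have : max ((k : ℝ)) (2*C) = M := rfl
        rw [this]
        refine add_le_add_right ?_ _
        refine mul_le_mul_of_nonneg_left (add_le_add herr1 herr2) hM0
      calc ∫ q, F k q ∂π'.toMeasure ≤ (∫ q, F k q ∂π'') + M * (ε + ε) := hstep
        _ ≤ (∫ q, Φ q ∂π'') + M * (ε + ε) := by linarith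
        _ ≤ (∫ q, Φ q ∂(πs n).toMeasure) + 2*M*ε := by linarith
    have hfinal := ge_of_tendsto (hlim.add_const (2*M*ε)) hev
    have h2Mε : 2*M*ε ≤ ε' := by
      have h1 : (0:ℝ) < 2*M+1 := by linarith
      rw [hεdef, ← mul_div_assoc, div_le_iff₀ h1]
      nlinarith [hε'.le, hM0]
    linarith
  -- part 4 : conclusion
  refine ⟨hcoup, ?_⟩
  have hmem : (∫ q, Φ q ∂π.toMeasure) ∈
      {r : ℝ | ∃ π' ∈ couplings μ ν, r = ∫ q, Φ q ∂π'.toMeasure} := ⟨π, hcoup, rfl⟩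
  refine le_antisymm ?_ ?_
  · refine le_csSup ⟨∫ q, Φ q ∂π.toMeasure, ?_⟩ hmem
    rintro r ⟨π', hπ', rfl⟩
    exact key π' hπ'
  · refine csSup_le ⟨_, hmem⟩ ?_
    rintro r ⟨π', hπ', rfl⟩
    exact key π' hπ'
end
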